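/- arXiv:2103.10340 — 5 statements merged into one kernel-verified Lean document; each statement's English description precedes it below -/
import Mathlib

section
/- For every infinite cardinal λ and all r, k ∈ ω, every hypergraph 𝓔 ⊆ [λ]^ω (i.e., every edge is a countably infinite subset of λ) possessing property C(r,k) has a minimal vertex cover. -/
open Cardinal Set

universe u

/-- `𝓔` possesses property C(k,ρ): every `k`-element subfamily of `𝓔` has
intersection of cardinality `< ρ`. -/
def HasPropC {α : Type u} (𝓔 : Set (Set α)) (k : ℕ) (ρ : Cardinal.{u}) : Prop :=
  ∀ 𝓔' : Finset (Set α), ↑𝓔' ⊆ 𝓔 → 𝓔'.card = k →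
    #(⋂₀ (𝓔' : Set (Set α)) : Set α) < ρ

/-- `Y` is a vertex cover of the hypergraph `𝓔`. -/
def IsVC {α : Type u} (𝓔 : Set (Set α)) (Y : Set α) : Prop :=
  Y ⊆ ⋃₀ 𝓔 ∧ ∀ E ∈ 𝓔, (Y ∩ E).Nonempty

/-- `Y` is a minimal vertex cover of `𝓔`: a vertex cover no proper subset of
which is a vertex cover. -/
def IsMinVC {α : Type u} (𝓔 : Set (Set α)) (Y : Set α) : Prop :=
  IsVC 𝓔 Y ∧ ∀ Z, Z ⊂ Y → ¬ IsVC 𝓔 Z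

/-- `𝓔` has a minimal vertex cover. -/
def HasMinVC {α : Type u} (𝓔 : Set (Set α)) : Prop := ∃ Y, IsMinVC 𝓔 Y

/-- `𝓔` has a maximizing well-ordering: a well-ordering of `⋃₀ 𝓔` in which
every edge has a maximal element. -/
def HasMaxWO {α : Type u} (𝓔 : Set (Set α)) : Prop :=
  ∃ r : (⋃₀ 𝓔 : Set α) → (⋃₀ 𝓔 : Set α) → Prop, IsWellOrder _ r ∧
    ∀ E ∈ 𝓔, ∃ m : (⋃₀ 𝓔 : Set α), (m : α) ∈ E ∧
      ∀ x : (⋃₀ 𝓔 : Set α), (x : α) ∈ E → ¬ r m x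

/-- `𝓑` is a shrink of `𝓐` (`𝓑 ≪ 𝓐`). -/
def IsShrink {α : Type u} (𝓑 𝓐 : Set (Set α)) : Prop :=
  ∀ B ∈ 𝓑, ∃ A ∈ 𝓐, B ⊆ A ∧ #(A \ B : Set α) < #A

/-- `G` (restricted to the ordinals below `cf(|⋃₀ 𝓐|)`) is a good cut of `𝓐`:
an increasing continuous sequence of subsets of `⋃₀ 𝓐` of cardinality `< |⋃₀ 𝓐|`,
starting at `∅`, with union `⋃₀ 𝓐`, such that every `A ∈ 𝓐` is contained in some
`G (β+1)` with `|G β ∩ A| < |A|`. -/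
def IsGoodCut {α : Type u} (𝓐 : Set (Set α)) (G : Ordinal.{u} → Set α) : Prop :=
  (∀ β γ : Ordinal.{u}, β ≤ γ → γ < (#(⋃₀ 𝓐 : Set α)).ord.cof.ord → G β ⊆ G γ) ∧
  G 0 = ∅ ∧
  (∀ β < (#(⋃₀ 𝓐 : Set α)).ord.cof.ord, Order.IsSuccLimit β → G β = ⋃ γ ∈ Set.Iio β, G γ) ∧
  (∀ β < (#(⋃₀ 𝓐 : Set α)).ord.cof.ord,
    #(G β) < #(⋃₀ 𝓐 : Set α) ∧ G β ⊆ ⋃₀ 𝓐) ∧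
  (⋃ β ∈ Set.Iio (#(⋃₀ 𝓐 : Set α)).ord.cof.ord, G β) = ⋃₀ 𝓐 ∧
  (∀ A ∈ 𝓐, ∃ β < (#(⋃₀ 𝓐 : Set α)).ord.cof.ord,
    A ⊆ G (β + 1) ∧ #(G β ∩ A : Set α) < #A)


variable {α : Type u}

/-- An injective (on the vertex set) ordinal rank for which every edge has a
maximal element. -/
def MaxRank (𝓔 : Set (Set α)) : Prop :=
  ∃ ρ : α → Ordinal.{u}, InjOn ρ (⋃₀ 𝓔) ∧ ∀ E ∈ 𝓔, ∃ m ∈ E, ∀ x ∈ E, ρ x ≤ ρ m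

theorem MaxRank.hasMinVC {𝓔 : Set (Set α)} (h : MaxRank 𝓔) : HasMinVC 𝓔 := by
  obtain ⟨ρ, hinj, hmax⟩ := h
  have wf : WellFounded (fun a b : α => ρ a < ρ b) := InvImage.wf ρ Ordinal.lt_wf
  set P : α → Prop := wf.fix
    (fun v ih => ∃ E, E ∈ 𝓔 ∧ v ∈ E ∧ (∀ x ∈ E, ρ x ≤ ρ v) ∧
      ∀ w, ∀ hw : ρ w < ρ v, w ∈ E → ¬ ih w hw) with hPdef
  have hP : ∀ v, P v ↔ (∃ E, E ∈ 𝓔 ∧ v ∈ E ∧ (∀ x ∈ E, ρ x ≤ ρ v) ∧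
      ∀ w, ρ w < ρ v → w ∈ E → ¬ P w) := by
    intro v
    rw [hPdef]
    rw [WellFounded.fix_eq]
  refine ⟨{v | v ∈ ⋃₀ 𝓔 ∧ P v}, ⟨fun v hv => hv.1, ?_⟩, ?_⟩
  · -- cover
    intro E hE
    by_contra hne
    rw [Set.not_nonempty_iff_eq_empty] at hne
    obtain ⟨m, hmE, hm⟩ := hmax E hE
    have hPm : P m := by
      rw [hP]
      refine ⟨E, hE, hmE, hm, fun w hw hwE hPw => ?_⟩
      have : w ∈ ({v | v ∈ ⋃₀ 𝓔 ∧ P v} ∩ E : Set α) := ⟨⟨⟨E, hE, hwE⟩, hPw⟩, hwE⟩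
      rw [hne] at this
      exact this
    have : m ∈ ({v | v ∈ ⋃₀ 𝓔 ∧ P v} ∩ E : Set α) := ⟨⟨⟨E, hE, hmE⟩, hPm⟩, hmE⟩
    rw [hne] at this
    exact this
  · -- minimality
    intro Z hZ hVC
    obtain ⟨y, hyY, hyZ⟩ := Set.exists_of_ssubset hZ
    obtain ⟨E, hE, hyE, hymax, hybelow⟩ := (hP y).mp hyY.2
    obtain ⟨w, hwZ, hwE⟩ := hVC.2 E hE
    have hwY := hZ.1 hwZ
    have hle : ρ w ≤ ρ y := hymax w hwE
    rcases lt_or_eq_of_le hle with hlt | heq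
    · exact hybelow w hlt hwE hwY.2
    · have : w = y := hinj hwY.1 hyY.1 heq
      exact hyZ (this ▸ hwZ)

theorem rank_combine (S : Set α) (st rk : α → Ordinal.{u}) :
    ∃ ρ : α → Ordinal.{u},
      (∀ x ∈ S, ∀ y ∈ S, st x < st y → ρ x < ρ y) ∧
      (∀ x ∈ S, ∀ y ∈ S, st x = st y → rk x ≤ rk y → ρ x ≤ ρ y) ∧
      (∀ x ∈ S, ∀ y ∈ S, ρ x = ρ y → st x = st y ∧ rk x = rk y) := by
  classical
  set Ω : Ordinal.{u} := (⨆ x : ↥S, rk ↑x) + 1 with hΩdef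
  have hrk : ∀ v ∈ S, rk v < Ω := by
    intro v hv
    have : rk v ≤ ⨆ x : ↥S, rk ↑x := le_ciSup Ordinal.bddAbove_of_small (⟨v, hv⟩ : ↥S)
    exact lt_of_le_of_lt this (lt_add_one _)
  have key : ∀ x ∈ S, ∀ y ∈ S, st x < st y → Ω * st x + rk x < Ω * st y + rk y := by
    intro x hx y hy hlt
    calc Ω * st x + rk x < Ω * st x + Ω := add_lt_add_right (hrk x hx) _
    _ = Ω * Order.succ (st x) := (Ordinal.mul_succ _ _).symm
    _ ≤ Ω * st y := mul_le_mul_right (Order.succ_le_of_lt hlt) _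
    _ ≤ Ω * st y + rk y := le_self_add
  refine ⟨fun v => Ω * st v + rk v, key, ?_, ?_⟩
  · intro x hx y hy heq hle
    show Ω * st x + rk x ≤ Ω * st y + rk y
    rw [heq]
    exact add_le_add_right hle _
  · intro x hx y hy heq
    have heq' : Ω * st x + rk x = Ω * st y + rk y := heq
    have hst : st x = st y := by
      by_contra hne
      rcases lt_or_gt_of_ne hne with h | h
      · exact absurd heq' (ne_of_lt (key x hx y hy h))
      · exact absurd heq'.symm (ne_of_lt (key y hy x hx h))
    refine ⟨hst, ?_⟩
    rw [hst] at heq'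
    exact (add_right_inj _).mp heq'

theorem maxRank_empty : MaxRank (∅ : Set (Set α)) :=
  ⟨fun _ => 0, by simp, by simp⟩

theorem countable_maxRank (r : ℕ) : ∀ 𝓔 : Set (Set α), 𝓔.Countable →
    (∀ E ∈ 𝓔, E.Infinite) →
    (∀ s : Finset (Set α), ↑s ⊆ 𝓔 → s.card = r → (⋂₀ (↑s : Set (Set α))).Finite) →
    MaxRank 𝓔 := by
  classical
  induction r with
  | zero =>
    intro 𝓔 hcnt hinf hFin
    have huniv : (Set.univ : Set α).Finite := by
      have := hFin ∅ (by simp) (by simp)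
      simpa using this
    have h𝓔 : 𝓔 = ∅ := by
      rw [Set.eq_empty_iff_forall_notMem]
      intro E hE
      exact hinf E hE (huniv.subset (subset_univ E))
    rw [h𝓔]; exact maxRank_empty
  | succ r IH =>
    intro 𝓔 hcnt hinf hFin
    by_cases h𝓔 : 𝓔 = ∅
    · rw [h𝓔]; exact maxRank_empty
    rcases Nat.eq_zero_or_pos r with rfl | hr
    · -- r + 1 = 1 : every edge is finite, contradiction with nonemptiness
      exfalso
      obtain ⟨E, hE⟩ := Set.nonempty_iff_ne_empty.mpr h𝓔
      have := hFin {E} (by simpa using hE) (by simp)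
      simp only [Finset.coe_singleton, sInter_singleton] at this
      exact hinf E hE this
    -- main construction
    obtain ⟨e, he⟩ := hcnt.exists_eq_range (Set.nonempty_iff_ne_empty.mpr h𝓔)
    have heall : ∀ n, e n ∈ 𝓔 := fun n => he ▸ Set.mem_range_self n
    obtain ⟨E₀, hE₀⟩ := Set.nonempty_iff_ne_empty.mpr h𝓔
    have hα : Nonempty α := by
      obtain ⟨v, hv⟩ := (hinf E₀ hE₀).nonempty
      exact ⟨v⟩
    -- blocks
    set B : ℕ → Set α := fun n => e n \ ⋃ (m : ℕ) (_ : m < n), e m with hBdef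
    have hBsub : ∀ n, B n ⊆ e n := fun n x hx => hx.1
    have hBnot : ∀ n m, m < n → ∀ x ∈ B n, x ∉ e m := by
      intro n m hmn x hx hxm
      exact hx.2 (Set.mem_iUnion.mpr ⟨m, Set.mem_iUnion.mpr ⟨hmn, hxm⟩⟩)
    set stv : α → ℕ := fun v => sInf {n | v ∈ e n} with hstvdef
    have hstv_mem : ∀ v ∈ ⋃₀ 𝓔, v ∈ B (stv v) := by
      intro v hv
      obtain ⟨E, hE, hvE⟩ := hv
      rw [he] at hE
      obtain ⟨n, rfl⟩ := hE
      have hne : {n | v ∈ e n}.Nonempty := ⟨n, hvE⟩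
      refine ⟨Nat.sInf_mem hne, ?_⟩
      intro hmem
      obtain ⟨m, hm⟩ := Set.mem_iUnion.mp hmem
      obtain ⟨hmlt, hvm⟩ := Set.mem_iUnion.mp hm
      exact Nat.notMem_of_lt_sInf hmlt hvm
    have hstv_eq : ∀ v n, v ∈ B n → stv v = n := by
      intro v n hv
      have hle : stv v ≤ n := Nat.sInf_le hv.1
      rcases lt_or_eq_of_le hle with hlt | h
      · exact absurd (Nat.sInf_mem (⟨n, hv.1⟩ : {n | v ∈ e n}.Nonempty))
          (hBnot n (stv v) hlt v hv)
      · exact h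
    -- the chosen top point of each block
    set p : ℕ → α := fun n => if h : (B n).Nonempty then h.some else Classical.choice hα
      with hpdef
    have hp_mem : ∀ n, (B n).Nonempty → p n ∈ B n := by
      intro n hn
      simp only [hpdef, dif_pos hn]
      exact hn.some_mem
    -- block trace families
    set 𝓖 : ℕ → Set (Set α) := fun n =>
      {t | ∃ E ∈ 𝓔, E ≠ e n ∧ (E ∩ B n).Infinite ∧ t = (E ∩ B n) \ {p n}} with h𝓖def
    have h𝓖 : ∀ n, MaxRank (𝓖 n) := by
      intro n
      refine IH (𝓖 n) ?_ ?_ ?_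
      · -- countable
        have : 𝓖 n ⊆ (fun E => (E ∩ B n) \ {p n}) '' 𝓔 := by
          rintro t ⟨E, hE, -, -, rfl⟩
          exact ⟨E, hE, rfl⟩
        exact (hcnt.image _).mono this
      · rintro t ⟨E, hE, -, hinf', rfl⟩
        exact hinf'.diff (Set.finite_singleton _)
      · -- property Fin r
        intro s hs hcard
        set w : Set α → Set α := fun t =>
          if h : ∃ E ∈ 𝓔, E ≠ e n ∧ (E ∩ B n).Infinite ∧ t = (E ∩ B n) \ {p n}
          then h.choose else ∅ with hwdef
        have hw : ∀ t ∈ 𝓖 n, w t ∈ 𝓔 ∧ w t ≠ e n ∧ t = (w t ∩ B n) \ {p n} := by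
          intro t ht
          have ht' : ∃ E ∈ 𝓔, E ≠ e n ∧ (E ∩ B n).Infinite ∧ t = (E ∩ B n) \ {p n} := ht
          simp only [hwdef, dif_pos ht']
          obtain ⟨h1, h2, h3, h4⟩ := ht'.choose_spec
          exact ⟨h1, h2, h4⟩
        have hwinj : Set.InjOn w ↑s := by
          intro t1 ht1 t2 ht2 heq
          rw [(hw t1 (hs ht1)).2.2, (hw t2 (hs ht2)).2.2, heq]
        set s' : Finset (Set α) := insert (e n) (s.image w) with hs'def
        have hs'sub : ↑s' ⊆ 𝓔 := by
          intro A hA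
          rw [hs'def] at hA
          simp only [Finset.coe_insert, Set.mem_insert_iff, Finset.coe_image,
            Set.mem_image] at hA
          rcases hA with rfl | ⟨t, ht, rfl⟩
          · exact heall n
          · exact (hw t (hs ht)).1
        have hs'card : s'.card = r + 1 := by
          rw [hs'def, Finset.card_insert_of_notMem, Finset.card_image_of_injOn hwinj,
            hcard]
          intro hmem
          obtain ⟨t, ht, hwt⟩ := Finset.mem_image.mp hmem
          exact (hw t (hs ht)).2.1 hwt
        have hfin' := hFin s' hs'sub hs'card
        refine hfin'.subset ?_
        intro x hx
        have hsne : s.Nonempty := Finset.card_pos.mp (hcard ▸ hr)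
        obtain ⟨t₀, ht₀⟩ := hsne
        intro A hA
        rw [hs'def] at hA
        simp only [Finset.coe_insert, Set.mem_insert_iff, Finset.coe_image,
          Set.mem_image] at hA
        rcases hA with rfl | ⟨t, ht, rfl⟩
        · have hxt := hx t₀ ht₀
          rw [(hw t₀ (hs ht₀)).2.2] at hxt
          exact hBsub n hxt.1.2
        · have hxt := hx t ht
          rw [(hw t (hs ht)).2.2] at hxt
          exact hxt.1.1
    choose θ hθinj hθmax using h𝓖
    -- block-internal ranks
    set ι : α → Ordinal.{u} := fun v => Ordinal.typein WellOrderingRel v with hιdef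
    have hιinj : Function.Injective ι := Ordinal.typein_injective WellOrderingRel
    set Θ : Ordinal.{u} := (⨆ x : α, ι x) + 1 with hΘdef
    have hιΘ : ∀ v, ι v < Θ := by
      intro v
      exact lt_of_le_of_lt (le_ciSup Ordinal.bddAbove_of_small v) (lt_add_one _)
    set Λ : ℕ → Ordinal.{u} := fun n => (⨆ x : ↥(⋃₀ 𝓖 n), θ n ↑x) + 1 with hΛdef
    have hθΛ : ∀ n, ∀ v ∈ ⋃₀ 𝓖 n, θ n v < Λ n := by
      intro n v hv
      exact lt_of_le_of_lt (le_ciSup Ordinal.bddAbove_of_small (⟨v, hv⟩ : ↥(⋃₀ 𝓖 n)))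
        (lt_add_one _)
    set rk : α → Ordinal.{u} := fun v =>
      if v = p (stv v) then Λ (stv v) + Θ
      else if v ∈ ⋃₀ 𝓖 (stv v) then θ (stv v) v
      else Λ (stv v) + ι v with hrkdef
    -- bound : all elements of a block have rank at most that of p
    have hrk_le : ∀ n, ∀ x ∈ B n, rk x ≤ Λ n + Θ := by
      intro n x hx
      have hst : stv x = n := hstv_eq x n hx
      rw [hrkdef]
      simp only [hst]
      split_ifs with h1 h2
      · exact le_rfl
      · exact le_trans (hθΛ n x h2).le (le_self_add)
      · exact add_le_add_right (hιΘ x).le _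
    -- injectivity inside a block
    have hrk_inj : ∀ n, ∀ x ∈ B n, ∀ y ∈ B n, rk x = rk y → x = y := by
      intro n x hx y hy heq
      have hstx : stv x = n := hstv_eq x n hx
      have hsty : stv y = n := hstv_eq y n hy
      rw [hrkdef] at heq
      simp only [hstx, hsty] at heq
      by_cases h1 : x = p n <;> by_cases h2 : y = p n
      · rw [h1, h2]
      · rw [if_pos h1, if_neg h2] at heq
        split_ifs at heq with h3
        · exact absurd heq.symm (ne_of_lt (lt_of_lt_of_le (hθΛ n y h3)
            (le_self_add)))
        · have := (add_right_inj (Λ n)).mp heq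
          exact absurd this.symm (ne_of_lt (hιΘ y))
      · rw [if_neg h1, if_pos h2] at heq
        split_ifs at heq with h3
        · exact absurd heq (ne_of_lt (lt_of_lt_of_le (hθΛ n x h3)
            (le_self_add)))
        · have := (add_right_inj (Λ n)).mp heq
          exact absurd this (ne_of_lt (hιΘ x))
      · rw [if_neg h1, if_neg h2] at heq
        split_ifs at heq with h3 h4 h4
        · exact hθinj n h3 h4 heq
        · exact absurd heq (ne_of_lt (lt_of_lt_of_le (hθΛ n x h3)
            (le_self_add)))
        · exact absurd heq.symm (ne_of_lt (lt_of_lt_of_le (hθΛ n y h4)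
            (le_self_add)))
        · have := (add_right_inj (Λ n)).mp heq
          exact hιinj this
    -- combine
    obtain ⟨ρ, hρlt, hρle, hρinj⟩ :=
      rank_combine (⋃₀ 𝓔) (fun v => (stv v : Ordinal.{u})) rk
    refine ⟨ρ, ?_, ?_⟩
    · -- injectivity
      intro x hx y hy heq
      obtain ⟨h1, h2⟩ := hρinj x hx y hy heq
      have hst : stv x = stv y := by exact_mod_cast h1
      exact hrk_inj (stv y) x (hst ▸ hstv_mem x hx) y (hstv_mem y hy) h2
    · -- every edge has a maximum
      intro E hE
      have hEinf := hinf E hE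
      have hEsub : E ⊆ ⋃₀ 𝓔 := fun x hx => ⟨E, hE, hx⟩
      obtain ⟨N, hN⟩ : ∃ n, e n = E := by rw [he] at hE; exact hE
      have hlast : ∀ m, N < m → E ∩ B m = ∅ := by
        intro m hm
        rw [Set.eq_empty_iff_forall_notMem]
        rintro x ⟨hxE, hxB⟩
        exact hBnot m N hm x hxB (hN ▸ hxE)
      have hSE : ∀ v ∈ E, stv v ≤ N := by
        intro v hv
        by_contra hgt
        push_neg at hgt
        have : v ∈ E ∩ B (stv v) := ⟨hv, hstv_mem v (hEsub hv)⟩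
        rw [hlast (stv v) hgt] at this
        exact this
      -- the last block met by E
      set F : Finset ℕ := (Finset.range (N + 1)).filter (fun m => (E ∩ B m).Nonempty)
        with hFdef
      have hFne : F.Nonempty := by
        obtain ⟨v, hv⟩ := hEinf.nonempty
        refine ⟨stv v, ?_⟩
        rw [hFdef, Finset.mem_filter, Finset.mem_range]
        exact ⟨Nat.lt_succ_of_le (hSE v hv), ⟨v, hv, hstv_mem v (hEsub hv)⟩⟩
      set M := F.max' hFne with hMdef
      have hMne : (E ∩ B M).Nonempty := by
        have hmem : M ∈ F := F.max'_mem hFne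
        simp only [hFdef, Finset.mem_filter] at hmem
        exact hmem.2
      have hMmax : ∀ m, (E ∩ B m).Nonempty → m ≤ M := by
        intro m hm
        obtain ⟨v, hvE, hvB⟩ := hm
        have hmN : m ≤ N := (hstv_eq v m hvB) ▸ hSE v hvE
        refine Finset.le_max' F m ?_
        simp only [hFdef, Finset.mem_filter, Finset.mem_range]
        exact ⟨Nat.lt_succ_of_le hmN, v, hvE, hvB⟩
      -- find the maximum g of E ∩ B M with respect to rk
      have hgoal : ∃ g ∈ E ∩ B M, ∀ x ∈ E ∩ B M, rk x ≤ rk g := by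
        by_cases hp' : p M ∈ E ∩ B M
        · refine ⟨p M, hp', ?_⟩
          intro x hx
          have := hrk_le M x hx.2
          have hpstv : stv (p M) = M := hstv_eq _ M hp'.2
          have hrkp : rk (p M) = Λ M + Θ := by
            rw [hrkdef]; simp only [hpstv, if_true]
          rw [hrkp]; exact this
        · by_cases hTinf : (E ∩ B M).Infinite
          · have hEne : E ≠ e M := by
              intro hEeq
              have hBM : (B M).Nonempty := by
                obtain ⟨v, hv⟩ := hMne; exact ⟨v, hv.2⟩
              have : p M ∈ E ∩ B M := ⟨hEeq ▸ hBsub M (hp_mem M hBM), hp_mem M hBM⟩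
              exact hp' this
            have ht : (E ∩ B M) \ {p M} ∈ 𝓖 M := ⟨E, hE, hEne, hTinf, rfl⟩
            have hteq : (E ∩ B M) \ {p M} = E ∩ B M :=
              Set.diff_singleton_eq_self (by simpa using hp')
            obtain ⟨g, hgt, hgmax⟩ := hθmax M _ ht
            rw [hteq] at hgt hgmax
            refine ⟨g, hgt, ?_⟩
            intro x hx
            have hxst : stv x = M := hstv_eq x M hx.2
            have hgst : stv g = M := hstv_eq g M hgt.2
            have hxG : x ∈ ⋃₀ 𝓖 M := ⟨(E ∩ B M) \ {p M}, ht, by rw [hteq]; exact hx⟩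
            have hgG : g ∈ ⋃₀ 𝓖 M := ⟨(E ∩ B M) \ {p M}, ht, by rw [hteq]; exact hgt⟩
            have hxp : x ≠ p M := fun h => hp' (h ▸ hx)
            have hgp : g ≠ p M := fun h => hp' (h ▸ hgt)
            rw [hrkdef]
            simp only [hxst, hgst, if_neg hxp, if_neg hgp, if_pos hxG, if_pos hgG]
            exact hgmax x hx
          · have hTfin : (E ∩ B M).Finite := Set.not_infinite.mp hTinf
            obtain ⟨g, hgt, hgmax⟩ := Set.exists_max_image (E ∩ B M) rk hTfin hMne
            exact ⟨g, hgt, hgmax⟩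
      obtain ⟨g, hgT, hgmax⟩ := hgoal
      refine ⟨g, hgT.1, ?_⟩
      intro x hx
      have hxst : stv x ≤ M := hMmax (stv x) ⟨x, hx, hstv_mem x (hEsub hx)⟩
      have hgst : stv g = M := hstv_eq g M hgT.2
      rcases lt_or_eq_of_le hxst with hlt | heq'
      · exact (hρlt x (hEsub hx) g (hEsub hgT.1)
          (by exact_mod_cast hgst ▸ hlt)).le
      · refine hρle x (hEsub hx) g (hEsub hgT.1) (by exact_mod_cast hgst ▸ heq') ?_
        exact hgmax x ⟨hx, heq' ▸ hstv_mem x (hEsub hx)⟩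

/-- Union of the (fewer than `r`) edges containing a given `k`-element set. -/
def cF (𝓔 : Set (Set α)) (k : ℕ) (F : Finset α) : Set α :=
  if F.card = k then ⋃₀ {E | E ∈ 𝓔 ∧ ↑F ⊆ E} else ∅

def itc (𝓔 : Set (Set α)) (k : ℕ) (X : Set α) : ℕ → Set α
  | 0 => X
  | n + 1 => itc 𝓔 k X n ∪ ⋃ F ∈ {F : Finset α | ↑F ⊆ itc 𝓔 k X n}, cF 𝓔 k F

/-- Closure of `X` under adding, for each `k`-element subset, all edges containing it. -/
def clo (𝓔 : Set (Set α)) (k : ℕ) (X : Set α) : Set α := ⋃ n, itc 𝓔 k X n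

variable {𝓔 : Set (Set α)} {k : ℕ} {X Y : Set α}

theorem itc_mono_succ (n : ℕ) : itc 𝓔 k X n ⊆ itc 𝓔 k X (n + 1) := by
  intro x hx; exact Or.inl hx

theorem itc_mono_le {m n : ℕ} (h : m ≤ n) : itc 𝓔 k X m ⊆ itc 𝓔 k X n := by
  induction n with
  | zero => rw [Nat.le_zero.mp h]
  | succ n ih =>
    rcases Nat.lt_or_ge m (n+1) with h' | h'
    · exact (ih (Nat.lt_succ_iff.mp h')).trans (itc_mono_succ n)
    · rw [Nat.le_antisymm h h']

theorem subset_clo : X ⊆ clo 𝓔 k X := fun x hx => Set.mem_iUnion.mpr ⟨0, hx⟩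

theorem itc_mono_set (h : X ⊆ Y) (n : ℕ) : itc 𝓔 k X n ⊆ itc 𝓔 k Y n := by
  induction n with
  | zero => exact h
  | succ n ih =>
    rintro x (hx | hx)
    · exact Or.inl (ih hx)
    · right
      simp only [Set.mem_iUnion, Set.mem_setOf_eq] at hx ⊢
      obtain ⟨F, hF', hx⟩ := hx
      exact ⟨F, fun a ha => ih (hF' ha), hx⟩

theorem clo_mono (h : X ⊆ Y) : clo 𝓔 k X ⊆ clo 𝓔 k Y := by
  intro x hx
  obtain ⟨n, hn⟩ := Set.mem_iUnion.mp hx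
  exact Set.mem_iUnion.mpr ⟨n, itc_mono_set h n hn⟩

theorem finset_subset_clo_iff {T : Finset α} (h : ↑T ⊆ clo 𝓔 k X) :
    ∃ n, ↑T ⊆ itc 𝓔 k X n := by
  classical
  induction T using Finset.induction with
  | empty => exact ⟨0, by simp⟩
  | @insert a s ha ih =>
    have hs : ↑s ⊆ clo 𝓔 k X := fun x hx => h (by simp [hx])
    obtain ⟨n, hn⟩ := ih hs
    have haX : a ∈ clo 𝓔 k X := h (by simp)
    obtain ⟨m, hm⟩ := Set.mem_iUnion.mp haX
    refine ⟨max n m, ?_⟩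
    intro x hx
    rcases Finset.mem_insert.mp (by exact_mod_cast hx) with rfl | hx'
    · exact itc_mono_le (le_max_right n m) hm
    · exact itc_mono_le (le_max_left n m) (hn hx')

theorem clo_closed {F : Finset α} (h : ↑F ⊆ clo 𝓔 k X) : cF 𝓔 k F ⊆ clo 𝓔 k X := by
  obtain ⟨n, hn⟩ := finset_subset_clo_iff h
  intro x hx
  refine Set.mem_iUnion.mpr ⟨n + 1, Or.inr ?_⟩
  simp only [Set.mem_iUnion, Set.mem_setOf_eq]
  exact ⟨F, hn, hx⟩

theorem itc_finitary (n : ℕ) : ∀ x ∈ itc 𝓔 k X n,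
    ∃ T : Finset α, ↑T ⊆ X ∧ x ∈ itc 𝓔 k (↑T) n := by
  classical
  induction n with
  | zero => intro x hx; exact ⟨{x}, by simpa [itc] using hx, by simp [itc]⟩
  | succ n ih =>
    rintro x (hx | hx)
    · obtain ⟨T, hT1, hT2⟩ := ih x hx
      exact ⟨T, hT1, Or.inl hT2⟩
    · simp only [Set.mem_iUnion, Set.mem_setOf_eq] at hx
      obtain ⟨F, hF, hx⟩ := hx
      have h1 : ∀ y ∈ F, ∃ T : Finset α, ↑T ⊆ X ∧ y ∈ itc 𝓔 k (↑T) n :=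
        fun y hy => ih y (hF hy)
      choose! T hT1 hT2 using h1
      refine ⟨F.biUnion T, ?_, ?_⟩
      · intro y hy
        simp only [Finset.coe_biUnion, Set.mem_iUnion] at hy
        obtain ⟨z, hz, hy⟩ := hy
        exact hT1 z hz hy
      · refine Or.inr ?_
        simp only [Set.mem_iUnion, Set.mem_setOf_eq]
        refine ⟨F, ?_, hx⟩
        intro y hy
        have : y ∈ F := by exact_mod_cast hy
        exact itc_mono_set (by exact_mod_cast Finset.coe_subset.mpr (Finset.subset_biUnion_of_mem T this) : (↑(T y) : Set α) ⊆ ↑(F.biUnion T)) n (hT2 y this)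

theorem clo_finitary {x : α} (h : x ∈ clo 𝓔 k X) :
    ∃ T : Finset α, ↑T ⊆ X ∧ x ∈ clo 𝓔 k ↑T := by
  obtain ⟨n, hn⟩ := Set.mem_iUnion.mp h
  obtain ⟨T, hT1, hT2⟩ := itc_finitary n x hn
  exact ⟨T, hT1, Set.mem_iUnion.mpr ⟨n, hT2⟩⟩

theorem clo_empty (hk : 1 ≤ k) : clo 𝓔 k (∅ : Set α) = ∅ := by
  classical
  have : ∀ n, itc 𝓔 k (∅ : Set α) n = ∅ := by
    intro n
    induction n with
    | zero => rfl
    | succ n ih =>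
      rw [Set.eq_empty_iff_forall_notMem]
      rintro x (hx | hx)
      · rw [ih] at hx; exact hx
      · simp only [Set.mem_iUnion, Set.mem_setOf_eq] at hx
        obtain ⟨F, hF, hx⟩ := hx
        rw [ih] at hF
        have : F = ∅ := by
          ext a
          simp only [Finset.notMem_empty, iff_false]
          intro ha
          simpa using hF ha
        rw [this] at hx
        unfold cF at hx
        rw [if_neg (by simp; omega)] at hx
        exact hx
  rw [clo]
  simp [this]

theorem mk_finsets_le (S : Set α) : #{F : Finset α | ↑F ⊆ S} ≤ max #S ℵ₀ := by
  classical
  have hinj : Function.Injective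
      (fun F : {F : Finset α // ↑F ⊆ S} => (F.1.preimage Subtype.val
        (Subtype.val_injective.injOn) : Finset ↥S)) := by
    rintro ⟨F1, hF1⟩ ⟨F2, hF2⟩ heq
    dsimp only at heq
    simp only [Subtype.mk.injEq]
    ext a
    constructor
    · intro ha
      have : (⟨a, hF1 ha⟩ : ↥S) ∈ F1.preimage Subtype.val Subtype.val_injective.injOn := by
        simp [Finset.mem_preimage, ha]
      rw [heq] at this
      simpa [Finset.mem_preimage] using this
    · intro ha
      have : (⟨a, hF2 ha⟩ : ↥S) ∈ F2.preimage Subtype.val Subtype.val_injective.injOn := by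
        simp [Finset.mem_preimage, ha]
      rw [← heq] at this
      simpa [Finset.mem_preimage] using this
  have h1 : #{F : Finset α | ↑F ⊆ S} ≤ #(Finset ↥S) := Cardinal.mk_le_of_injective hinj
  rcases finite_or_infinite ↥S with hfin | hinf
  · have : #(Finset ↥S) ≤ ℵ₀ := Cardinal.mk_le_aleph0
    exact le_trans h1 (this.trans (le_max_right _ _))
  · rw [Cardinal.mk_finset_of_infinite ↥S] at h1
    exact h1.trans (le_max_left _ _)

theorem cF_card (hr1 : ∀ F : Finset α, F.card = k → {E | E ∈ 𝓔 ∧ ↑F ⊆ E}.Finite)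
    (hspec : ∀ E ∈ 𝓔, #E = ℵ₀) (F : Finset α) : #(cF 𝓔 k F) ≤ ℵ₀ := by
  unfold cF
  split_ifs with h
  · rw [Cardinal.le_aleph0_iff_set_countable]
    rw [Set.sUnion_eq_biUnion]
    refine Set.Countable.biUnion ((hr1 F h).countable) ?_
    rintro E ⟨hE, -⟩
    rw [← Cardinal.le_aleph0_iff_set_countable]
    exact le_of_eq (hspec E hE)
  · simp

theorem itc_card (M : Cardinal.{u}) (hM : ℵ₀ ≤ M) (hX : #X ≤ M)
    (hcF : ∀ F : Finset α, #(cF 𝓔 k F) ≤ ℵ₀) (n : ℕ) : #(itc 𝓔 k X n) ≤ M := by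
  induction n with
  | zero => exact hX
  | succ n ih =>
    have h1 : #(⋃ F ∈ {F : Finset α | ↑F ⊆ itc 𝓔 k X n}, cF 𝓔 k F) ≤ M := by
      refine le_trans (Cardinal.mk_biUnion_le _ _) ?_
      have hidx : #{F : Finset α | ↑F ⊆ itc 𝓔 k X n} ≤ M := by
        refine le_trans (mk_finsets_le _) ?_
        exact max_le ih hM
      have hsup : (⨆ F : {F : Finset α | ↑F ⊆ itc 𝓔 k X n}, #(cF 𝓔 k ↑F)) ≤ ℵ₀ := by
        rcases isEmpty_or_nonempty {F : Finset α | ↑F ⊆ itc 𝓔 k X n} with he | hne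
        · rw [ciSup_of_empty]
          exact bot_le
        · exact ciSup_le' fun F => hcF _
      calc #{F : Finset α | ↑F ⊆ itc 𝓔 k X n} * (⨆ F : {F : Finset α | ↑F ⊆ itc 𝓔 k X n}, #(cF 𝓔 k ↑F))
          ≤ M * ℵ₀ := mul_le_mul' hidx hsup
        _ ≤ M * M := mul_le_mul' le_rfl hM
        _ = M := Cardinal.mul_eq_self hM
    calc #(itc 𝓔 k X (n+1)) ≤ #(itc 𝓔 k X n) + #(⋃ F ∈ {F : Finset α | ↑F ⊆ itc 𝓔 k X n}, cF 𝓔 k F) := Cardinal.mk_union_le _ _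
      _ ≤ M + M := add_le_add ih h1
      _ = M := Cardinal.add_eq_self hM

theorem clo_card (M : Cardinal.{u}) (hM : ℵ₀ ≤ M) (hX : #X ≤ M)
    (hcF : ∀ F : Finset α, #(cF 𝓔 k F) ≤ ℵ₀) : #(clo 𝓔 k X) ≤ M := by
  have hre : clo 𝓔 k X = ⋃ n : ULift.{u} ℕ, itc 𝓔 k X n.down := by
    ext x
    simp only [clo, Set.mem_iUnion]
    exact ⟨fun ⟨n, hn⟩ => ⟨ULift.up n, hn⟩, fun ⟨n, hn⟩ => ⟨n.down, hn⟩⟩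
  rw [hre]
  refine le_trans (Cardinal.mk_iUnion_le _) ?_
  have h2 : (⨆ n : ULift.{u} ℕ, #(itc 𝓔 k X n.down)) ≤ M :=
    ciSup_le' fun n => itc_card M hM hX hcF n.down
  calc #(ULift.{u} ℕ) * (⨆ n : ULift.{u} ℕ, #(itc 𝓔 k X n.down)) ≤ ℵ₀ * M := by
        exact mul_le_mul' (le_of_eq (Cardinal.mk_denumerable _)) h2
    _ ≤ M * M := mul_le_mul' hM le_rfl
    _ = M := Cardinal.mul_eq_self hM

theorem maxRank_main (r k : ℕ) (hr : 1 ≤ r) (μ : Cardinal.{u}) :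
    ∀ 𝓔 : Set (Set α), #(⋃₀ 𝓔 : Set α) = μ →
      (∀ E ∈ 𝓔, #E = ℵ₀) →
      (∀ s : Finset (Set α), ↑s ⊆ 𝓔 → s.card = r →
        #(⋂₀ (↑s : Set (Set α)) : Set α) < (k : Cardinal.{u})) →
      MaxRank 𝓔 := by
  classical
  refine Cardinal.lt_wf.induction
    (C := fun μ => ∀ 𝓔 : Set (Set α), #(⋃₀ 𝓔 : Set α) = μ →
      (∀ E ∈ 𝓔, #E = ℵ₀) →
      (∀ s : Finset (Set α), ↑s ⊆ 𝓔 → s.card = r →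
        #(⋂₀ (↑s : Set (Set α)) : Set α) < (k : Cardinal.{u})) →
      MaxRank 𝓔) μ ?_
  clear μ
  intro μ IH 𝓔 hμ hspec hC
  have hEinf : ∀ E ∈ 𝓔, E.Infinite := by
    intro E hE
    rw [← Set.infinite_coe_iff]
    exact Cardinal.aleph0_le_mk_iff.mp (le_of_eq (hspec E hE).symm)
  -- any k-element set lies in finitely many edges
  have hFinE : ∀ F : Finset α, F.card = k → {E | E ∈ 𝓔 ∧ ↑F ⊆ E}.Finite := by
    intro F hF
    by_contra hinf
    have hinf' : {E | E ∈ 𝓔 ∧ ↑F ⊆ E}.Infinite := hinf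
    obtain ⟨s, hs, hcard⟩ := hinf'.exists_subset_card_eq r
    have hlt := hC s (fun E hE => (hs hE).1) hcard
    have hsub : (↑F : Set α) ⊆ ⋂₀ (↑s : Set (Set α)) := by
      intro a ha
      rw [Set.mem_sInter]
      intro E hE
      exact (hs hE).2 ha
    have hk_le : (k : Cardinal.{u}) ≤ #(⋂₀ (↑s : Set (Set α)) : Set α) := by
      calc (k : Cardinal.{u}) = ((F.card : ℕ) : Cardinal.{u}) := by rw [hF]
        _ = #(↑F : Set α) := (Cardinal.mk_coe_finset).symm
        _ ≤ _ := Cardinal.mk_le_mk_of_subset hsub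
    exact absurd hlt (not_lt.mpr hk_le)
  rcases le_or_gt μ ℵ₀ with hsmall | hbig
  · -- countable case
    have hVcnt : (⋃₀ 𝓔 : Set α).Countable :=
      Cardinal.le_aleph0_iff_set_countable.mp (hμ.le.trans hsmall)
    have hcnt : 𝓔.Countable := by
      rcases Nat.eq_zero_or_pos k with hk0 | hk1
      · -- k = 0 : 𝓔 is finite
        have := hFinE ∅ (by simp [hk0])
        have h2 : {E | E ∈ 𝓔 ∧ ↑(∅ : Finset α) ⊆ E} = 𝓔 := by
          ext E; simp
        rw [h2] at this
        exact this.countable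
      · have h𝓕 : {F : Finset α | ↑F ⊆ ⋃₀ 𝓔}.Countable := by
          rw [← Cardinal.le_aleph0_iff_set_countable]
          refine le_trans (mk_finsets_le _) (max_le ?_ le_rfl)
          rw [hμ]; exact hsmall
        have hsub : 𝓔 ⊆ ⋃ F ∈ {F : Finset α | ↑F ⊆ ⋃₀ 𝓔},
            (if F.card = k then {E | E ∈ 𝓔 ∧ ↑F ⊆ E} else ∅) := by
          intro E hE
          obtain ⟨F, hFE, hFcard⟩ := (hEinf E hE).exists_subset_card_eq k
          simp only [Set.mem_iUnion, Set.mem_setOf_eq]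
          refine ⟨F, fun a ha => ⟨E, hE, hFE ha⟩, ?_⟩
          rw [if_pos hFcard]
          exact ⟨hE, hFE⟩
        refine Set.Countable.mono hsub ?_
        refine Set.Countable.biUnion h𝓕 ?_
        intro F _
        split_ifs with hFk
        · exact (hFinE F hFk).countable
        · exact Set.countable_empty
    refine countable_maxRank r 𝓔 hcnt hEinf ?_
    intro s hs hcard
    rw [← Cardinal.lt_aleph0_iff_set_finite]
    exact lt_trans (hC s hs hcard) (Cardinal.nat_lt_aleph0 k)
  · -- uncountable case
    set V : Set α := ⋃₀ 𝓔 with hVdef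
    have hk : 1 ≤ k := by
      by_contra hk0
      have hk0' : k = 0 := by omega
      have hfin := hFinE ∅ (by simp [hk0'])
      have h2 : {E | E ∈ 𝓔 ∧ ↑(∅ : Finset α) ⊆ E} = 𝓔 := by ext E; simp
      rw [h2] at hfin
      have hcnt : (⋃₀ 𝓔 : Set α).Countable := by
        rw [Set.sUnion_eq_biUnion]
        refine Set.Countable.biUnion hfin.countable ?_
        intro E hE
        rw [← Cardinal.le_aleph0_iff_set_countable]
        exact le_of_eq (hspec E hE)
      rw [← Cardinal.le_aleph0_iff_set_countable, hμ] at hcnt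
      exact absurd hcnt (not_le.mpr hbig)
    have hcF : ∀ F : Finset α, #(cF 𝓔 k F) ≤ ℵ₀ := cF_card hFinE hspec
    -- enumeration of the vertex set in type μ.ord
    have hmkV : #(↥V) = μ := hμ
    obtain ⟨g⟩ : Nonempty (μ.ord.ToType ≃ ↥V) := by
      rw [← Cardinal.eq, Cardinal.mk_ord_toType]
      exact hmkV.symm
    haveI : IsWellOrder μ.ord.ToType (· < ·) := isWellOrder_lt
    set tyi : μ.ord.ToType → Ordinal.{u} :=
      fun i => Ordinal.typein (· < · : μ.ord.ToType → μ.ord.ToType → Prop) i with htyidef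
    have htype : Ordinal.type (· < · : μ.ord.ToType → μ.ord.ToType → Prop) = μ.ord :=
      Ordinal.type_toType _
    have htyi_lt : ∀ i, tyi i < μ.ord := by
      intro i
      rw [← htype]
      exact Ordinal.typein_lt_type _ i
    have hord_lim : Order.IsSuccLimit μ.ord := Cardinal.isSuccLimit_ord hbig.le
    set u : μ.ord.ToType → α := fun i => ↑(g i) with hudef
    have hu_mem : ∀ i, u i ∈ V := fun i => (g i).2
    set rng : Ordinal.{u} → Set α := fun β => u '' {i | tyi i < β} with hrngdef
    set D : Ordinal.{u} → Set α := fun β => clo 𝓔 k (rng β) with hDdef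
    have hrng_mono : ∀ {β γ}, β ≤ γ → rng β ⊆ rng γ := by
      intro β γ h
      refine Set.image_mono ?_
      intro i hi
      simp only [Set.mem_setOf_eq] at hi ⊢
      exact lt_of_lt_of_le hi h
    have hD_mono : ∀ {β γ}, β ≤ γ → D β ⊆ D γ := fun h => clo_mono (hrng_mono h)
    have hD0 : D 0 = ∅ := by
      have : rng 0 = ∅ := by
        rw [hrngdef]
        simp
      rw [hDdef]
      simp only [this]
      exact clo_empty hk
    have hDcard : ∀ β < μ.ord, #(D β) < μ := by
      intro β hβ
      have h1 : #(rng β) ≤ β.card := by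
        obtain ⟨i₀, hi₀⟩ := Ordinal.typein_surj
          (· < · : μ.ord.ToType → μ.ord.ToType → Prop) (htype ▸ hβ)
        have hseteq : {i | tyi i < β} = {i | i < i₀} := by
          ext i
          rw [htyidef]
          simp only [Set.mem_setOf_eq, ← hi₀]
          exact Ordinal.typein_lt_typein _
        have h2 : #{i | i < i₀} = (tyi i₀).card :=
          Ordinal.card_typein (r := (· < · : μ.ord.ToType → μ.ord.ToType → Prop)) i₀
        calc #(rng β) ≤ #{i | tyi i < β} := Cardinal.mk_image_le
          _ = (tyi i₀).card := by rw [hseteq, h2]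
          _ = β.card := by
              simp only [htyidef]
              rw [hi₀]
      have h2 : #(D β) ≤ max β.card ℵ₀ :=
        clo_card _ (le_max_right _ _) (le_trans h1 (le_max_left _ _)) hcF
      refine lt_of_le_of_lt h2 (max_lt ?_ hbig)
      exact Cardinal.lt_ord.mp hβ
    have hcover : ∀ v ∈ V, ∃ β < μ.ord, v ∈ D β := by
      intro v hv
      refine ⟨tyi (g.symm ⟨v, hv⟩) + 1, ?_, ?_⟩
      · rw [Ordinal.add_one_eq_succ]
        exact hord_lim.succ_lt (htyi_lt _)
      · refine subset_clo ?_
        refine ⟨g.symm ⟨v, hv⟩, ?_, by simp [hudef]⟩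
        show tyi (g.symm ⟨v, hv⟩) < tyi (g.symm ⟨v, hv⟩) + 1
        exact lt_add_one _
    have hlimit : ∀ δ, Order.IsSuccLimit δ → ∀ Tf : Finset α, ↑Tf ⊆ D δ → ∃ β < δ, ↑Tf ⊆ D β := by
      intro δ hδ Tf hTf
      have h1 : ∀ x ∈ Tf, ∃ Tx : Finset α, ↑Tx ⊆ rng δ ∧ x ∈ clo 𝓔 k ↑Tx :=
        fun x hx => clo_finitary (hTf hx)
      choose! Tx hTx1 hTx2 using h1
      set T' := Tf.biUnion Tx with hT'def
      have h2 : ∀ y ∈ T', ∃ β, β < δ ∧ y ∈ rng β := by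
        intro y hy
        obtain ⟨x, hx, hyx⟩ := Finset.mem_biUnion.mp hy
        obtain ⟨i, hi, hui⟩ := hTx1 x hx hyx
        refine ⟨tyi i + 1, ?_, ⟨i, ?_, hui⟩⟩
        · rw [Ordinal.add_one_eq_succ]
          exact hδ.succ_lt hi
        · show tyi i < tyi i + 1
          exact lt_add_one _
      choose! b hb1 hb2 using h2
      refine ⟨T'.sup b, ?_, ?_⟩
      · rw [Finset.sup_lt_iff hδ.pos]
        exact hb1
      · intro x hx
        have hxT : x ∈ Tf := by exact_mod_cast hx
        refine clo_mono ?_ (hTx2 x hxT)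
        intro y hy
        have hyT' : y ∈ T' := by
          have : (y : α) ∈ (Tx x : Set α) := hy
          exact Finset.mem_biUnion.mpr ⟨x, hxT, by exact_mod_cast this⟩
        exact hrng_mono (Finset.le_sup hyT') (hb2 y hyT')
    -- every vertex enters at a successor stage
    have hstage : ∀ v ∈ V, ∃ γ, v ∈ D (γ + 1) ∧ v ∉ D γ := by
      intro v hv
      obtain ⟨β₁, hβ₁, hvβ₁⟩ := hcover v hv
      set Sv : Set Ordinal.{u} := {β | v ∈ D β} with hSvdef
      have hSvne : Sv.Nonempty := ⟨β₁, hvβ₁⟩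
      set m := Ordinal.lt_wf.min Sv hSvne with hmdef
      have hm_mem : v ∈ D m := Ordinal.lt_wf.min_mem Sv hSvne
      have hm_min : ∀ β < m, v ∉ D β := by
        intro β hβ hvβ
        exact Ordinal.lt_wf.not_lt_min Sv hvβ hβ
      rcases Ordinal.zero_or_succ_or_isSuccLimit m with hm0 | ⟨γ, hγ⟩ | hlim
      · rw [hm0, hD0] at hm_mem
        exact absurd hm_mem (Set.notMem_empty v)
      · rw [← Ordinal.add_one_eq_succ, eq_comm] at hγ
        refine ⟨γ, hγ ▸ hm_mem, hm_min γ ?_⟩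
        rw [hγ]
        exact lt_add_one γ
      · obtain ⟨β, hβδ, hβ⟩ := hlimit m hlim {v} (by simpa using hm_mem)
        exact absurd (hβ (by simp)) (hm_min β hβδ)
    choose! stg hstg1 hstg2 using hstage
    have hstg_lt : ∀ v ∈ V, ∀ β, v ∈ D β → stg v < β := by
      intro v hv β hvβ
      by_contra hle
      push_neg at hle
      exact hstg2 v hv (hD_mono hle hvβ)
    have hstg_eq : ∀ v ∈ V, ∀ γ, v ∈ D (γ + 1) → v ∉ D γ → stg v = γ := by
      intro v hv γ h1 h2
      have ha : stg v < γ + 1 := hstg_lt v hv (γ+1) h1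
      have hb : γ < stg v + 1 := by
        by_contra hcon
        push_neg at hcon
        exact h2 (hD_mono hcon (hstg1 v hv))
      rw [Ordinal.add_one_eq_succ, Order.lt_succ_iff] at ha hb
      exact le_antisymm ha hb
    -- decomposition of edges
    have hdecomp : ∀ E ∈ 𝓔, ∃ γ, γ + 1 < μ.ord ∧ E ⊆ D (γ + 1) ∧ (E ∩ D γ).Finite := by
      intro E hE
      set A : Set Ordinal.{u} := {β | ∃ F : Finset α, F.card = k ∧ ↑F ⊆ E ∩ D β} with hAdef
      obtain ⟨F₀, hF₀E, hF₀card⟩ := (hEinf E hE).exists_subset_card_eq k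
      have h1 : ∀ x ∈ F₀, ∃ β, β < μ.ord ∧ x ∈ D β := by
        intro x hx
        obtain ⟨β, hβ, hxβ⟩ := hcover x ⟨E, hE, hF₀E hx⟩
        exact ⟨β, hβ, hxβ⟩
      choose! bb hbb1 hbb2 using h1
      have hβ!lt : F₀.sup bb < μ.ord := by
        rw [Finset.sup_lt_iff hord_lim.pos]
        exact hbb1
      have hβ!mem : F₀.sup bb ∈ A := by
        refine ⟨F₀, hF₀card, ?_⟩
        intro x hx
        have hxF : x ∈ F₀ := by exact_mod_cast hx
        exact ⟨hF₀E hx, hD_mono (Finset.le_sup hxF) (hbb2 x hxF)⟩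
      have hAne : A.Nonempty := ⟨_, hβ!mem⟩
      set m := Ordinal.lt_wf.min A hAne with hmdef
      have hm_mem : m ∈ A := Ordinal.lt_wf.min_mem A hAne
      have hm_min : ∀ β < m, β ∉ A := fun β hβ hmem =>
        Ordinal.lt_wf.not_lt_min A hmem hβ
      have hm_le : m ≤ F₀.sup bb := not_lt.mp (fun h =>
        Ordinal.lt_wf.not_lt_min A hβ!mem h)
      have hm_lt : m < μ.ord := lt_of_le_of_lt hm_le hβ!lt
      rcases Ordinal.zero_or_succ_or_isSuccLimit m with hm0 | ⟨γ, hγ⟩ | hlim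
      · exfalso
        obtain ⟨F, hFcard, hFsub⟩ := hm_mem
        have hFne : F.Nonempty := Finset.card_pos.mp (by omega)
        obtain ⟨a, ha⟩ := hFne
        have := hFsub (Finset.mem_coe.mpr ha)
        rw [hm0, hD0] at this
        exact this.2
      · rw [← Ordinal.add_one_eq_succ, eq_comm] at hγ
        obtain ⟨F, hFcard, hFsub⟩ := hm_mem
        refine ⟨γ, ?_, ?_, ?_⟩
        · rw [← hγ]; exact hm_lt
        · -- E ⊆ cF F ⊆ D (γ+1)
          have hFD : ↑F ⊆ D (γ + 1) := fun a ha => (hγ ▸ hFsub ha).2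
          have hFE : ↑F ⊆ E := fun a ha => (hFsub ha).1
          have hEcF : E ⊆ cF 𝓔 k F := by
            rw [cF, if_pos hFcard]
            exact Set.subset_sUnion_of_mem ⟨hE, hFE⟩
          exact hEcF.trans (clo_closed hFD)
        · by_contra hinf
          have hinf' : (E ∩ D γ).Infinite := hinf
          obtain ⟨F', hF'sub, hF'card⟩ := hinf'.exists_subset_card_eq k
          refine hm_min γ ?_ ⟨F', hF'card, hF'sub⟩
          rw [hγ]
          exact lt_add_one γ
      · exfalso
        obtain ⟨F, hFcard, hFsub⟩ := hm_mem
        obtain ⟨β, hβδ, hβ⟩ := hlimit m hlim F (fun a ha => (hFsub ha).2)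
        refine hm_min β hβδ ⟨F, hFcard, ?_⟩
        exact fun a ha => ⟨(hFsub ha).1, hβ ha⟩
    choose! gam hgam1 hgam2 hgam3 using hdecomp
    -- block families
    set 𝓗 : Ordinal.{u} → Set (Set α) := fun γ =>
      {t | ∃ E, E ∈ 𝓔 ∧ gam E = γ ∧ t = E \ D γ} with h𝓗def
    have h𝓗rank : ∀ γ, MaxRank (𝓗 γ) := by
      intro γ
      by_cases hne : (𝓗 γ).Nonempty
      swap
      · rw [Set.not_nonempty_iff_eq_empty] at hne
        rw [hne]; exact maxRank_empty
      obtain ⟨t₀, E₀, hE₀, hg₀, ht₀⟩ := hne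
      have hγord : γ + 1 < μ.ord := hg₀ ▸ hgam1 E₀ hE₀
      have h𝓗sub : (⋃₀ 𝓗 γ : Set α) ⊆ D (γ + 1) := by
        rintro x ⟨t, ⟨E, hE, hgE, rfl⟩, hxt⟩
        exact (hgE ▸ hgam2 E hE) hxt.1
      have hlt : #(⋃₀ 𝓗 γ : Set α) < μ :=
        lt_of_le_of_lt (Cardinal.mk_le_mk_of_subset h𝓗sub) (hDcard _ hγord)
      refine IH _ hlt (𝓗 γ) rfl ?_ ?_
      · rintro t ⟨E, hE, hgE, rfl⟩
        have hfin : (E ∩ D γ).Finite := hgE ▸ hgam3 E hE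
        have hinf : (E \ D γ).Infinite := by
          have heq : E \ (E ∩ D γ) = E \ D γ := Set.diff_self_inter
          rw [← heq]
          exact (hEinf E hE).diff hfin
        refine le_antisymm ?_ ?_
        · exact le_trans (Cardinal.mk_le_mk_of_subset Set.diff_subset)
            (le_of_eq (hspec E hE))
        · rw [← Set.infinite_coe_iff] at hinf
          exact Cardinal.aleph0_le_mk_iff.mpr hinf
      · intro s hs hcard
        set w : Set α → Set α := fun t =>
          if h : ∃ E, E ∈ 𝓔 ∧ gam E = γ ∧ t = E \ D γ then h.choose else ∅ with hwdef
        have hw : ∀ t ∈ 𝓗 γ, w t ∈ 𝓔 ∧ gam (w t) = γ ∧ t = w t \ D γ := by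
          intro t ht
          have ht' : ∃ E, E ∈ 𝓔 ∧ gam E = γ ∧ t = E \ D γ := ht
          simp only [hwdef, dif_pos ht']
          exact ht'.choose_spec
        have hwinj : Set.InjOn w ↑s := by
          intro t1 ht1 t2 ht2 heq
          rw [(hw t1 (hs ht1)).2.2, (hw t2 (hs ht2)).2.2, heq]
        have hs'card : (s.image w).card = r := by
          rw [Finset.card_image_of_injOn hwinj, hcard]
        have hs'sub : ↑(s.image w) ⊆ 𝓔 := by
          intro A hA
          simp only [Finset.coe_image, Set.mem_image, Finset.mem_coe] at hA
          obtain ⟨t, ht, rfl⟩ := hA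
          exact (hw t (hs ht)).1
        refine lt_of_le_of_lt (Cardinal.mk_le_mk_of_subset ?_) (hC _ hs'sub hs'card)
        intro x hx
        rw [Set.mem_sInter]
        intro A hA
        simp only [Finset.coe_image, Set.mem_image, Finset.mem_coe] at hA
        obtain ⟨t, ht, rfl⟩ := hA
        have hxt := Set.mem_sInter.mp hx t (Finset.mem_coe.mpr ht)
        rw [(hw t (hs (Finset.mem_coe.mpr ht))).2.2] at hxt
        exact hxt.1
    choose θ hθinj hθmax using h𝓗rank
    set ι : α → Ordinal.{u} := fun v => Ordinal.typein WellOrderingRel v with hιdef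
    have hιinj : Function.Injective ι := Ordinal.typein_injective WellOrderingRel
    set Λ : Ordinal.{u} → Ordinal.{u} := fun γ => (⨆ x : ↥(⋃₀ 𝓗 γ), θ γ ↑x) + 1 with hΛdef
    have hθΛ : ∀ γ, ∀ v ∈ ⋃₀ 𝓗 γ, θ γ v < Λ γ := by
      intro γ v hv
      exact lt_of_le_of_lt (le_ciSup Ordinal.bddAbove_of_small (⟨v, hv⟩ : ↥(⋃₀ 𝓗 γ)))
        (lt_add_one _)
    set rk : α → Ordinal.{u} := fun v =>
      if v ∈ ⋃₀ 𝓗 (stg v) then θ (stg v) v else Λ (stg v) + ι v with hrkdef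
    have hrk_inj : ∀ γ, ∀ x y : α, stg x = γ → stg y = γ → rk x = rk y → x = y := by
      intro γ x y hx hy heq
      rw [hrkdef] at heq
      simp only [hx, hy] at heq
      split_ifs at heq with h1 h2 h2
      · exact hθinj γ h1 h2 heq
      · exact absurd heq (ne_of_lt (lt_of_lt_of_le (hθΛ γ x h1) (le_self_add)))
      · exact absurd heq.symm (ne_of_lt (lt_of_lt_of_le (hθΛ γ y h2)
          (le_self_add)))
      · exact hιinj ((add_right_inj (Λ γ)).mp heq)
    obtain ⟨ρ, hρlt, hρle, hρinj⟩ := rank_combine V stg rk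
    refine ⟨ρ, ?_, ?_⟩
    · intro x hx y hy heq
      obtain ⟨h1, h2⟩ := hρinj x hx y hy heq
      exact hrk_inj (stg y) x y h1 rfl h2
    · intro E hE
      have hEV : E ⊆ V := fun x hx => ⟨E, hE, hx⟩
      set γ := gam E with hγdef
      have htmem : E \ D γ ∈ 𝓗 γ := ⟨E, hE, rfl, rfl⟩
      obtain ⟨m, hmt, hmax⟩ := hθmax γ _ htmem
      have hstg_t : ∀ x ∈ E \ D γ, stg x = γ := by
        intro x hx
        exact hstg_eq x (hEV hx.1) γ (hgam2 E hE hx.1) hx.2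
      refine ⟨m, hmt.1, ?_⟩
      intro x hx
      by_cases hxD : x ∈ D γ
      · refine (hρlt x (hEV hx) m (hEV hmt.1) ?_).le
        rw [hstg_t m hmt]
        exact hstg_lt x (hEV hx) γ hxD
      · have hxt : x ∈ E \ D γ := ⟨hx, hxD⟩
        refine hρle x (hEV hx) m (hEV hmt.1) (by rw [hstg_t x hxt, hstg_t m hmt]) ?_
        have hxG : x ∈ ⋃₀ 𝓗 γ := ⟨E \ D γ, htmem, hxt⟩
        have hmG : m ∈ ⋃₀ 𝓗 γ := ⟨E \ D γ, htmem, hmt⟩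
        rw [hrkdef]
        simp only [hstg_t x hxt, hstg_t m hmt, if_pos hxG, if_pos hmG]
        exact hmax x hxt

/-- For every infinite cardinal `lam` and all `r, k ∈ ω`, every hypergraph
`𝓔 ⊆ [lam]^ω` possessing property C(r,k) has a minimal vertex cover. -/
theorem minVC_countable_edges {α : Type u}
    (lam : Cardinal.{u}) (hlam : ℵ₀ ≤ lam) (hα : #α = lam)
    (r k : ℕ)
    (𝓔 : Set (Set α)) (hspec : ∀ E ∈ 𝓔, #E = ℵ₀)
    (hC : HasPropC 𝓔 r k) :
    HasMinVC 𝓔 := by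
  classical
  have hr : 1 ≤ r := by
    by_contra h
    have hr0 : r = 0 := by omega
    have h1 := hC ∅ (by simp) (by simp [hr0])
    simp only [Finset.coe_empty, Set.sInter_empty] at h1
    rw [Cardinal.mk_univ, hα] at h1
    exact absurd (lt_trans h1 (Cardinal.nat_lt_aleph0 k)) (not_lt.mpr hlam)
  exact (maxRank_main r k hr (#(⋃₀ 𝓔 : Set α)) 𝓔 rfl hspec
    (fun s hs hc => hC s hs hc)).hasMinVC
end

section
/- Assume GCH. Then for all cardinals κ, λ with ω₂ ≤ κ ≤ λ, every hypergraph 𝓔 ⊆ [λ]^κ (i.e., every edge is a subset of λ of cardinality κ) possessing property C(2,ω) has a maximizing well-ordering. -/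
open Cardinal Set

universe u

/-- In a well-ordered type, a set of size `≥ succ c` has an element with `≥ c`
many predecessors inside the set. -/
lemma exists_high {β : Type u} [LinearOrder β] [WellFoundedLT β]
    (P : Set β) (c : Cardinal.{u}) (hP : Order.succ c ≤ #P) :
    ∃ x ∈ P, c ≤ #{y : β | y ∈ P ∧ y < x} := by
  by_contra hcon
  push_neg at hcon
  -- map each element of P to its typein rank in the induced order
  have key : #P ≤ c := by
    have hlt : ∀ x : ↥P, Ordinal.typein (α := ↥P) (· < ·) x < c.ord := by
      intro x
      rw [Cardinal.lt_ord, Ordinal.card_typein]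
      have e : {y : ↥P // y < x} ≃ {y : β | y ∈ P ∧ y < x} :=
        ⟨fun y => ⟨y.1.1, y.1.2, y.2⟩, fun y => ⟨⟨y.1, y.2.1⟩, y.2.2⟩,
         fun y => rfl, fun y => rfl⟩
      calc #{y : ↥P // (· < ·) y x} = #{y : β | y ∈ P ∧ y < x} := Cardinal.mk_congr e
        _ < c := hcon x.1 x.2
    letI : IsWellOrder c.ord.ToType (· < ·) := isWellOrder_lt
    let φ : ↥P → c.ord.ToType := fun x =>
      (Ordinal.enum (α := c.ord.ToType) (· < ·))
        ⟨Ordinal.typein (α := ↥P) (· < ·) x, by rw [Ordinal.type_toType]; exact hlt x⟩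
    have hφ : Function.Injective φ := by
      intro x y hxy
      have := congrArg (Ordinal.typein (α := c.ord.ToType) (· < ·)) hxy
      simp only [φ] at this
      exact Ordinal.typein_injective (α := ↥P) (· < ·) ((Ordinal.typein_enum _ _).symm.trans (this.trans (Ordinal.typein_enum _ _)))
    calc #P ≤ #c.ord.ToType := Cardinal.mk_le_of_injective hφ
      _ = c := Cardinal.mk_ord_toType c
  exact absurd (hP.trans key) (by simpa using (Order.lt_succ c).not_le)

/-- A monotone union of countable sets indexed by a well-ordered type has
cardinality at most `ℵ₁`. -/
lemma mono_union_le_aleph1 {α : Type u} {J : Type u} [LinearOrder J] [WellFoundedLT J]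
    (V : J → Set α) (hmono : Monotone V) (hct : ∀ j, #(V j) ≤ ℵ₀) :
    #(⋃ j, V j) ≤ ℵ₁ := by
  by_contra hcon
  have h2 : Order.succ ℵ₁ ≤ #(⋃ j, V j) := Order.succ_le_of_lt (not_le.mp hcon)
  -- stage function
  have hst : ∀ x : ↥(⋃ j, V j), ∃ j, (x : α) ∈ V j := by
    intro x; exact Set.mem_iUnion.mp x.2
  choose st hstmem using hst
  let f : ↥(⋃ j, V j) → ↥(Set.range st) := fun x => ⟨st x, Set.mem_range_self x⟩
  -- cardinality bound via fibers
  have hsum : #(⋃ j, V j) ≤ #(Set.range st) * ℵ₀ := by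
    have e := (Equiv.sigmaFiberEquiv f).symm
    have hfib : ∀ j : ↥(Set.range st), #{x // f x = j} ≤ ℵ₀ := by
      intro j
      refine le_trans (Cardinal.mk_le_of_injective (f := fun x : {x // f x = j} =>
        (⟨x.1.1, by
          have : st x.1 = j.1 := congrArg Subtype.val x.2
          exact this ▸ hstmem x.1⟩ : ↥(V j.1))) ?_) (hct j.1)
      intro x y hxy
      have h1 : ((x.1 : ↥(⋃ j, V j)) : α) = ((y.1 : ↥(⋃ j, V j)) : α) := by
        simpa using hxy
      exact Subtype.ext (Subtype.ext h1)
    calc #(⋃ j, V j) = #(Σ j : ↥(Set.range st), {x // f x = j}) :=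
          Cardinal.mk_congr (Equiv.sigmaFiberEquiv f).symm
      _ = Cardinal.sum (fun j : ↥(Set.range st) => #{x // f x = j}) := Cardinal.mk_sigma _
      _ ≤ Cardinal.sum (fun _ : ↥(Set.range st) => ℵ₀) := Cardinal.sum_le_sum _ _ hfib
      _ = #(Set.range st) * ℵ₀ := Cardinal.sum_const' _ _
  have hR : Order.succ ℵ₁ ≤ #(Set.range st) := by
    by_contra hR
    have : #(Set.range st) ≤ ℵ₁ := Order.lt_succ_iff.mp (not_le.mp hR)
    have : #(Set.range st) * ℵ₀ ≤ ℵ₁ := by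
      refine le_trans (Cardinal.mul_le_max _ _) ?_
      simp only [sup_le_iff]
      exact ⟨⟨this, aleph0_lt_aleph_one.le⟩, aleph0_lt_aleph_one.le⟩
    exact absurd (h2.trans (hsum.trans this)) (by simpa using (Order.lt_succ ℵ₁).not_le)
  obtain ⟨x, hxR, hxhigh⟩ := exists_high (Set.range st) ℵ₁ hR
  -- inject the predecessors into V x
  have hinj : #{j : J | j ∈ Set.range st ∧ j < x} ≤ #(V x) := by
    have hpick : ∀ j : {j : J | j ∈ Set.range st ∧ j < x}, ∃ y : ↥(⋃ j, V j), st y = j.1 :=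
      fun j => j.2.1
    choose pick hpick using hpick
    refine Cardinal.mk_le_of_injective (f := fun j => (⟨(pick j).1, by
      have := hstmem (pick j)
      rw [hpick j] at this
      exact hmono (le_of_lt j.2.2) this⟩ : ↥(V x))) ?_
    intro a b hab
    have h1 : ((pick a : ↥(⋃ j, V j)) : α) = ((pick b : ↥(⋃ j, V j)) : α) := by
      simpa using hab
    have : pick a = pick b := Subtype.ext h1
    have := congrArg st this
    rw [hpick a, hpick b] at this
    exact Subtype.ext this
  have := hxhigh.trans (hinj.trans (hct x))
  exact absurd this (by simpa using aleph0_lt_aleph_one.not_le)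




/-- Counting lemma: a family of pairwise almost disjoint (finite intersections)
subsets of `W`, each of size `≥ ℵ₁`, has size at most `max #W ℵ₀`, under GCH. -/
lemma lemG {α : Type u} (hGCH : ∀ μ : Cardinal.{u}, ℵ₀ ≤ μ → 2 ^ μ = Order.succ μ)
    (W : Set α) (𝓣 : Set (Set α))
    (hTW : ∀ T ∈ 𝓣, T ⊆ W) (hbig : ∀ T ∈ 𝓣, ℵ₁ ≤ #T)
    (hfi : ∀ T ∈ 𝓣, ∀ T' ∈ 𝓣, T ≠ T' → #(T ∩ T' : Set α) < ℵ₀) :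
    #↥𝓣 ≤ max (#W) ℵ₀ := by
  rcases Set.eq_empty_or_nonempty 𝓣 with h0 | ⟨T₀, hT₀⟩
  · simp [h0]
  have hμ1 : ℵ₁ ≤ #W := (hbig T₀ hT₀).trans (Cardinal.mk_le_mk_of_subset (hTW T₀ hT₀))
  have hμ0 : ℵ₀ ≤ #W := aleph0_lt_aleph_one.le.trans hμ1
  set μ := #W with hμdef
  rw [max_eq_left hμ0]
  letI I := μ.ord.ToType
  have hIW : #I = #↥W := by rw [mk_ord_toType]
  obtain ⟨eW⟩ : Nonempty (↥W ≃ I) := Cardinal.eq.mp hIW.symm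
  letI : IsWellOrder I (· < ·) := isWellOrder_lt
  let P : Set α → Set I := fun T => {x : I | ((eW.symm x : ↥W) : α) ∈ T}
  have hPT : ∀ T ∈ 𝓣, #(P T) = #T := by
    intro T hT
    refine Cardinal.mk_congr ⟨fun x => ⟨((eW.symm x.1 : ↥W) : α), x.2⟩,
      fun t => ⟨eW ⟨t.1, hTW T hT t.2⟩, by simp [P, t.2]⟩, ?_, ?_⟩
    · intro x
      apply Subtype.ext
      simp only
      congr 1
      apply eW.apply_eq_iff_eq_symm_apply.mpr
      apply Subtype.ext
      rfl
    · intro t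
      apply Subtype.ext
      simp
  have hchoice : ∀ T : ↥𝓣, ∃ x ∈ P T.1, ℵ₀ ≤ #{y : I | y ∈ P T.1 ∧ y < x} := by
    intro T
    refine exists_high (P T.1) ℵ₀ ?_
    rw [hPT T.1 T.2, Cardinal.succ_aleph0]
    exact hbig T.1 T.2
  choose xT hxT1 hxT2 using hchoice
  have hinfw : ∀ T : ↥𝓣, {y : I | y ∈ P T.1 ∧ y < xT T}.Infinite := by
    intro T
    rw [← Set.infinite_coe_iff, ← Cardinal.aleph0_le_mk_iff]
    exact hxT2 T
  let fT : ∀ T : ↥𝓣, ℕ ↪ ↥{y : I | y ∈ P T.1 ∧ y < xT T} := fun T =>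
    (hinfw T).natEmbedding
  let Enc : ↥𝓣 → Σ x : I, (ULift.{u,0} ℕ → ↥{y : I | y < x}) := fun T =>
    ⟨xT T, fun n => ⟨(fT T n.down).1, (fT T n.down).2.2⟩⟩
  have hEncInj : Function.Injective Enc := by
    intro T T' h
    by_contra hne
    have hne' : T.1 ≠ T'.1 := fun hh => hne (Subtype.ext hh)
    have hfun : ∀ n : ℕ, ((fT T n) : I) = ((fT T' n) : I) := by
      intro n
      have := congrArg (fun s : (Σ x : I, (ULift.{u,0} ℕ → ↥{y : I | y < x})) =>
        ((s.2 (ULift.up n) : I))) h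
      simpa [Enc] using this
    have hcommon : ℵ₀ ≤ #(T.1 ∩ T'.1 : Set α) := by
      refine Cardinal.aleph0_le_mk_iff.mpr (Infinite.of_injective
        (fun n : ℕ => (⟨((eW.symm (fT T n).1 : ↥W) : α), (fT T n).2.1, by
          rw [hfun n]; exact (fT T' n).2.1⟩ : ↥(T.1 ∩ T'.1 : Set α))) ?_)
      intro m n hmn
      have hv : ((eW.symm (fT T m).1 : ↥W) : α) = ((eW.symm (fT T n).1 : ↥W) : α) := by
        exact congrArg (Subtype.val : ↥(T.1 ∩ T'.1 : Set α) → α) hmn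
      have : ((fT T m) : I) = ((fT T n) : I) := eW.symm.injective (Subtype.ext hv)
      exact (fT T).injective (Subtype.ext this)
    exact absurd (hfi T.1 T.2 T'.1 T'.2 hne') (not_lt.mpr hcommon)
  have hseg : ∀ x : I, #{y : I | y < x} < μ := by
    intro x
    have h1 : #{y : I // (· < ·) y x} = (Ordinal.typein ((· < ·) : I → I → Prop) x).card :=
      (Ordinal.card_typein x).symm
    have h2 := Ordinal.typein_lt_type ((· < ·) : I → I → Prop) x
    rw [Ordinal.type_toType] at h2
    have h3 := Cardinal.lt_ord.mp h2
    calc #{y : I | y < x} = #{y : I // (· < ·) y x} := rfl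
      _ < μ := h1 ▸ h3
  have hpow : ∀ x : I, #(ULift.{u,0} ℕ → ↥{y : I | y < x}) ≤ μ := by
    intro x
    have hc : #{y : I | y < x} < μ := hseg x
    set c := #{y : I | y < x} with hcdef
    set d := max c ℵ₀ with hd
    have hdμ : d < μ := max_lt hc (aleph0_lt_aleph_one.trans_le hμ1)
    have hd0 : ℵ₀ ≤ d := le_max_right _ _
    have he : #(ULift.{u,0} ℕ → ↥{y : I | y < x}) = c ^ ℵ₀ := by
      rw [← Cardinal.power_def, Cardinal.mk_denumerable (ULift.{u,0} ℕ)]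
    rw [he]
    calc c ^ ℵ₀ ≤ (2 ^ d) ^ ℵ₀ :=
          Cardinal.power_le_power_right (le_trans (le_max_left _ _) (Cardinal.cantor d).le)
      _ = 2 ^ (d * ℵ₀) := (Cardinal.power_mul).symm
      _ = 2 ^ d := by rw [Cardinal.mul_eq_max hd0 le_rfl, max_eq_left hd0]
      _ = Order.succ d := hGCH d hd0
      _ ≤ μ := Order.succ_le_of_lt hdμ
  calc #↥𝓣 ≤ #(Σ x : I, (ULift.{u,0} ℕ → ↥{y : I | y < x})) :=
        Cardinal.mk_le_of_injective hEncInj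
    _ = Cardinal.sum (fun x : I => #(ULift.{u,0} ℕ → ↥{y : I | y < x})) := Cardinal.mk_sigma _
    _ ≤ Cardinal.sum (fun _ : I => μ) := Cardinal.sum_le_sum _ _ hpow
    _ = #I * μ := Cardinal.sum_const' _ _
    _ = μ * μ := by rw [mk_ord_toType]
    _ = μ := Cardinal.mul_eq_self hμ0




/-- Closure lemma: any subfamily `S` of an almost disjoint family `𝓐` of sets of
size `≤ κ` extends to a family `D` of size `≤ max #S κ` such that every edge
outside `D` meets `⋃₀ D` countably. -/
lemma CL {α : Type u} (hGCH : ∀ μ : Cardinal.{u}, ℵ₀ ≤ μ → 2 ^ μ = Order.succ μ)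
    (κ : Cardinal.{u}) (hκ : Cardinal.aleph 2 ≤ κ)
    (𝓐 : Set (Set α)) (hsz : ∀ E ∈ 𝓐, #E ≤ κ)
    (hfi : ∀ E ∈ 𝓐, ∀ F ∈ 𝓐, E ≠ F → #(E ∩ F : Set α) < ℵ₀)
    (S : Set (Set α)) (hS : S ⊆ 𝓐) :
    ∃ D : Set (Set α), S ⊆ D ∧ D ⊆ 𝓐 ∧ #D ≤ max (#S) κ ∧
      ∀ E ∈ 𝓐, E ∉ D → #(E ∩ ⋃₀ D : Set α) ≤ ℵ₀ := by
  classical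
  set σ := max (#S) κ with hσdef
  have hκ0 : ℵ₀ ≤ κ := le_trans (by
    calc ℵ₀ ≤ ℵ₁ := aleph0_lt_aleph_one.le
    _ ≤ Cardinal.aleph 2 := Cardinal.aleph_le_aleph.mpr (by norm_num)) hκ
  have hσκ : κ ≤ σ := le_max_right _ _
  have hσ0 : ℵ₀ ≤ σ := hκ0.trans hσκ
  have hκ2 : (Cardinal.aleph 2) ≤ κ := hκ
  -- the absorption step
  let step : Set (Set α) → Set (Set α) := fun D =>
    D ∪ {E | E ∈ 𝓐 ∧ ℵ₁ ≤ #(E ∩ ⋃₀ D : Set α)}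
  have hstep_sub : ∀ D, D ⊆ step D := fun D => Set.subset_union_left
  have hstep_mono : ∀ D D', D ⊆ D' → step D ⊆ step D' := by
    intro D D' hDD' E hE
    rcases hE with hE | hE
    · exact Or.inl (hDD' hE)
    · refine Or.inr ⟨hE.1, le_trans hE.2 (Cardinal.mk_le_mk_of_subset ?_)⟩
      exact inter_subset_inter_right _ (sUnion_subset_sUnion hDD')
  have hstep_𝓐 : ∀ D, D ⊆ 𝓐 → step D ⊆ 𝓐 := by
    intro D hD E hE
    rcases hE with hE | hE
    · exact hD hE
    · exact hE.1
  -- size of sUnion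
  have hsUnion : ∀ D : Set (Set α), D ⊆ 𝓐 → #(⋃₀ D : Set α) ≤ #D * κ := by
    intro D hD
    refine (Cardinal.mk_sUnion_le D).trans ?_
    have hb : (⨆ s : D, #s) ≤ κ := by
      apply ciSup_le'
      intro s
      exact hsz s.1 (hD s.2)
    exact mul_le_mul' le_rfl hb
  -- size of the absorption step
  have hstep_size : ∀ D : Set (Set α), D ⊆ 𝓐 → #D ≤ σ → #(step D) ≤ σ := by
    intro D hD hDσ
    have habs : #{E | E ∈ 𝓐 ∧ ℵ₁ ≤ #(E ∩ ⋃₀ D : Set α)} ≤ σ := by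
      set Abs := {E | E ∈ 𝓐 ∧ ℵ₁ ≤ #(E ∩ ⋃₀ D : Set α)} with hAbs
      have hinjOn : Set.InjOn (fun E => E ∩ ⋃₀ D) Abs := by
        intro E hE F hF hEF
        replace hEF : E ∩ ⋃₀ D = F ∩ ⋃₀ D := hEF
        by_contra hne
        have h1 : (E ∩ ⋃₀ D : Set α) ⊆ E ∩ F := by
          intro x hx
          have hx' : x ∈ F ∩ ⋃₀ D := by
            rw [← hEF]; exact hx
          exact ⟨hx.1, hx'.1⟩
        have := le_trans hE.2 (Cardinal.mk_le_mk_of_subset h1)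
        exact absurd (hfi E hE.1 F hF.1 hne) (not_lt.mpr (aleph0_lt_aleph_one.le.trans this))
      have himg := lemG hGCH (⋃₀ D) ((fun E => E ∩ ⋃₀ D) '' Abs) ?_ ?_ ?_
      · have hcard : #((fun E => E ∩ ⋃₀ D) '' Abs) = #Abs :=
          Cardinal.mk_image_eq_of_injOn _ _ hinjOn
        rw [← hcard]
        refine himg.trans ?_
        have h1 : #(⋃₀ D : Set α) ≤ σ := by
          refine (hsUnion D hD).trans ?_
          calc #D * κ ≤ σ * κ := mul_le_mul' hDσ le_rfl
            _ = max σ κ := Cardinal.mul_eq_max hσ0 hκ0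
            _ = σ := max_eq_left hσκ
        exact max_le h1 hσ0
      · rintro T ⟨E, hE, rfl⟩
        exact inter_subset_right
      · rintro T ⟨E, hE, rfl⟩
        exact hE.2
      · rintro T ⟨E, hE, rfl⟩ T' ⟨E', hE', rfl⟩ hTT'
        have hne : E ≠ E' := fun h => hTT' (by rw [h])
        refine lt_of_le_of_lt (Cardinal.mk_le_mk_of_subset ?_) (hfi E hE.1 E' hE'.1 hne)
        exact fun x hx => ⟨hx.1.1, hx.2.1⟩
    refine (Cardinal.mk_union_le _ _).trans ?_
    calc #D + #{E | E ∈ 𝓐 ∧ ℵ₁ ≤ #(E ∩ ⋃₀ D : Set α)} ≤ σ + σ := add_le_add hDσ habs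
      _ = σ := Cardinal.add_eq_self hσ0
  -- the iteration
  letI I₂ := (Cardinal.aleph 2).ord.ToType
  letI : IsWellOrder I₂ (· < ·) := isWellOrder_lt
  have h20 : ℵ₀ ≤ Cardinal.aleph 2 := by
    calc ℵ₀ ≤ ℵ₁ := aleph0_lt_aleph_one.le
    _ ≤ Cardinal.aleph 2 := Cardinal.aleph_le_aleph.mpr (by norm_num)
  have hlim : Order.IsSuccLimit ((Cardinal.aleph 2).ord) := Cardinal.isSuccLimit_ord h20
  have hne2 : Nonempty I₂ := by
    refine Ordinal.toType_nonempty_iff_ne_zero.mpr ?_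
    intro h0
    have h1 := congrArg Ordinal.card h0
    rw [Cardinal.card_ord] at h1
    simp only [Ordinal.card_zero] at h1
    rw [h1] at h20
    exact Cardinal.aleph0_ne_zero (le_zero_iff.mp h20)
  let wf : WellFounded ((· < ·) : I₂ → I₂ → Prop) := IsWellFounded.wf
  let C : I₂ → Set (Set α) :=
    wf.fix (fun i rec => S ∪ ⋃ j : {j : I₂ // j < i}, step (rec j.1 j.2))
  have hCeq : ∀ i : I₂, C i = S ∪ ⋃ j : {j : I₂ // j < i}, step (C j.1) := by
    intro i
    exact wf.fix_eq _ i
  have hSC : ∀ i, S ⊆ C i := by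
    intro i
    rw [hCeq i]
    exact subset_union_left
  have hC𝓐 : ∀ i : I₂, C i ⊆ 𝓐 := by
    intro i
    refine wf.induction (C := fun j => C j ⊆ 𝓐) i ?_
    intro i IH
    rw [hCeq i]
    rintro E (hE | hE)
    · exact hS hE
    · obtain ⟨j, hEj⟩ := mem_iUnion.mp hE
      rcases hEj with h | h
      · exact IH j.1 j.2 h
      · exact h.1
  have hstepC_subC : ∀ j i : I₂, j < i → step (C j) ⊆ C i := by
    intro j i hji
    rw [hCeq i]
    refine subset_union_of_subset_right ?_ _
    exact subset_iUnion_of_subset ⟨j, hji⟩ subset_rfl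
  have hCmono : ∀ i j : I₂, i ≤ j → C i ⊆ C j := by
    intro i j hij
    rw [hCeq i, hCeq j]
    refine union_subset subset_union_left ?_
    refine subset_union_of_subset_right ?_ _
    refine iUnion_subset ?_
    intro j'
    exact subset_iUnion_of_subset ⟨j'.1, lt_of_lt_of_le j'.2 hij⟩ subset_rfl
  have hsegcard : ∀ i : I₂, #{j : I₂ // j < i} ≤ Cardinal.aleph 2 := by
    intro i
    calc #{j : I₂ // j < i} ≤ #I₂ := Cardinal.mk_subtype_le _
      _ = Cardinal.aleph 2 := mk_ord_toType _
  have hCsize : ∀ i : I₂, #(C i) ≤ σ := by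
    intro i
    refine wf.induction (C := fun j => #(C j) ≤ σ) i ?_
    intro i IH
    have : #(C i) = #((S ∪ ⋃ j : {j : I₂ // j < i}, step (C j.1)) : Set (Set α)) := by
      rw [hCeq i]
    rw [this]
    refine (Cardinal.mk_union_le _ _).trans ?_
    have h1 : #S ≤ σ := le_max_left _ _
    have h2 : #(⋃ j : {j : I₂ // j < i}, step (C j.1)) ≤ σ := by
      refine (Cardinal.mk_iUnion_le _).trans ?_
      have hs : (⨆ j : {j : I₂ // j < i}, #(step (C j.1))) ≤ σ :=
        ciSup_le' (fun j => hstep_size (C j.1) (hC𝓐 j.1) (IH j.1 j.2))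
      calc #{j : I₂ // j < i} * (⨆ j : {j : I₂ // j < i}, #(step (C j.1)))
          ≤ σ * σ := mul_le_mul' ((hsegcard i).trans (hκ.trans hσκ)) hs
        _ = σ := Cardinal.mul_eq_self hσ0
    calc #S + #(⋃ j : {j : I₂ // j < i}, step (C j.1)) ≤ σ + σ := add_le_add h1 h2
      _ = σ := Cardinal.add_eq_self hσ0
  -- the closure
  let D : Set (Set α) := S ∪ ⋃ i : I₂, step (C i)
  have hstepD : ∀ i : I₂, step (C i) ⊆ D :=
    fun i => (subset_iUnion (fun i : I₂ => step (C i)) i).trans subset_union_right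
  have hCD : ∀ i : I₂, C i ⊆ D := fun i => (hstep_sub (C i)).trans (hstepD i)
  have hSD : S ⊆ D := subset_union_left
  have hD𝓐 : D ⊆ 𝓐 := by
    rintro E (hE | hE)
    · exact hS hE
    · obtain ⟨i, hEi⟩ := mem_iUnion.mp hE
      exact hstep_𝓐 (C i) (hC𝓐 i) hEi
  have hDsize : #D ≤ σ := by
    refine (Cardinal.mk_union_le _ _).trans ?_
    have h2 : #(⋃ i : I₂, step (C i)) ≤ σ := by
      refine (Cardinal.mk_iUnion_le _).trans ?_
      have hs : (⨆ i : I₂, #(step (C i))) ≤ σ :=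
        ciSup_le' (fun i => hstep_size (C i) (hC𝓐 i) (hCsize i))
      calc #I₂ * (⨆ i : I₂, #(step (C i))) ≤ σ * σ := by
            refine mul_le_mul' ?_ hs
            rw [mk_ord_toType]
            exact hκ.trans hσκ
        _ = σ := Cardinal.mul_eq_self hσ0
    calc #S + #(⋃ i : I₂, step (C i)) ≤ σ + σ := add_le_add (le_max_left _ _) h2
      _ = σ := Cardinal.add_eq_self hσ0
  refine ⟨D, hSD, hD𝓐, hDsize, ?_⟩
  -- closedness
  intro E hE𝓐 hED
  by_contra hcon
  have h1 : ℵ₁ ≤ #(E ∩ ⋃₀ D : Set α) := by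
    rw [← Cardinal.succ_aleph0]
    exact Order.succ_le_of_lt (not_le.mp hcon)
  let V : I₂ → Set α := fun i => E ∩ ⋃₀ (step (C i))
  have hVmono : Monotone V := by
    intro i j hij
    exact inter_subset_inter_right _ (sUnion_subset_sUnion (hstep_mono _ _ (hCmono i j hij)))
  have hsubV : (E ∩ ⋃₀ D : Set α) ⊆ ⋃ i, V i := by
    rintro x ⟨hxE, F, hFD, hxF⟩
    rcases hFD with hFS | hF
    · obtain ⟨i₀⟩ := hne2
      exact mem_iUnion.mpr ⟨i₀, hxE, F, hstep_sub (C i₀) (hSC i₀ hFS), hxF⟩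
    · obtain ⟨i, hFi⟩ := mem_iUnion.mp hF
      exact mem_iUnion.mpr ⟨i, hxE, F, hFi, hxF⟩
  have h2 : ℵ₁ ≤ #(⋃ i, V i) := h1.trans (Cardinal.mk_le_mk_of_subset hsubV)
  obtain ⟨p, hp⟩ := Cardinal.le_mk_iff_exists_set.mp h2
  have hst : ∀ x : ↥p, ∃ i : I₂, (x : ↥(⋃ i, V i)).1 ∈ V i := fun x => mem_iUnion.mp x.1.2
  choose st hstmem using hst
  -- bound the stages
  have hreg : (Cardinal.aleph 2).IsRegular := by
    have h := Cardinal.isRegular_aleph_succ 1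
    have : Order.succ (1 : Ordinal) = 2 := by
      rw [← Ordinal.add_one_eq_succ]; norm_num
    rwa [this] at h
  have hcof : ((Cardinal.aleph 2).ord).cof = Cardinal.aleph 2 := hreg.cof_eq
  have hcards : #↥p < ((Cardinal.aleph 2).ord).cof := by
    rw [hcof, hp]
    exact Cardinal.aleph_lt_aleph.mpr one_lt_two
  have hflt : ∀ x : ↥p, Ordinal.typein ((· < ·) : I₂ → I₂ → Prop) (st x) < (Cardinal.aleph 2).ord := by
    intro x
    have := Ordinal.typein_lt_type ((· < ·) : I₂ → I₂ → Prop) (st x)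
    rwa [Ordinal.type_toType] at this
  have hsup := Ordinal.iSup_lt_ord hcards hflt
  have hsucclt : Order.succ (⨆ x : ↥p, Ordinal.typein ((· < ·) : I₂ → I₂ → Prop) (st x))
      < (Cardinal.aleph 2).ord := hlim.succ_lt hsup
  let istar : I₂ := (Ordinal.enum ((· < ·) : I₂ → I₂ → Prop))
    ⟨Order.succ (⨆ x : ↥p, Ordinal.typein ((· < ·) : I₂ → I₂ → Prop) (st x)),
      by rw [Ordinal.type_toType]; exact hsucclt⟩
  have hstlt : ∀ x : ↥p, st x < istar := by
    intro x
    refine (Ordinal.typein_lt_typein ((· < ·) : I₂ → I₂ → Prop)).mp ?_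
    simp only [istar]
    exact (lt_of_le_of_lt (Ordinal.le_iSup _ x) (Order.lt_succ _)).trans_eq (Ordinal.typein_enum _ _).symm
  have hVistar : ℵ₁ ≤ #(V istar) := by
    rw [← hp]
    refine Cardinal.mk_le_of_injective (f := fun x : ↥p =>
      (⟨(x.1 : α), hVmono (hstlt x).le (hstmem x)⟩ : ↥(V istar))) ?_
    intro x y hxy
    have h1 : ((x.1 : ↥(⋃ i, V i)) : α) = ((y.1 : ↥(⋃ i, V i)) : α) := by
      simpa using hxy
    exact Subtype.ext (Subtype.ext h1)
  obtain ⟨j, hij⟩ : ∃ j : I₂, istar < j := by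
    have h1 := Ordinal.typein_lt_type ((· < ·) : I₂ → I₂ → Prop) istar
    rw [Ordinal.type_toType] at h1
    have h2 := hlim.succ_lt h1
    refine ⟨(Ordinal.enum ((· < ·) : I₂ → I₂ → Prop))
      ⟨Order.succ (Ordinal.typein ((· < ·) : I₂ → I₂ → Prop) istar),
        by rw [Ordinal.type_toType]; exact h2⟩, ?_⟩
    conv_lhs => rw [← Ordinal.enum_typein ((· < ·) : I₂ → I₂ → Prop) istar]
    exact Ordinal.enum_lt_enum.mpr (Subtype.mk_lt_mk.mpr (Order.lt_succ _))
  have hEstep : E ∈ step (C j) := by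
    refine Or.inr ⟨hE𝓐, ?_⟩
    refine hVistar.trans (Cardinal.mk_le_mk_of_subset ?_)
    refine inter_subset_inter_right _ (sUnion_subset_sUnion ?_)
    exact hstepC_subC istar j hij
  exact hED (hstepD j hEstep)







lemma segcard_lt {c : Cardinal.{u}} (i : c.ord.ToType) :
    #{j : c.ord.ToType // j < i} < c := by
  letI : IsWellOrder c.ord.ToType (· < ·) := isWellOrder_lt
  have h1 : #{j : c.ord.ToType // (· < ·) j i} =
      (Ordinal.typein ((· < ·) : c.ord.ToType → c.ord.ToType → Prop) i).card :=
    (Ordinal.card_typein i).symm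
  have h2 := Ordinal.typein_lt_type ((· < ·) : c.ord.ToType → c.ord.ToType → Prop) i
  rw [Ordinal.type_toType] at h2
  calc #{j : c.ord.ToType // j < i}
      = (Ordinal.typein ((· < ·) : c.ord.ToType → c.ord.ToType → Prop) i).card := h1
    _ < c := Cardinal.lt_ord.mp h2

lemma exists_gt_toType {c : Cardinal.{u}} (hc : ℵ₀ ≤ c) (i : c.ord.ToType) :
    ∃ j : c.ord.ToType, i < j := by
  letI : IsWellOrder c.ord.ToType (· < ·) := isWellOrder_lt
  have hlim : Order.IsSuccLimit (c.ord) := Cardinal.isSuccLimit_ord hc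
  have h1 := Ordinal.typein_lt_type ((· < ·) : c.ord.ToType → c.ord.ToType → Prop) i
  rw [Ordinal.type_toType] at h1
  have h2 := hlim.succ_lt h1
  refine ⟨(Ordinal.enum ((· < ·) : c.ord.ToType → c.ord.ToType → Prop))
    ⟨Order.succ (Ordinal.typein ((· < ·) : c.ord.ToType → c.ord.ToType → Prop) i),
      by rw [Ordinal.type_toType]; exact h2⟩, ?_⟩
  conv_lhs => rw [← Ordinal.enum_typein ((· < ·) : c.ord.ToType → c.ord.ToType → Prop) i]
  exact Ordinal.enum_lt_enum.mpr (Subtype.mk_lt_mk.mpr (Order.lt_succ _))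

/-- Main induction: an almost disjoint family of `κ`-sets admits an ordinal
ranking such that every edge meets the union of earlier edges (and `X`) in
fewer than `κ` points. -/
lemma key {α : Type u} (hGCH : ∀ μ : Cardinal.{u}, ℵ₀ ≤ μ → 2 ^ μ = Order.succ μ)
    (κ : Cardinal.{u}) (hκ : Cardinal.aleph 2 ≤ κ) :
    ∀ n : Cardinal.{u}, ∀ 𝓐 : Set (Set α), ∀ X : Set α,
      #↥𝓐 ≤ n →
      (∀ E ∈ 𝓐, #E = κ) →
      (∀ E ∈ 𝓐, ∀ F ∈ 𝓐, E ≠ F → #(E ∩ F : Set α) < ℵ₀) →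
      (∀ E ∈ 𝓐, #(E ∩ X : Set α) < κ) →
      ∃ ρ : Set α → Ordinal.{u},
        (∀ E ∈ 𝓐, ∀ F ∈ 𝓐, ρ E = ρ F → E = F) ∧
        (∀ E ∈ 𝓐, #((E ∩ (X ∪ ⋃₀ {F | F ∈ 𝓐 ∧ ρ F < ρ E})) : Set α) < κ) := by
  have hκ1 : ℵ₁ < κ := lt_of_lt_of_le (Cardinal.aleph_lt_aleph.mpr one_lt_two) hκ
  have hκ0 : ℵ₀ ≤ κ := le_of_lt (aleph0_lt_aleph_one.trans hκ1)
  intro n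
  refine Cardinal.lt_wf.induction
    (C := fun n => ∀ 𝓐 : Set (Set α), ∀ X : Set α,
      #↥𝓐 ≤ n →
      (∀ E ∈ 𝓐, #E = κ) →
      (∀ E ∈ 𝓐, ∀ F ∈ 𝓐, E ≠ F → #(E ∩ F : Set α) < ℵ₀) →
      (∀ E ∈ 𝓐, #(E ∩ X : Set α) < κ) →
      ∃ ρ : Set α → Ordinal.{u},
        (∀ E ∈ 𝓐, ∀ F ∈ 𝓐, ρ E = ρ F → E = F) ∧
        (∀ E ∈ 𝓐, #((E ∩ (X ∪ ⋃₀ {F | F ∈ 𝓐 ∧ ρ F < ρ E})) : Set α) < κ)) n ?_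
  clear n
  intro n IH 𝓐 X hn hsz hfi hX
  classical
  by_cases hbase : #𝓐 ≤ κ
  · -- base case : small family, enumerate in minimal order type
    obtain ⟨e⟩ : Nonempty (↥𝓐 ≃ (#↥𝓐).ord.ToType) := Cardinal.eq.mp (mk_ord_toType _).symm
    letI : IsWellOrder (#↥𝓐).ord.ToType (· < ·) := isWellOrder_lt
    set tin : (#↥𝓐).ord.ToType → Ordinal.{u} :=
      fun x => Ordinal.typein ((· < ·) : (#↥𝓐).ord.ToType → (#↥𝓐).ord.ToType → Prop) x with htin
    have htininj : Function.Injective tin := Ordinal.typein_injective _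
    have htinlt : ∀ x y, tin x < tin y ↔ x < y := fun x y =>
      Ordinal.typein_lt_typein ((· < ·) : (#↥𝓐).ord.ToType → (#↥𝓐).ord.ToType → Prop)
    set ρ₀ : Set α → Ordinal.{u} :=
      fun E => if h : E ∈ 𝓐 then tin (e ⟨E, h⟩) else 0 with hρ₀def
    have hval : ∀ F (h : F ∈ 𝓐), ρ₀ F = tin (e ⟨F, h⟩) := fun F h => dif_pos h
    have hvlt : ∀ F (hF : F ∈ 𝓐) G (hG : G ∈ 𝓐), ρ₀ F < ρ₀ G ↔ e ⟨F, hF⟩ < e ⟨G, hG⟩ := by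
      intro F hF G hG
      rw [hval F hF, hval G hG]
      exact htinlt _ _
    refine ⟨ρ₀, ?_, ?_⟩
    · intro E hE F hF hEF
      rw [hval E hE, hval F hF] at hEF
      exact Subtype.ext_iff.mp (e.injective (htininj hEF))
    · intro E hE
      set P := {F | F ∈ 𝓐 ∧ ρ₀ F < ρ₀ E} with hPdef
      have hsplit : (E ∩ (X ∪ ⋃₀ P) : Set α) ⊆ (E ∩ X) ∪ (E ∩ ⋃₀ P) := by
        rintro x ⟨hx, hx2 | hx2⟩
        · exact Or.inl ⟨hx, hx2⟩
        · exact Or.inr ⟨hx, hx2⟩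
      refine lt_of_le_of_lt (Cardinal.mk_le_mk_of_subset hsplit) ?_
      refine lt_of_le_of_lt (Cardinal.mk_union_le _ _) ?_
      refine Cardinal.add_lt_of_lt hκ0 (hX E hE) ?_
      -- the union over earlier edges
      have hcup : (E ∩ ⋃₀ P : Set α) ⊆ ⋃ F : ↥P, (E ∩ F.1 : Set α) := by
        rintro x ⟨hx, F, hF, hxF⟩
        exact mem_iUnion.mpr ⟨⟨F, hF⟩, hx, hxF⟩
      refine lt_of_le_of_lt (Cardinal.mk_le_mk_of_subset hcup) ?_
      refine lt_of_le_of_lt (Cardinal.mk_iUnion_le _) ?_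
      have hPcard : #↥P < κ := by
        have hinj : Function.Injective (fun F : ↥P =>
            (⟨e ⟨F.1, F.2.1⟩, (hvlt F.1 F.2.1 E hE).mp F.2.2⟩ :
              {j : (#↥𝓐).ord.ToType // j < e ⟨E, hE⟩})) := by
          intro F F' hFF'
          have h1 : e ⟨F.1, F.2.1⟩ = e ⟨F'.1, F'.2.1⟩ := Subtype.ext_iff.mp hFF'
          have h2 := e.injective h1
          exact Subtype.ext (congrArg (Subtype.val : ↥𝓐 → Set α) h2)
        calc #↥P ≤ #{j : (#↥𝓐).ord.ToType // j < e ⟨E, hE⟩} := Cardinal.mk_le_of_injective hinj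
          _ < #↥𝓐 := segcard_lt _
          _ ≤ κ := hbase
      have hfin : ∀ F : ↥P, #(E ∩ F.1 : Set α) ≤ ℵ₀ := by
        intro F
        have hne : E ≠ F.1 := by
          intro hEF
          have := F.2.2
          rw [← hEF] at this
          exact lt_irrefl _ this
        exact le_of_lt (hfi E hE F.1 F.2.1 hne)
      calc #↥P * (⨆ F : ↥P, #(E ∩ F.1 : Set α)) ≤ #↥P * ℵ₀ :=
            mul_le_mul' le_rfl (ciSup_le' hfin)
        _ < κ := Cardinal.mul_lt_of_lt hκ0 hPcard (aleph0_lt_aleph_one.trans hκ1)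
  · -- inductive step
    push_neg at hbase
    set ν := #↥𝓐 with hνdef
    have hν0 : ℵ₀ ≤ ν := hκ0.trans hbase.le
    obtain ⟨e𝓐⟩ : Nonempty (↥𝓐 ≃ ν.ord.ToType) := Cardinal.eq.mp (mk_ord_toType _).symm
    letI : IsWellOrder ν.ord.ToType (· < ·) := isWellOrder_lt
    have wf : WellFounded ((· < ·) : ν.ord.ToType → ν.ord.ToType → Prop) := IsWellFounded.wf
    have hsz' : ∀ E ∈ 𝓐, #E ≤ κ := fun E h => le_of_eq (hsz E h)
    set body : (i : ν.ord.ToType) → ((j : ν.ord.ToType) → j < i → Set (Set α)) → Set (Set α) :=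
      fun i rec => Classical.choose (CL hGCH κ hκ 𝓐 hsz' hfi
        ((((⋃ j : {j : ν.ord.ToType // j < i}, rec j.1 j.2) ∪
          {E | ∃ h : E ∈ 𝓐, e𝓐 ⟨E, h⟩ < i}) ∩ 𝓐)) inter_subset_right) with hbodydef
    set B : ν.ord.ToType → Set (Set α) := wf.fix body with hBdef
    set Sb : ν.ord.ToType → Set (Set α) := fun i =>
      (((⋃ j : {j : ν.ord.ToType // j < i}, B j.1) ∪
        {E | ∃ h : E ∈ 𝓐, e𝓐 ⟨E, h⟩ < i}) ∩ 𝓐) with hSbdef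
    have hBeq0 : ∀ i, B i = body i (fun j _ => B j) := by
      intro i
      rw [hBdef]
      exact wf.fix_eq body i
    have hBspec : ∀ i, Sb i ⊆ B i ∧ B i ⊆ 𝓐 ∧ #(B i) ≤ max #(Sb i) κ ∧
        ∀ E ∈ 𝓐, E ∉ B i → #(E ∩ ⋃₀ (B i) : Set α) ≤ ℵ₀ := by
      intro i
      have h := Classical.choose_spec (CL hGCH κ hκ 𝓐 hsz' hfi (Sb i) inter_subset_right)
      have heq : B i = Classical.choose (CL hGCH κ hκ 𝓐 hsz' hfi (Sb i) inter_subset_right) :=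
        hBeq0 i
      rw [← heq] at h
      exact h
    have hB𝓐 : ∀ i, B i ⊆ 𝓐 := fun i => (hBspec i).2.1
    have hBclosed : ∀ i, ∀ E ∈ 𝓐, E ∉ B i → #(E ∩ ⋃₀ (B i) : Set α) ≤ ℵ₀ :=
      fun i => (hBspec i).2.2.2
    have hBmono : ∀ j i : ν.ord.ToType, j < i → B j ⊆ B i := by
      intro j i hji E hE
      exact (hBspec i).1 ⟨Or.inl (mem_iUnion.mpr ⟨⟨j, hji⟩, hE⟩), hB𝓐 j hE⟩
    have hcover : ∀ Eh : ↥𝓐, ∃ i : ν.ord.ToType, Eh.1 ∈ B i := by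
      intro Eh
      obtain ⟨i, hi⟩ := exists_gt_toType hν0 (e𝓐 Eh)
      refine ⟨i, (hBspec i).1 ⟨Or.inr ⟨Eh.2, ?_⟩, Eh.2⟩⟩
      exact hi
    set s : ↥𝓐 → ν.ord.ToType :=
      fun Eh => wf.min (setOf (fun i => Eh.1 ∈ B i)) (hcover Eh) with hsdef
    have hsmem : ∀ Eh, Eh.1 ∈ B (s Eh) := fun Eh => wf.min_mem _ (hcover Eh)
    have hsmin : ∀ Eh, ∀ j, j < s Eh → Eh.1 ∉ B j := by
      intro Eh j hj hmem
      exact wf.not_lt_min {i | Eh.1 ∈ B i} hmem hj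
    set W : ν.ord.ToType → Set α :=
      fun i => ⋃ j : {j : ν.ord.ToType // j < i}, ⋃₀ (B j.1) with hWdef
    set block : ν.ord.ToType → Set (Set α) :=
      fun i => {E | ∃ h : E ∈ 𝓐, s ⟨E, h⟩ = i} with hblockdef
    have hblockB : ∀ i, block i ⊆ B i := by
      rintro i E ⟨h, hs⟩
      have h2 := hsmem ⟨E, h⟩
      rwa [hs] at h2
    -- entry bound
    have hentry : ∀ Eh : ↥𝓐, #(Eh.1 ∩ W (s Eh) : Set α) ≤ ℵ₁ := by
      intro Eh
      have hmono : Monotone (fun j : {j : ν.ord.ToType // j < s Eh} =>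
          (Eh.1 ∩ ⋃₀ (B j.1) : Set α)) := by
        intro j j' hjj'
        refine inter_subset_inter_right _ (sUnion_subset_sUnion ?_)
        rcases lt_or_eq_of_le hjj' with h | h
        · exact hBmono _ _ h
        · rw [h]
      have hct : ∀ j : {j : ν.ord.ToType // j < s Eh}, #(Eh.1 ∩ ⋃₀ (B j.1) : Set α) ≤ ℵ₀ :=
        fun j => hBclosed j.1 Eh.1 Eh.2 (hsmin Eh j.1 j.2)
      have hcup : (Eh.1 ∩ W (s Eh) : Set α) =
          ⋃ j : {j : ν.ord.ToType // j < s Eh}, (Eh.1 ∩ ⋃₀ (B j.1) : Set α) := by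
        rw [hWdef]
        exact inter_iUnion _ _
      rw [hcup]
      exact mono_union_le_aleph1 _ hmono hct
    -- size bounds
    have hsegmono : ∀ {j i : ν.ord.ToType}, j < i →
        #{j' : ν.ord.ToType // j' < j} ≤ #{j' : ν.ord.ToType // j' < i} := by
      intro j i hji
      refine Cardinal.mk_le_of_injective (f := fun x : {j' : ν.ord.ToType // j' < j} =>
        (⟨x.1, lt_trans x.2 hji⟩ : {j' : ν.ord.ToType // j' < i})) ?_
      intro a b hab
      have h1 : (a : ν.ord.ToType) = b := by simpa using hab
      exact Subtype.ext h1
    have hM : ∀ i : ν.ord.ToType, #(B i) ≤ #{j : ν.ord.ToType // j < i} ⊔ κ := by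
      intro i
      refine wf.induction (C := fun i => #(B i) ≤ #{j : ν.ord.ToType // j < i} ⊔ κ) i ?_
      intro i IH2
      have hM0 : ℵ₀ ≤ #{j : ν.ord.ToType // j < i} ⊔ κ := hκ0.trans (le_max_right _ _)
      have h1 : #(⋃ j : {j : ν.ord.ToType // j < i}, B j.1) ≤ #{j : ν.ord.ToType // j < i} ⊔ κ := by
        refine (Cardinal.mk_iUnion_le _).trans ?_
        have hsup : (⨆ j : {j : ν.ord.ToType // j < i}, #(B j.1)) ≤
            #{j : ν.ord.ToType // j < i} ⊔ κ :=
          ciSup_le' (fun j => (IH2 j.1 j.2).trans (sup_le_sup_right (hsegmono j.2) κ))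
        calc #{j : ν.ord.ToType // j < i} * (⨆ j : {j : ν.ord.ToType // j < i}, #(B j.1))
            ≤ (#{j : ν.ord.ToType // j < i} ⊔ κ) * (#{j : ν.ord.ToType // j < i} ⊔ κ) :=
              mul_le_mul' (le_max_left _ _) hsup
          _ = #{j : ν.ord.ToType // j < i} ⊔ κ := Cardinal.mul_eq_self hM0
      have h2 : #{E | ∃ h : E ∈ 𝓐, e𝓐 ⟨E, h⟩ < i} ≤ #{j : ν.ord.ToType // j < i} ⊔ κ := by
        refine le_trans ?_ (le_max_left _ _)
        refine Cardinal.mk_le_of_injective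
          (f := fun E : ↥{E | ∃ h : E ∈ 𝓐, e𝓐 ⟨E, h⟩ < i} =>
            (⟨e𝓐 ⟨E.1, E.2.choose⟩, E.2.choose_spec⟩ : {j : ν.ord.ToType // j < i})) ?_
        intro a b hab
        have h3 := e𝓐.injective (Subtype.ext_iff.mp hab)
        exact Subtype.ext (congrArg (Subtype.val : ↥𝓐 → Set α) h3)
      have hSb : #(Sb i) ≤ #{j : ν.ord.ToType // j < i} ⊔ κ := by
        refine le_trans (Cardinal.mk_le_mk_of_subset inter_subset_left) ?_
        refine (Cardinal.mk_union_le _ _).trans ?_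
        calc _ ≤ (#{j : ν.ord.ToType // j < i} ⊔ κ) + (#{j : ν.ord.ToType // j < i} ⊔ κ) :=
              add_le_add h1 h2
          _ = #{j : ν.ord.ToType // j < i} ⊔ κ := Cardinal.add_eq_self hM0
      exact ((hBspec i).2.2.1).trans (max_le hSb (le_max_right _ _))
    have hBlt : ∀ i, #(B i) < ν := fun i =>
      lt_of_le_of_lt (hM i) (max_lt (segcard_lt i) hbase)
    have hblocklt : ∀ i, #(block i) < n := fun i =>
      lt_of_le_of_lt (Cardinal.mk_le_mk_of_subset (hblockB i)) (lt_of_lt_of_le (hBlt i) hn)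
    -- per block data from the induction hypothesis
    have hXi : ∀ i, ∀ E ∈ block i, #(E ∩ (X ∪ W i) : Set α) < κ := by
      intro i E hE
      obtain ⟨h, hs⟩ := hE
      have h2 : #(E ∩ W i : Set α) ≤ ℵ₁ := by
        rw [← hs]
        exact hentry ⟨E, h⟩
      have hsplit : (E ∩ (X ∪ W i) : Set α) ⊆ (E ∩ X) ∪ (E ∩ W i) := by
        rintro x ⟨hx, hx2 | hx2⟩
        exacts [Or.inl ⟨hx, hx2⟩, Or.inr ⟨hx, hx2⟩]
      refine lt_of_le_of_lt (Cardinal.mk_le_mk_of_subset hsplit) ?_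
      refine lt_of_le_of_lt (Cardinal.mk_union_le _ _) ?_
      exact Cardinal.add_lt_of_lt hκ0 (hX E h) (lt_of_le_of_lt h2 hκ1)
    have hIHap : ∀ i : ν.ord.ToType, ∃ ρ : Set α → Ordinal.{u},
        (∀ E ∈ block i, ∀ F ∈ block i, ρ E = ρ F → E = F) ∧
        (∀ E ∈ block i,
          #((E ∩ ((X ∪ W i) ∪ ⋃₀ {F | F ∈ block i ∧ ρ F < ρ E})) : Set α) < κ) := by
      intro i
      refine IH (#(block i)) (hblocklt i) (block i) (X ∪ W i) le_rfl ?_ ?_ ?_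
      · intro E hE
        obtain ⟨h, -⟩ := hE
        exact hsz E h
      · intro E hE F hF hne
        obtain ⟨hE', -⟩ := hE
        obtain ⟨hF', -⟩ := hF
        exact hfi E hE' F hF' hne
      · exact hXi i
    choose ρb hρbInj hρbTr using hIHap
    -- glue the blocks together lexicographically
    set tinI : ν.ord.ToType → Ordinal.{u} :=
      fun x => Ordinal.typein ((· < ·) : ν.ord.ToType → ν.ord.ToType → Prop) x with htinIdef
    set glex : ↥𝓐 → Ordinal.{u} × Ordinal.{u} :=
      fun Eh => (tinI (s Eh), ρb (s Eh) Eh.1) with hglexdef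
    have hginj : Function.Injective glex := by
      intro a b hab
      have h1 : s a = s b := Ordinal.typein_injective _ (congrArg Prod.fst hab)
      have h2 : ρb (s a) a.1 = ρb (s b) b.1 := congrArg Prod.snd hab
      rw [h1] at h2
      have hma : a.1 ∈ block (s b) := ⟨a.2, by rw [← h1]⟩
      have hmb : b.1 ∈ block (s b) := ⟨b.2, rfl⟩
      exact Subtype.ext (hρbInj (s b) a.1 hma b.1 hmb h2)
    set rel : ↥𝓐 → ↥𝓐 → Prop :=
      fun a b => Prod.Lex ((· < ·) : Ordinal.{u} → Ordinal.{u} → Prop)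
        ((· < ·) : Ordinal.{u} → Ordinal.{u} → Prop) (glex a) (glex b) with hreldef
    haveI hrelwo : IsWellOrder ↥𝓐 rel :=
      RelEmbedding.isWellOrder (RelEmbedding.preimage ⟨glex, hginj⟩ _)
    set ρfin : Set α → Ordinal.{u} :=
      fun E => if h : E ∈ 𝓐 then Ordinal.typein rel ⟨E, h⟩ else 0 with hρfindef
    have hval : ∀ G (h : G ∈ 𝓐), ρfin G = Ordinal.typein rel ⟨G, h⟩ := fun G h => dif_pos h
    refine ⟨ρfin, ?_, ?_⟩
    · intro E hE F hF hEF
      rw [hval E hE, hval F hF] at hEF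
      exact congrArg (Subtype.val : ↥𝓐 → Set α) (Ordinal.typein_injective rel hEF)
    · intro E hE
      have hEblock : E ∈ block (s ⟨E, hE⟩) := ⟨hE, rfl⟩
      have hsub : (E ∩ (X ∪ ⋃₀ {F | F ∈ 𝓐 ∧ ρfin F < ρfin E}) : Set α) ⊆
          (E ∩ ((X ∪ W (s ⟨E, hE⟩)) ∪ ⋃₀ {F | F ∈ block (s ⟨E, hE⟩) ∧
            ρb (s ⟨E, hE⟩) F < ρb (s ⟨E, hE⟩) E}) : Set α) := by
        rintro x ⟨hxE, hx⟩
        refine ⟨hxE, ?_⟩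
        rcases hx with hx | ⟨F, ⟨hF𝓐, hFlt⟩, hxF⟩
        · exact Or.inl (Or.inl hx)
        · rw [hval F hF𝓐, hval E hE] at hFlt
          have hrelFE : rel ⟨F, hF𝓐⟩ ⟨E, hE⟩ := (Ordinal.typein_lt_typein rel).mp hFlt
          rcases Prod.lex_iff.mp hrelFE with h1 | ⟨h1, h2⟩
          · have hslt : s ⟨F, hF𝓐⟩ < s ⟨E, hE⟩ :=
              (Ordinal.typein_lt_typein ((· < ·) : ν.ord.ToType → ν.ord.ToType → Prop)).mp h1
            refine Or.inl (Or.inr ?_)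
            exact mem_iUnion.mpr ⟨⟨s ⟨F, hF𝓐⟩, hslt⟩, mem_sUnion.mpr ⟨F, hsmem ⟨F, hF𝓐⟩, hxF⟩⟩
          · have hseq : s ⟨F, hF𝓐⟩ = s ⟨E, hE⟩ := Ordinal.typein_injective _ h1
            refine Or.inr (mem_sUnion.mpr ⟨F, ⟨⟨hF𝓐, hseq⟩, ?_⟩, hxF⟩)
            have h2' : ρb (s ⟨F, hF𝓐⟩) F < ρb (s ⟨E, hE⟩) E := h2
            rw [hseq] at h2'
            exact h2'
      refine lt_of_le_of_lt (Cardinal.mk_le_mk_of_subset hsub) ?_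
      exact hρbTr (s ⟨E, hE⟩) E hEblock



/-- Assuming GCH, for all cardinals `ω₂ ≤ κ ≤ lam`, every hypergraph
`𝓔 ⊆ [lam]^κ` possessing property C(2,ω) has a maximizing well-ordering. -/
theorem maxWO_of_GCH {α : Type u}
    (hGCH : ∀ μ : Cardinal.{u}, ℵ₀ ≤ μ → 2 ^ μ = Order.succ μ)
    (κ lam : Cardinal.{u}) (hκ : Cardinal.aleph 2 ≤ κ) (hkl : κ ≤ lam)
    (hα : #α = lam)
    (𝓔 : Set (Set α)) (hne : ∀ E ∈ 𝓔, E.Nonempty)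
    (hspec : ∀ E ∈ 𝓔, #E = κ)
    (hC : HasPropC 𝓔 2 ℵ₀) :
    HasMaxWO 𝓔 := by
  classical
  have hκ1 : ℵ₁ < κ := lt_of_lt_of_le (Cardinal.aleph_lt_aleph.mpr one_lt_two) hκ
  have hκ0 : ℵ₀ ≤ κ := le_of_lt (aleph0_lt_aleph_one.trans hκ1)
  -- pairwise finite intersections
  have hfi : ∀ E ∈ 𝓔, ∀ F ∈ 𝓔, E ≠ F → #(E ∩ F : Set α) < ℵ₀ := by
    intro E hE F hF hne'
    have hcard : ({E, F} : Finset (Set α)).card = 2 := by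
      rw [Finset.card_insert_of_notMem (by simpa using hne'), Finset.card_singleton]
    have hsub : (({E, F} : Finset (Set α)) : Set (Set α)) ⊆ 𝓔 := by
      intro G hG
      simp only [Finset.coe_insert, Finset.coe_singleton, mem_insert_iff,
        mem_singleton_iff] at hG
      rcases hG with rfl | rfl
      exacts [hE, hF]
    have h2 := hC {E, F} hsub hcard
    have hi : ⋂₀ ((({E, F} : Finset (Set α)) : Set (Set α))) = E ∩ F := by
      simp
    rwa [hi] at h2
  have hX0 : ∀ E ∈ 𝓔, #(E ∩ (∅ : Set α) : Set α) < κ := by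
    intro E hE
    simp only [inter_empty]
    simpa using lt_of_lt_of_le aleph0_pos hκ0
  obtain ⟨ρ, hρInj, hρTr⟩ := key hGCH κ hκ (#𝓔) 𝓔 ∅ le_rfl hspec hfi hX0
  -- pick a "new" point in each edge
  have hpick : ∀ Eh : ↥𝓔, ∃ x, x ∈ (Eh : Set α) ∧
      x ∉ ((∅ : Set α) ∪ ⋃₀ {F | F ∈ 𝓔 ∧ ρ F < ρ Eh.1}) := by
    intro Eh
    by_contra hcon
    push_neg at hcon
    have hsub : (Eh : Set α) ⊆
        ((Eh : Set α) ∩ ((∅ : Set α) ∪ ⋃₀ {F | F ∈ 𝓔 ∧ ρ F < ρ Eh.1})) :=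
      fun x hx => ⟨hx, hcon x hx⟩
    have h2 := Cardinal.mk_le_mk_of_subset hsub
    rw [hspec Eh.1 Eh.2] at h2
    exact absurd (lt_of_le_of_lt h2 (hρTr Eh.1 Eh.2)) (lt_irrefl κ)
  choose m hm1 hm2 using hpick
  -- the conflict relation
  let rel : α → α → Prop := fun x y => ∃ Eh : ↥𝓔, y = m Eh ∧ x ∈ (Eh : Set α) ∧ x ≠ y
  have hwf : WellFounded rel := by
    by_contra hnwf
    obtain ⟨a, ha⟩ : ∃ a, ¬Acc rel a := by
      by_contra hall
      push_neg at hall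
      exact hnwf ⟨hall⟩
    have hstep : ∀ x, ¬Acc rel x → ∃ y, rel y x ∧ ¬Acc rel y := by
      intro x hx
      by_contra hcon
      push_neg at hcon
      exact hx (Acc.intro x (fun y hy => hcon y hy))
    choose nxt hn1 hn2 using hstep
    let f : ℕ → {x : α // ¬Acc rel x} := fun n =>
      Nat.rec ⟨a, ha⟩ (fun _ p => ⟨nxt p.1 p.2, hn2 p.1 p.2⟩) n
    have hdesc : ∀ n, rel (f (n+1)).1 (f n).1 := fun n => hn1 (f n).1 (f n).2
    have hEx : ∀ n, ∃ Eh : ↥𝓔, (f n).1 = m Eh ∧ (f (n+1)).1 ∈ (Eh : Set α) ∧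
        (f (n+1)).1 ≠ (f n).1 := fun n => hdesc n
    choose Es hEs1 hEs2 hEs3 using hEx
    have hdec : ∀ n, ρ (Es (n+1)).1 < ρ (Es n).1 := by
      intro n
      rcases lt_trichotomy (ρ (Es (n+1)).1) (ρ (Es n).1) with h | h | h
      · exact h
      · exfalso
        have heq : (Es (n+1)).1 = (Es n).1 := hρInj _ (Es (n+1)).2 _ (Es n).2 h
        have heq2 : Es (n+1) = Es n := Subtype.ext heq
        have : (f (n+1)).1 = (f n).1 := by
          rw [hEs1 (n+1), hEs1 n, heq2]
        exact hEs3 n this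
      · exfalso
        have h1 : (f (n+1)).1 ∈ ⋃₀ {F | F ∈ 𝓔 ∧ ρ F < ρ (Es (n+1)).1} :=
          ⟨(Es n).1, ⟨(Es n).2, h⟩, hEs2 n⟩
        have h2 := hm2 (Es (n+1))
        rw [← hEs1 (n+1)] at h2
        exact h2 (Or.inr h1)
    exact (RelEmbedding.wellFounded_iff_isEmpty.mp Ordinal.lt_wf).false
      (RelEmbedding.natGT (fun n => ρ (Es n).1) hdec)
  haveI : IsWellFounded α rel := ⟨hwf⟩
  -- the final well-order
  letI : IsWellOrder (↥(⋃₀ 𝓔)) (WellOrderingRel) := WellOrderingRel.isWellOrder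
  let emb : ↥(⋃₀ 𝓔) → Ordinal.{u} × ↥(⋃₀ 𝓔) := fun x => (IsWellFounded.rank rel x.1, x)
  have hembinj : Function.Injective emb := by
    intro x y hxy
    exact congrArg Prod.snd hxy
  let r : ↥(⋃₀ 𝓔) → ↥(⋃₀ 𝓔) → Prop := fun a b =>
    Prod.Lex ((· < ·) : Ordinal.{u} → Ordinal.{u} → Prop) WellOrderingRel (emb a) (emb b)
  haveI hrwo : IsWellOrder (↥(⋃₀ 𝓔)) r :=
    RelEmbedding.isWellOrder (RelEmbedding.preimage ⟨emb, hembinj⟩ _)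
  refine ⟨r, hrwo, ?_⟩
  intro E hE
  have hmem : m ⟨E, hE⟩ ∈ ⋃₀ 𝓔 := ⟨E, hE, hm1 ⟨E, hE⟩⟩
  refine ⟨⟨m ⟨E, hE⟩, hmem⟩, hm1 ⟨E, hE⟩, ?_⟩
  intro x hx hr
  rcases Prod.lex_iff.mp hr with h1 | ⟨h1, h2⟩
  · -- rank (m E) < rank x
    by_cases hxm : (x : α) = m ⟨E, hE⟩
    · have : (⟨m ⟨E, hE⟩, hmem⟩ : ↥(⋃₀ 𝓔)) = x := Subtype.ext hxm.symm
      rw [this] at h1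
      exact lt_irrefl _ h1
    · have hrel : rel (x : α) (m ⟨E, hE⟩) := ⟨⟨E, hE⟩, rfl, hx, hxm⟩
      exact lt_asymm h1 (IsWellFounded.rank_lt_of_rel hrel)
  · by_cases hxm : (x : α) = m ⟨E, hE⟩
    · have hxeq : (⟨m ⟨E, hE⟩, hmem⟩ : ↥(⋃₀ 𝓔)) = x := Subtype.ext hxm.symm
      rw [hxeq] at h2
      exact (irrefl (r := WellOrderingRel) x) h2
    · have hrel : rel (x : α) (m ⟨E, hE⟩) := ⟨⟨E, hE⟩, rfl, hx, hxm⟩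
      have h3 := IsWellFounded.rank_lt_of_rel hrel
      have h1' : IsWellFounded.rank rel (m ⟨E, hE⟩) = IsWellFounded.rank rel (x : α) := h1
      rw [h1'] at h3
      exact lt_irrefl _ h3
end

section
/- Let V be a set, κ an infinite cardinal, and 𝔸 a collection of hypergraphs whose edges are subsets of V. Assume: (a) if 𝓐 ∈ 𝔸 and 𝓑 is a shrink of 𝓐, then 𝓑 ∈ 𝔸; (b) every 𝓐 ∈ 𝔸 with |⋃𝓐| > κ has a good cut; and (c) every 𝓐 ∈ 𝔸 with |⋃𝓐| ≤ κ has a minimal vertex cover. Then every 𝓐 ∈ 𝔸 has a minimal vertex cover. -/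
open Cardinal Set

universe u

lemma isMinVC_iff {α : Type u} {𝓔 : Set (Set α)} {Y : Set α} :
    IsMinVC 𝓔 Y ↔ IsVC 𝓔 Y ∧ ∀ y ∈ Y, ∃ E ∈ 𝓔, Y ∩ E = {y} := by
  constructor
  · rintro ⟨hVC, hmin⟩
    refine ⟨hVC, fun y hy => ?_⟩
    have hZ : Y \ {y} ⊂ Y := Set.sdiff_singleton_ssubset.2 hy
    have hnot := hmin _ hZ
    rw [IsVC, not_and_or] at hnot
    rcases hnot with h | h
    · exact absurd ((Set.diff_subset).trans hVC.1) h
    · push_neg at h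
      obtain ⟨E, hE, hEne⟩ := h
      refine ⟨E, hE, ?_⟩
      obtain ⟨z, hz⟩ := hVC.2 E hE
      apply Set.eq_singleton_iff_unique_mem.2
      have key : ∀ x ∈ Y ∩ E, x = y := by
        intro x hx
        by_contra hne
        have : x ∈ (Y \ {y}) ∩ E := ⟨⟨hx.1, hne⟩, hx.2⟩
        rw [hEne] at this
        exact this
      have hzy : z = y := key z hz
      exact ⟨hzy ▸ hz, key⟩
  · rintro ⟨hVC, h⟩
    refine ⟨hVC, fun Z hZ hZVC => ?_⟩
    obtain ⟨y, hyY, hyZ⟩ := Set.exists_of_ssubset hZ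
    obtain ⟨E, hE, hYE⟩ := h y hyY
    obtain ⟨z, hzZ, hzE⟩ := hZVC.2 E hE
    have hz : z ∈ Y ∩ E := ⟨hZ.1 hzZ, hzE⟩
    rw [hYE] at hz
    exact hyZ (hz ▸ hzZ)

/-- Stepping-up for minimal vertex covers: if `𝔸` is closed under shrinks,
every member with vertex set of cardinality `> κ` has a good cut, and every
member with vertex set of cardinality `≤ κ` has a minimal vertex cover, then
every member of `𝔸` has a minimal vertex cover. -/
theorem minVC_step_up {α : Type u} (κ : Cardinal.{u}) (hκ : ℵ₀ ≤ κ)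
    (𝔸 : Set (Set (Set α)))
    (hne : ∀ 𝓐 ∈ 𝔸, ∀ A ∈ 𝓐, A.Nonempty)
    (ha : ∀ 𝓐 ∈ 𝔸, ∀ 𝓑 : Set (Set α), IsShrink 𝓑 𝓐 → 𝓑 ∈ 𝔸)
    (hb : ∀ 𝓐 ∈ 𝔸, κ < #(⋃₀ 𝓐 : Set α) → ∃ G, IsGoodCut 𝓐 G)
    (hc : ∀ 𝓐 ∈ 𝔸, #(⋃₀ 𝓐 : Set α) ≤ κ → HasMinVC 𝓐) :
    ∀ 𝓐 ∈ 𝔸, HasMinVC 𝓐 := by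
  classical
  have main : ∀ lam : Cardinal.{u}, ∀ 𝓒 ∈ 𝔸, #(⋃₀ 𝓒 : Set α) = lam → HasMinVC 𝓒 := by
    intro lam
    induction lam using WellFoundedLT.induction with
    | _ lam IH =>
    intro 𝓒 h𝓒 hlam
    by_cases hle : #(⋃₀ 𝓒 : Set α) ≤ κ
    · exact hc 𝓒 h𝓒 hle
    push_neg at hle
    obtain ⟨G, hG⟩ := hb 𝓒 h𝓒 hle
    obtain ⟨hmono, -, -, hbound, -, hwit⟩ := hG
    subst hlam
    set cofo : Ordinal.{u} := (#(⋃₀ 𝓒 : Set α)).ord.cof.ord with hcofo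
    have hinf : ℵ₀ ≤ #(⋃₀ 𝓒 : Set α) := hκ.trans hle.le
    have hcoflim : Order.IsSuccLimit cofo :=
      Cardinal.isSuccLimit_ord (Ordinal.aleph0_le_cof.2 (Cardinal.isSuccLimit_ord hinf))
    have hsucclt : ∀ o : Ordinal.{u}, o < cofo → o + 1 < cofo := fun o ho =>
      (Ordinal.add_one_eq_succ o) ▸ hcoflim.succ_lt ho
    have hwit' : ∀ A ∈ 𝓒, ∃ β, β < cofo ∧ A ⊆ G (β + 1) ∧ #(G β ∩ A : Set α) < #A := by
      intro A hA
      obtain ⟨β, h1, h2⟩ := hwit A hA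
      exact ⟨β, h1, h2⟩
    set w : Set α → Ordinal.{u} := fun A => if h : A ∈ 𝓒 then (hwit' A h).choose else 0 with hwdef
    have hw : ∀ A (h : A ∈ 𝓒),
        w A < cofo ∧ A ⊆ G (w A + 1) ∧ #(G (w A) ∩ A : Set α) < #A := by
      intro A h
      simp only [hwdef, dif_pos h]
      exact (hwit' A h).choose_spec
    set Bfam : ∀ _ : Ordinal.{u}, (Ordinal.{u} → Set α) → Set (Set α) :=
      fun o prev =>
        { B | ∃ A, A ∈ 𝓒 ∧ w A = o ∧ (∀ β, β < o → A ∩ prev β = ∅) ∧ B = A \ G o }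
      with hBdef
    have hHas : ∀ (o : Ordinal.{u}) (prev : Ordinal.{u} → Set α), HasMinVC (Bfam o prev) := by
      intro o prev
      have hshrink : IsShrink (Bfam o prev) 𝓒 := by
        rintro B ⟨A, hA, hwA, -, rfl⟩
        refine ⟨A, hA, Set.diff_subset, ?_⟩
        have h3 : #(G o ∩ A : Set α) < #A := hwA ▸ (hw A hA).2.2
        rw [Set.diff_diff_right_self, Set.inter_comm]
        exact h3
      have hmem : Bfam o prev ∈ 𝔸 := ha 𝓒 h𝓒 _ hshrink
      have hcard : #(⋃₀ (Bfam o prev) : Set α) < #(⋃₀ 𝓒 : Set α) := by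
        by_cases ho : o < cofo
        · have hsub : ⋃₀ (Bfam o prev) ⊆ G (o + 1) := by
            rintro x ⟨B, ⟨A, hA, hwA, -, rfl⟩, hx⟩
            exact (hwA ▸ (hw A hA).2.1) hx.1
          exact lt_of_le_of_lt (Cardinal.mk_le_mk_of_subset hsub) (hbound _ (hsucclt o ho)).1
        · have hempty : Bfam o prev = ∅ := by
            ext B
            simp only [hBdef, Set.mem_setOf_eq, Set.mem_empty_iff_false, iff_false]
            rintro ⟨A, hA, hwA, -, -⟩
            exact ho (hwA ▸ (hw A hA).1)
          rw [hempty]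
          simp only [Set.sUnion_empty, Cardinal.mk_eq_zero]
          exact lt_of_le_of_lt (zero_le : (0 : Cardinal.{u}) ≤ κ) hle
      exact IH _ hcard _ hmem rfl
    set f : Ordinal.{u} → Set α :=
      Ordinal.lt_wf.fix (C := fun _ => Set α)
        (fun o prev => (hHas o (fun β => if h : β < o then prev β h else ∅)).choose)
      with hfdef
    set pf : Ordinal.{u} → Ordinal.{u} → Set α :=
      fun o β => if _ : β < o then f β else ∅ with hpfdef
    have hfeq : ∀ o, f o = (hHas o (pf o)).choose := by
      intro o
      rw [hfdef]
      exact Ordinal.lt_wf.fix_eq (C := fun _ => Set α)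
        (fun o prev => (hHas o (fun β => if h : β < o then prev β h else ∅)).choose) o
    have hfmin : ∀ o, IsMinVC (Bfam o (pf o)) (f o) := by
      intro o
      rw [hfeq o]
      exact (hHas o (pf o)).choose_spec
    have hpf : ∀ o β, β < o → pf o β = f β := by
      intro o β h
      simp only [hpfdef, dif_pos h]
    have hstrip : ∀ o, f o ⊆ G (o + 1) \ G o := by
      intro o x hx
      have hx' : x ∈ ⋃₀ (Bfam o (pf o)) := (hfmin o).1.1 hx
      obtain ⟨B, ⟨A, hA, hwA, -, rfl⟩, hxB⟩ := hx'
      exact ⟨(hwA ▸ (hw A hA).2.1) hxB.1, hxB.2⟩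
    refine ⟨⋃ o ∈ Set.Iio cofo, f o, ?_⟩
    have hYsub : (⋃ o ∈ Set.Iio cofo, f o) ⊆ ⋃₀ 𝓒 := by
      intro x hx
      simp only [Set.mem_iUnion, Set.mem_Iio] at hx
      obtain ⟨o, ho, hx⟩ := hx
      exact (hbound _ (hsucclt o ho)).2 ((hstrip o hx).1)
    have hcover : ∀ A ∈ 𝓒, ((⋃ o ∈ Set.Iio cofo, f o) ∩ A).Nonempty := by
      intro A hA
      by_cases hcv : ∃ β < w A, (A ∩ f β).Nonempty
      · obtain ⟨β, hβ, z, hz⟩ := hcv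
        refine ⟨z, ?_, hz.1⟩
        exact Set.mem_biUnion (Set.mem_Iio.2 (lt_trans hβ (hw A hA).1)) hz.2
      · push_neg at hcv
        have hB : (A \ G (w A)) ∈ Bfam (w A) (pf (w A)) := by
          refine ⟨A, hA, rfl, fun β h => ?_, rfl⟩
          rw [hpf _ _ h]
          exact hcv β h
        obtain ⟨z, hz⟩ := (hfmin (w A)).1.2 _ hB
        exact ⟨z, Set.mem_biUnion (Set.mem_Iio.2 (hw A hA).1) hz.1, hz.2.1⟩
    rw [isMinVC_iff]
    refine ⟨⟨hYsub, hcover⟩, ?_⟩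
    intro y hy
    simp only [Set.mem_iUnion, Set.mem_Iio] at hy
    obtain ⟨o, ho, hyo⟩ := hy
    obtain ⟨B, hB, hfoB⟩ := (isMinVC_iff.1 (hfmin o)).2 y hyo
    obtain ⟨A, hA, hwA, hdis, rfl⟩ := hB
    refine ⟨A, hA, ?_⟩
    apply Set.eq_singleton_iff_unique_mem.2
    constructor
    · have hyB : y ∈ f o ∩ (A \ G o) := by rw [hfoB]; exact rfl
      exact ⟨Set.mem_biUnion (Set.mem_Iio.2 ho) hyo, hyB.2.1⟩
    · rintro z ⟨hzY, hzA⟩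
      simp only [Set.mem_iUnion, Set.mem_Iio] at hzY
      obtain ⟨γ, hγ, hzf⟩ := hzY
      rcases lt_trichotomy γ o with h | h | h
      · exfalso
        have hd : A ∩ f γ = ∅ := by have := hdis γ h; rwa [hpf _ _ h] at this
        have : z ∈ A ∩ f γ := ⟨hzA, hzf⟩
        rw [hd] at this
        exact this
      · subst h
        have hzB : z ∈ f γ ∩ (A \ G γ) := ⟨hzf, hzA, (hstrip γ hzf).2⟩
        rw [hfoB] at hzB
        exact hzB
      · exfalso
        have hsub : G (o + 1) ⊆ G γ := by
          refine hmono _ _ ?_ hγ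
          rw [Ordinal.add_one_eq_succ]
          exact Order.succ_le_of_lt h
        exact (hstrip γ hzf).2 (hsub ((hwA ▸ (hw A hA).2.1) hzA))
  intro 𝓐 h𝓐
  exact main _ 𝓐 h𝓐 rfl
end

section
/- Let V be a set, κ an infinite cardinal, and 𝔸 a collection of hypergraphs whose edges are subsets of V. Assume: (a) if 𝓐 ∈ 𝔸 and 𝓑 is a shrink of 𝓐, then 𝓑 ∈ 𝔸; (b) every 𝓐 ∈ 𝔸 with |⋃𝓐| > κ has a good cut; and (c') every 𝓐 ∈ 𝔸 with |⋃𝓐| ≤ κ has a maximizing well-ordering. Then every 𝓐 ∈ 𝔸 has a maximizing well-ordering. -/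
open Cardinal Set

universe u

/-- Auxiliary family of shrunken edges used in the stepping-up argument. -/
def shrinkFam {α : Type u} (𝓐 : Set (Set α)) (G : Ordinal.{u} → Set α)
    (β : Ordinal.{u}) : Set (Set α) :=
  {B | ∃ A ∈ 𝓐, A ⊆ G (β + 1) ∧ #(G β ∩ A : Set α) < #A ∧ B = A \ G β}

/-- Stepping-up for maximizing well-orderings: if `𝔸` is closed under shrinks,
every member with vertex set of cardinality `> κ` has a good cut, and every
member with vertex set of cardinality `≤ κ` has a maximizing well-ordering,
then every member of `𝔸` has a maximizing well-ordering. -/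
theorem maxWO_step_up {α : Type u} (κ : Cardinal.{u}) (hκ : ℵ₀ ≤ κ)
    (𝔸 : Set (Set (Set α)))
    (hne : ∀ 𝓐 ∈ 𝔸, ∀ A ∈ 𝓐, A.Nonempty)
    (ha : ∀ 𝓐 ∈ 𝔸, ∀ 𝓑 : Set (Set α), IsShrink 𝓑 𝓐 → 𝓑 ∈ 𝔸)
    (hb : ∀ 𝓐 ∈ 𝔸, κ < #(⋃₀ 𝓐 : Set α) → ∃ G, IsGoodCut 𝓐 G)
    (hc : ∀ 𝓐 ∈ 𝔸, #(⋃₀ 𝓐 : Set α) ≤ κ → HasMaxWO 𝓐) :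
    ∀ 𝓐 ∈ 𝔸, HasMaxWO 𝓐 := by
  classical
  suffices key : ∀ lam : Cardinal.{u}, ∀ 𝓐 ∈ 𝔸, #(⋃₀ 𝓐 : Set α) = lam → HasMaxWO 𝓐 by
    exact fun 𝓐 h𝓐 => key _ 𝓐 h𝓐 rfl
  intro lam
  refine Cardinal.lt_wf.induction
    (C := fun lam => ∀ 𝓐 ∈ 𝔸, #(⋃₀ 𝓐 : Set α) = lam → HasMaxWO 𝓐) lam ?_
  clear lam
  intro lam IH 𝓐 h𝓐 hlam
  by_cases hle : #(⋃₀ 𝓐 : Set α) ≤ κ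
  · exact hc 𝓐 h𝓐 hle
  push_neg at hle
  obtain ⟨G, hG1, hG2, hG3, hG4, hG5, hG6⟩ := hb 𝓐 h𝓐 hle
  set c : Ordinal.{u} := (#(⋃₀ 𝓐 : Set α)).ord.cof.ord with hcdef
  have haleph : ℵ₀ ≤ #(⋃₀ 𝓐 : Set α) := hκ.trans hle.le
  have hclim : Order.IsSuccLimit c :=
    Cardinal.isSuccLimit_ord (Ordinal.aleph0_le_cof.2 (Cardinal.isSuccLimit_ord haleph))
  have hsucc : ∀ {β : Ordinal.{u}}, β < c → β + 1 < c := by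
    intro β h
    rw [Ordinal.add_one_eq_succ]
    exact hclim.succ_lt h
  -- the shrink families
  have hshrink : ∀ β : Ordinal.{u}, IsShrink (shrinkFam 𝓐 G β) 𝓐 := by
    intro β B hB
    obtain ⟨A, hA, h1, h2, rfl⟩ := hB
    refine ⟨A, hA, diff_subset, ?_⟩
    have hAe : A \ (A \ G β) = G β ∩ A := by
      ext a; simp only [mem_diff, mem_inter_iff]; tauto
    rw [hAe]
    exact h2
  have h𝓑mem : ∀ β : Ordinal.{u}, shrinkFam 𝓐 G β ∈ 𝔸 :=
    fun β => ha 𝓐 h𝓐 _ (hshrink β)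
  have h𝓑sub : ∀ β : Ordinal.{u}, ⋃₀ shrinkFam 𝓐 G β ⊆ G (β + 1) := by
    rintro β x ⟨B, ⟨A, hA, h1, h2, rfl⟩, hx⟩
    exact h1 hx.1
  have h𝓑V : ∀ β : Ordinal.{u}, ⋃₀ shrinkFam 𝓐 G β ⊆ ⋃₀ 𝓐 := by
    rintro β x ⟨B, ⟨A, hA, h1, h2, rfl⟩, hx⟩
    exact Set.subset_sUnion_of_mem hA hx.1
  have hWOβ : ∀ β : Ordinal.{u}, β < c → HasMaxWO (shrinkFam 𝓐 G β) := by
    intro β hβ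
    have hcard : #(⋃₀ shrinkFam 𝓐 G β : Set α) < lam := by
      rw [← hlam]
      exact lt_of_le_of_lt (Cardinal.mk_le_mk_of_subset (h𝓑sub β))
        (hG4 (β + 1) (hsucc hβ)).1
    exact IH _ hcard _ (h𝓑mem β) rfl
  -- choose maximizing well-orderings on the shrink families
  have hWOB : ∀ β : Ordinal.{u},
      ∃ r : (⋃₀ shrinkFam 𝓐 G β : Set α) → (⋃₀ shrinkFam 𝓐 G β : Set α) → Prop,
        IsWellOrder _ r ∧ (β < c → ∀ E ∈ shrinkFam 𝓐 G β,
          ∃ m : (⋃₀ shrinkFam 𝓐 G β : Set α), (m : α) ∈ E ∧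
            ∀ x : (⋃₀ shrinkFam 𝓐 G β : Set α), (x : α) ∈ E → ¬ r m x) := by
    intro β
    by_cases hβ : β < c
    · obtain ⟨r, hr1, hr2⟩ := hWOβ β hβ
      exact ⟨r, hr1, fun _ => hr2⟩
    · exact ⟨WellOrderingRel, WellOrderingRel.isWellOrder, fun h => absurd h hβ⟩
  choose R hRwo hRmax using hWOB
  -- ordinal rank functions for those well-orderings
  have hTex : ∀ β : Ordinal.{u}, ∃ t : (⋃₀ shrinkFam 𝓐 G β : Set α) → Ordinal.{u},
      Function.Injective t ∧ ∀ a b, t a < t b ↔ R β a b := by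
    intro β
    haveI := hRwo β
    exact ⟨Ordinal.typein (R β), Ordinal.typein_injective _,
      fun a b => Ordinal.typein_lt_typein _⟩
  choose T hTinj hTlt using hTex
  -- a global rank function on the vertex set
  obtain ⟨W, hWinj⟩ : ∃ W : (⋃₀ 𝓐 : Set α) → Ordinal.{u}, Function.Injective W :=
    ⟨Ordinal.typein (WellOrderingRel (α := (⋃₀ 𝓐 : Set α))), Ordinal.typein_injective _⟩
  -- membership descent in the cut
  have down : ∀ (x : α) (γ : Ordinal.{u}), γ < c → x ∈ G γ → ∃ δ < γ, x ∈ G (δ + 1) := by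
    intro x γ
    induction γ using Ordinal.induction with
    | h γ ih =>
      intro hγ hx
      rcases Ordinal.zero_or_succ_or_isSuccLimit γ with h0 | ⟨δ, hδ⟩ | hlim
      · rw [h0, hG2] at hx
        exact absurd hx (Set.notMem_empty x)
      · refine ⟨δ, ?_, ?_⟩
        · rw [← hδ]; exact Order.lt_succ δ
        · rw [← Ordinal.add_one_eq_succ] at hδ; rwa [← hδ] at hx
      · rw [hG3 γ hγ hlim] at hx
        obtain ⟨η, hη, hxη⟩ := mem_iUnion₂.1 hx
        obtain ⟨δ, hδη, hmem⟩ := ih η hη (hη.trans hγ) hxη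
        exact ⟨δ, hδη.trans hη, hmem⟩
  -- the layer function
  have hLex : ∀ x : (⋃₀ 𝓐 : Set α), ∃ β : Ordinal.{u}, (β < c ∧ (x : α) ∈ G (β + 1)) ∧
      ∀ γ : Ordinal.{u}, γ < c → (x : α) ∈ G (γ + 1) → β ≤ γ := by
    intro x
    have hx' : (x : α) ∈ ⋃ β ∈ Set.Iio c, G β := by rw [hG5]; exact x.2
    obtain ⟨γ, hγ, hxγ⟩ := mem_iUnion₂.1 hx'
    obtain ⟨δ, hδγ, hmem⟩ := down x γ hγ hxγ
    have hSne : {β : Ordinal.{u} | β < c ∧ (x : α) ∈ G (β + 1)}.Nonempty :=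
      ⟨δ, hδγ.trans hγ, hmem⟩
    exact ⟨sInf {β : Ordinal.{u} | β < c ∧ (x : α) ∈ G (β + 1)}, csInf_mem hSne,
      fun γ' hγ' hmem' => csInf_le' ⟨hγ', hmem'⟩⟩
  choose L hLmem hLmin using hLex
  have hLc : ∀ x, L x < c := fun x => (hLmem x).1
  have hLG : ∀ x, (x : α) ∈ G (L x + 1) := fun x => (hLmem x).2
  have hLlt : ∀ (x : (⋃₀ 𝓐 : Set α)) (β : Ordinal.{u}), β < c → (x : α) ∈ G β → L x < β := by
    intro x β hβ hx
    obtain ⟨δ, hδβ, hmem⟩ := down x β hβ hx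
    exact lt_of_le_of_lt (hLmin x δ (hδβ.trans hβ) hmem) hδβ
  have hLeq : ∀ (x : (⋃₀ 𝓐 : Set α)) (β : Ordinal.{u}), β < c →
      (x : α) ∈ G (β + 1) → (x : α) ∉ G β → L x = β := by
    intro x β hβ h1 h2
    refine le_antisymm (hLmin x β hβ h1) (not_lt.1 fun h => h2 ?_)
    have hle : L x + 1 ≤ β := by
      rw [Ordinal.add_one_eq_succ]; exact Order.succ_le_of_lt h
    exact hG1 (L x + 1) β hle hβ (hLG x)
  -- the rank triple
  obtain ⟨F, hF0, hF1⟩ : ∃ F : (⋃₀ 𝓐 : Set α) → Ordinal.{u} × Ordinal.{u} × Ordinal.{u},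
      (∀ (x : (⋃₀ 𝓐 : Set α)) (h : (x : α) ∈ ⋃₀ shrinkFam 𝓐 G (L x)),
        F x = (L x, 0, T (L x) ⟨x.1, h⟩)) ∧
      (∀ x : (⋃₀ 𝓐 : Set α), (x : α) ∉ ⋃₀ shrinkFam 𝓐 G (L x) → F x = (L x, 1, W x)) := by
    refine ⟨fun x => (L x, if h : (x : α) ∈ ⋃₀ shrinkFam 𝓐 G (L x) then
      (0, T (L x) ⟨x.1, h⟩) else (1, W x)), fun x h => ?_, fun x h => ?_⟩
    · simp only [dif_pos h]
    · simp only [dif_neg h]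
  have hFfst : ∀ x, (F x).1 = L x := by
    intro x
    by_cases h : (x : α) ∈ ⋃₀ shrinkFam 𝓐 G (L x)
    · rw [hF0 x h]
    · rw [hF1 x h]
  have hTcast : ∀ (β γ : Ordinal.{u}) (h : β = γ) (z : α) (hz : z ∈ ⋃₀ shrinkFam 𝓐 G β),
      T β ⟨z, hz⟩ = T γ ⟨z, h ▸ hz⟩ := by
    rintro β γ rfl z hz; rfl
  have hFinj : Function.Injective F := by
    intro x y hxy
    by_cases hx : (x : α) ∈ ⋃₀ shrinkFam 𝓐 G (L x) <;>
      by_cases hy : (y : α) ∈ ⋃₀ shrinkFam 𝓐 G (L y)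
    · rw [hF0 x hx, hF0 y hy] at hxy
      simp only [Prod.mk.injEq] at hxy
      obtain ⟨e1, -, e3⟩ := hxy
      rw [hTcast (L x) (L y) e1 x.1 hx] at e3
      have := congrArg Subtype.val (hTinj (L y) e3)
      exact Subtype.ext this
    · rw [hF0 x hx, hF1 y hy] at hxy
      simp only [Prod.mk.injEq] at hxy
      exact absurd hxy.2.1 zero_ne_one
    · rw [hF1 x hx, hF0 y hy] at hxy
      simp only [Prod.mk.injEq] at hxy
      exact absurd hxy.2.1 one_ne_zero
    · rw [hF1 x hx, hF1 y hy] at hxy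
      simp only [Prod.mk.injEq] at hxy
      exact hWinj hxy.2.2
  refine ⟨fun x y => Prod.Lex (· < ·) (Prod.Lex (· < ·) (· < ·)) (F x) (F y), ?_, ?_⟩
  · exact RelEmbedding.isWellOrder
      (RelEmbedding.preimage ⟨F, hFinj⟩ (Prod.Lex (· < ·) (Prod.Lex (· < ·) (· < ·))))
  intro A hA
  obtain ⟨β, hβc, hA1, hA2⟩ := hG6 A hA
  have hEmem : A \ G β ∈ shrinkFam 𝓐 G β := ⟨A, hA, hA1, hA2, rfl⟩
  obtain ⟨m, hmE, hmax⟩ := hRmax β hβc (A \ G β) hEmem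
  refine ⟨⟨m.1, Set.subset_sUnion_of_mem hA hmE.1⟩, hmE.1, ?_⟩
  set M : (⋃₀ 𝓐 : Set α) := ⟨m.1, Set.subset_sUnion_of_mem hA hmE.1⟩ with hMdef
  have hLM : L M = β := hLeq M β hβc (hA1 hmE.1) hmE.2
  intro x hxA hcon
  by_cases hxG : (x : α) ∈ G β
  · have h1 : L x < β := hLlt x β hβc hxG
    rw [Prod.lex_def] at hcon
    rcases hcon with h | ⟨he, -⟩
    · rw [hFfst, hFfst, hLM] at h
      exact absurd h1 h.asymm
    · rw [hFfst, hFfst, hLM] at he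
      rw [← he] at h1
      exact lt_irrefl β h1
  · have hxE : (x : α) ∈ A \ G β := ⟨hxA, hxG⟩
    have hLx : L x = β := hLeq x β hβc (hA1 hxA) hxG
    have hxB : (x : α) ∈ ⋃₀ shrinkFam 𝓐 G (L x) := by
      rw [hLx]; exact ⟨A \ G β, hEmem, hxE⟩
    have hMB : (M : α) ∈ ⋃₀ shrinkFam 𝓐 G (L M) := by
      rw [hLM]; exact ⟨A \ G β, hEmem, hmE⟩
    rw [hF0 M hMB, hF0 x hxB, Prod.lex_def] at hcon
    rcases hcon with h | ⟨-, h2⟩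
    · simp only at h
      rw [hLM, hLx] at h
      exact lt_irrefl β h
    · simp only at h2
      rw [Prod.lex_def] at h2
      rcases h2 with h | ⟨-, h3⟩
      · simp only at h
        exact lt_irrefl _ h
      · simp only at h3
        rw [hTcast (L M) β hLM M.1 hMB, hTcast (L x) β hLx x.1 hxB, hTlt β] at h3
        have hmm : (⟨(M : α), hLM ▸ hMB⟩ : (⋃₀ shrinkFam 𝓐 G β : Set α)) = m :=
          Subtype.ext rfl
        rw [hmm] at h3
        exact hmax ⟨x.1, hLx ▸ hxB⟩ hxE h3
end

section
/- Assume GCH. Let κ, λ be cardinals with ω₂ ≤ κ < λ, and let 𝓐 ⊆ [λ]^κ be a hypergraph possessing property C(2,ω) with |⋃𝓐| = λ. Then 𝓐 has a good cut. -/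
open Cardinal Set

universe u

namespace GoodCutAux

/-- index function from `toType` to ordinals below `o`. -/
noncomputable def idx (o : Ordinal.{u}) (i : o.ToType) : Ordinal.{u} :=
  (((Ordinal.ToType.mk (o := o))).symm i : Iio o)

theorem idx_lt {o : Ordinal.{u}} (i : o.ToType) : idx o i < o :=
  (((Ordinal.ToType.mk (o := o))).symm i).2

theorem idx_surj {o γ : Ordinal.{u}} (h : γ < o) : ∃ i, idx o i = γ :=
  ⟨(Ordinal.ToType.mk (o := o)) ⟨γ, h⟩, by simp [idx]⟩

theorem idx_inj {o : Ordinal.{u}} : Function.Injective (idx o) := by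
  intro i j h
  have := ((Ordinal.ToType.mk (o := o))).symm.injective (Subtype.ext h)
  exact this

theorem biUnion_Iio_eq {β : Type u} (o : Ordinal.{u}) (W : Ordinal.{u} → Set β) :
    ⋃ γ ∈ Iio o, W γ = ⋃ i : o.ToType, W (idx o i) := by
  ext x
  simp only [mem_iUnion, mem_Iio]
  constructor
  · rintro ⟨γ, hγ, hx⟩
    obtain ⟨i, rfl⟩ := idx_surj hγ
    exact ⟨i, hx⟩
  · rintro ⟨i, hx⟩
    exact ⟨idx o i, idx_lt i, hx⟩

theorem mk_biUnion_Iio_le {β : Type u} (o : Ordinal.{u}) (W : Ordinal.{u} → Set β)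
    (c : Cardinal.{u}) (hW : ∀ γ < o, #(W γ) ≤ c) :
    #(⋃ γ ∈ Iio o, W γ) ≤ o.card * c := by
  rw [biUnion_Iio_eq]
  rcases isEmpty_or_nonempty o.ToType with hE | hN
  · simp [Set.iUnion_of_empty]
  · refine (Cardinal.mk_iUnion_le _).trans ?_
    rw [Cardinal.mk_toType]
    exact mul_le_mul' le_rfl (ciSup_le' fun i => hW _ (idx_lt i))

theorem mk_biUnion_lt {β : Type u} {o : Ordinal.{u}} {W : Ordinal.{u} → Set β}
    {c : Cardinal.{u}} (hc : ℵ₀ ≤ c) (ho : o.card < c.ord.cof)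
    (hW : ∀ γ < o, #(W γ) < c) : #(⋃ γ ∈ Iio o, W γ) < c := by
  rw [biUnion_Iio_eq]
  rcases isEmpty_or_nonempty o.ToType with hE | hN
  · simp only [Set.iUnion_of_empty]
    simpa using (aleph0_pos.trans_le hc)
  · refine (Cardinal.mk_iUnion_le _).trans_lt ?_
    rw [Cardinal.mk_toType]
    have hsup : (⨆ i : o.ToType, #(W (idx o i))) < c := by
      refine Ordinal.iSup_lt ?_ fun i => hW _ (idx_lt i)
      rwa [Cardinal.mk_toType]
    exact Cardinal.mul_lt_of_lt hc (ho.trans_le (Ordinal.cof_ord_le c)) hsup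

theorem exists_bound_of_small {ι : Type u} (st : ι → Ordinal.{u}) {o : Ordinal.{u}}
    (hι : #ι < o.cof) (hst : ∀ i, st i < o) : ∃ γ < o, ∀ i, st i ≤ γ :=
  ⟨iSup st, Ordinal.iSup_lt_ord hι hst, fun i => le_ciSup (Ordinal.bddAbove_range st) i⟩



theorem exists_filtration {β : Type u} (Y : Set β) (hY : ℵ₀ ≤ #Y) :
    ∃ Z : Ordinal.{u} → Set β,
      (∀ ξ, Z ξ ⊆ Y) ∧
      (∀ ξ ζ, ξ ≤ ζ → Z ξ ⊆ Z ζ) ∧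
      (∀ ξ < (#Y).ord.cof.ord, #(Z ξ) < #Y) ∧
      (∀ y ∈ Y, ∃ ξ < (#Y).ord.cof.ord, y ∈ Z ξ) := by
  set μ := #Y with hμ
  have hord : Order.IsSuccLimit μ.ord := Cardinal.isSuccLimit_ord hY
  have hθ : ℵ₀ ≤ μ.ord.cof := Ordinal.aleph0_le_cof.2 hord
  have hθord : Order.IsSuccLimit μ.ord.cof.ord := Cardinal.isSuccLimit_ord hθ
  have hcard : #Y = #(μ.ord.ToType) := by rw [Cardinal.mk_toType, Cardinal.card_ord]
  obtain ⟨e⟩ := Cardinal.eq.1 hcard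
  set rk : Y → Ordinal.{u} := fun y => idx μ.ord (e y) with hrk
  have hrk_lt : ∀ y, rk y < μ.ord := fun y => idx_lt _
  have hrk_inj : Function.Injective rk := idx_inj.comp e.injective
  obtain ⟨f₀, hf₀⟩ := Ordinal.exists_blsub_cof μ.ord
  set f' : Ordinal.{u} → Ordinal.{u} :=
    fun η => if h : η < μ.ord.cof.ord then f₀ η h else 0 with hf'
  have hf'_lt : ∀ η, f' η < μ.ord := by
    intro η
    by_cases h : η < μ.ord.cof.ord
    · simp only [hf', dif_pos h]
      rw [← hf₀]; exact Ordinal.lt_blsub _ _ _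
    · simp only [hf', dif_neg h]; exact hord.pos
  have hbdd : ∀ s : Set Ordinal.{u}, s ⊆ f' '' univ → BddAbove s := by
    intro s hs
    exact ⟨μ.ord, fun x hx => by
      obtain ⟨η, -, rfl⟩ := hs hx
      exact (hf'_lt η).le⟩
  set g : Ordinal.{u} → Ordinal.{u} := fun ξ => sSup (f' '' Iic ξ) + 1 with hg
  have hg_mono : ∀ ξ ζ, ξ ≤ ζ → g ξ ≤ g ζ := by
    intro ξ ζ h
    apply add_le_add_left
    apply csSup_le_csSup (hbdd _ (image_mono (subset_univ _)))
      ((nonempty_Iic).image _)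
    exact image_mono (Iic_subset_Iic.2 h)
  have hg_lt : ∀ ξ < μ.ord.cof.ord, g ξ < μ.ord := by
    intro ξ hξ
    have h1 : ξ + 1 < μ.ord.cof.ord := by
      rw [Ordinal.add_one_eq_succ]; exact hθord.succ_lt hξ
    have himg : f' '' Iic ξ = Set.range (fun i : (ξ+1).ToType => f' (idx (ξ+1) i)) := by
      ext γ
      simp only [mem_image, mem_Iic, mem_range]
      constructor
      · rintro ⟨η, hη, rfl⟩
        obtain ⟨i, hi⟩ := idx_surj (show η < ξ + 1 from
          (Order.lt_succ_iff.2 hη).trans_eq (Ordinal.add_one_eq_succ ξ).symm)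
        exact ⟨i, by rw [hi]⟩
      · rintro ⟨i, rfl⟩
        refine ⟨idx (ξ+1) i, ?_, rfl⟩
        have h4 := idx_lt (o := ξ+1) i
        exact Order.lt_succ_iff.1 (lt_of_lt_of_eq h4 (Ordinal.add_one_eq_succ ξ))
    have hsup : sSup (f' '' Iic ξ) < μ.ord := by
      rw [himg, sSup_range]
      refine Ordinal.iSup_lt_ord ?_ fun i => hf'_lt _
      rw [Cardinal.mk_toType]
      exact Cardinal.lt_ord.1 h1
    rw [hg]
    show sSup (f' '' Iic ξ) + 1 < μ.ord
    rw [Ordinal.add_one_eq_succ]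
    exact hord.succ_lt hsup
  refine ⟨fun ξ => {y | ∃ h : y ∈ Y, rk ⟨y, h⟩ < g ξ}, ?_, ?_, ?_, ?_⟩
  · intro ξ y hy; exact hy.1
  · intro ξ ζ h y hy
    obtain ⟨hyY, hlt⟩ := hy
    exact ⟨hyY, hlt.trans_le (hg_mono ξ ζ h)⟩
  · intro ξ hξ
    have hinj : Function.Injective
        (fun y : {y | ∃ h : y ∈ Y, rk ⟨y, h⟩ < g ξ} =>
          (Ordinal.ToType.mk (o := (g ξ))) ⟨rk ⟨y.1, y.2.choose⟩, y.2.choose_spec⟩) := by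
      intro y z h
      have h1 := ((Ordinal.ToType.mk (o := (g ξ)))).injective h
      have h2 := congrArg Subtype.val h1
      have h3 := hrk_inj h2
      have h4 := congrArg Subtype.val h3
      exact Subtype.ext h4
    have hle := Cardinal.mk_le_of_injective hinj
    rw [Cardinal.mk_toType] at hle
    exact hle.trans_lt (Cardinal.lt_ord.1 (hg_lt ξ hξ))
  · intro y hy
    have h0 : rk ⟨y, hy⟩ < μ.ord := hrk_lt _
    rw [← hf₀, Ordinal.lt_blsub_iff] at h0
    obtain ⟨η, hη, hle⟩ := h0
    refine ⟨η, hη, hy, ?_⟩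
    show rk ⟨y, hy⟩ < sSup (f' '' Iic η) + 1
    rw [Ordinal.add_one_eq_succ, Order.lt_succ_iff]
    refine hle.trans ?_
    have h1 : f₀ η hη = f' η := by simp only [hf', dif_pos hη]
    rw [h1]
    exact le_csSup (hbdd _ (image_mono (subset_univ _)))
      (mem_image_of_mem f' (mem_Iic.2 le_rfl))


theorem gch_pow_aleph0 (hGCH : ∀ μ : Cardinal.{u}, ℵ₀ ≤ μ → 2 ^ μ = Order.succ μ)
    {ν : Cardinal.{u}} (hν : ℵ₀ ≤ ν) : ν ^ ℵ₀ ≤ Order.succ ν := by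
  calc ν ^ ℵ₀ ≤ ν ^ ν := Cardinal.power_le_power_left
        ((aleph0_pos.trans_le hν).ne') hν
    _ = 2 ^ ν := Cardinal.power_self_eq hν
    _ = Order.succ ν := hGCH ν hν

/-- counting countable subsets of `W` under GCH -/
theorem mk_ctblsub_le (hGCH : ∀ μ : Cardinal.{u}, ℵ₀ ≤ μ → 2 ^ μ = Order.succ μ)
    {β : Type u} (W : Set β) :
    #{s : Set β | s ⊆ W ∧ s.Countable} ≤ Order.succ (max #W ℵ₀) := by
  have h1 : #{s : Set β | s ⊆ W ∧ s.Countable} = #{t : Set β // t ⊆ W ∧ #t ≤ ℵ₀} := by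
    apply Cardinal.mk_congr
    exact Equiv.subtypeEquivRight fun s =>
      and_congr_right fun _ => (Cardinal.le_aleph0_iff_set_countable).symm
  rw [h1]
  refine (Cardinal.mk_bounded_subset_le W ℵ₀).trans ?_
  exact gch_pow_aleph0 hGCH (le_max_right _ _)

variable {α : Type u}

/-- the edges having uncountable trace on `Y`. -/
def Big (𝓐 : Set (Set α)) (Y : Set α) : Set (Set α) :=
  {A | A ∈ 𝓐 ∧ ¬ (A ∩ Y).Countable}

theorem aleph0_le_of_not_countable {s : Set α} (h : ¬ s.Countable) : ℵ₀ ≤ #s :=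
  (not_le.1 fun hc => h (Cardinal.le_aleph0_iff_set_countable.1 hc)).le

theorem big_chooser {𝓐 : Set (Set α)}
    (hfin : ∀ A ∈ 𝓐, ∀ B ∈ 𝓐, A ≠ B → (A ∩ B).Finite) (Y : Set α) :
    ∃ t : ↥(Big 𝓐 Y) → Set α,
      (∀ A, t A ⊆ (A : Set α) ∩ Y ∧ #(t A) = ℵ₀) ∧ Function.Injective t := by
  have hch : ∀ A : ↥(Big 𝓐 Y), ∃ s : Set α, s ⊆ (A : Set α) ∩ Y ∧ #s = ℵ₀ := by
    intro A
    have h1 : ℵ₀ ≤ #((A : Set α) ∩ Y : Set α) := aleph0_le_of_not_countable A.2.2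
    obtain ⟨p, hp1, hp2⟩ := Cardinal.le_mk_iff_exists_subset.1 h1
    exact ⟨p, hp1, hp2⟩
  choose t ht1 ht2 using hch
  refine ⟨t, fun A => ⟨ht1 A, ht2 A⟩, ?_⟩
  intro A B h
  by_contra hne
  have hABne : (A : Set α) ≠ (B : Set α) := fun hv => hne (Subtype.ext hv)
  have hsub : t A ⊆ (A : Set α) ∩ (B : Set α) := by
    intro x hx
    exact ⟨(ht1 A hx).1, (h ▸ hx : x ∈ t B) |> (ht1 B) |>.1⟩
  have hfinAB := hfin A A.2.1 B B.2.1 hABne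
  have : #(t A) < ℵ₀ := by
    refine lt_of_le_of_lt (Cardinal.mk_le_mk_of_subset hsub) ?_
    exact Cardinal.lt_aleph0_iff_set_finite.2 hfinAB
  rw [ht2 A] at this
  exact this.false

theorem mk_big_le (hGCH : ∀ μ : Cardinal.{u}, ℵ₀ ≤ μ → 2 ^ μ = Order.succ μ)
    {𝓐 : Set (Set α)}
    (hfin : ∀ A ∈ 𝓐, ∀ B ∈ 𝓐, A ≠ B → (A ∩ B).Finite) (Y : Set α) :
    #(Big 𝓐 Y) ≤ max #Y ℵ₀ := by
  by_cases hY : #Y ≤ ℵ₀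
  · have : Big 𝓐 Y = ∅ := by
      ext A
      simp only [Big, mem_setOf_eq, mem_empty_iff_false, iff_false, not_and, not_not]
      intro _
      exact (Cardinal.le_aleph0_iff_set_countable.1
        ((Cardinal.mk_le_mk_of_subset (inter_subset_right)).trans hY))
    rw [this]; simp
  push_neg at hY
  set μ := #Y with hμ
  have hYinf : ℵ₀ ≤ μ := hY.le
  obtain ⟨Z, hZY, hZmono, hZsize, hZcov⟩ := exists_filtration Y hYinf
  set θ := μ.ord.cof with hθdef
  have hθinf : ℵ₀ ≤ θ := Ordinal.aleph0_le_cof.2 (Cardinal.isSuccLimit_ord hYinf)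
  have hθle : θ ≤ μ := Ordinal.cof_ord_le μ
  -- each piece catches few edges
  have hstep : ∀ ξ < θ.ord, #{s : Set α | s ⊆ Z ξ ∧ s.Countable} ≤ μ := by
    intro ξ hξ
    refine (mk_ctblsub_le hGCH (Z ξ)).trans ?_
    have h1 : max #(Z ξ) ℵ₀ < μ := max_lt (hZsize ξ hξ) hY
    exact Order.succ_le_of_lt h1
  have hstepBig : ∀ ξ < θ.ord, #(Big 𝓐 (Z ξ)) ≤ μ := by
    intro ξ hξ
    obtain ⟨t, ht, htinj⟩ := big_chooser hfin (Z ξ)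
    have : Function.Injective
        (fun A : ↥(Big 𝓐 (Z ξ)) => (⟨t A, (ht A).1.trans inter_subset_right,
          Cardinal.le_aleph0_iff_set_countable.1 (le_of_eq (ht A).2)⟩ :
            {s : Set α | s ⊆ Z ξ ∧ s.Countable})) := by
      intro A B h
      exact htinj (congrArg Subtype.val h)
    exact (Cardinal.mk_le_of_injective this).trans (hstep ξ hξ)
  have hμmax : μ ≤ max #Y ℵ₀ := le_max_left _ _
  by_cases hθc : ℵ₀ < θ
  · -- uncountable cofinality: inject into union of countable-subset families
    obtain ⟨t, ht, htinj⟩ := big_chooser hfin Y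
    have hcatch : ∀ A : ↥(Big 𝓐 Y), ∃ ξ < θ.ord, t A ⊆ Z ξ := by
      intro A
      have htsub : t A ⊆ Y := (ht A).1.trans inter_subset_right
      have hst : ∀ x : ↥(t A), ∃ ξ, ξ < θ.ord ∧ (x : α) ∈ Z ξ := by
        intro x
        obtain ⟨ξ, h1, h2⟩ := hZcov x (htsub x.2)
        exact ⟨ξ, h1, h2⟩
      choose st hst1 hst2 using hst
      have hcard : #(↥(t A)) < θ.ord.cof := by
        rw [(ht A).2]
        have : θ.ord.cof = θ := (Cardinal.isRegular_cof (Cardinal.isSuccLimit_ord hYinf)).cof_eq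
        rw [this]
        exact hθc
      obtain ⟨γ, hγ, hbound⟩ := exists_bound_of_small st hcard hst1
      refine ⟨γ, hγ, fun x hx => hZmono _ _ (hbound ⟨x, hx⟩) (hst2 ⟨x, hx⟩)⟩
    choose ξA hξA1 hξA2 using hcatch
    set T : Set (Set α) := ⋃ ξ ∈ Iio θ.ord, {s : Set α | s ⊆ Z ξ ∧ s.Countable} with hT
    have hmapT : ∀ A : ↥(Big 𝓐 Y), t A ∈ T := by
      intro A
      refine mem_biUnion (hξA1 A) ⟨hξA2 A, ?_⟩
      exact Cardinal.le_aleph0_iff_set_countable.1 (le_of_eq (ht A).2)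
    have hinj2 : Function.Injective (fun A : ↥(Big 𝓐 Y) => (⟨t A, hmapT A⟩ : ↥T)) := by
      intro A B h
      exact htinj (congrArg Subtype.val h)
    refine ((Cardinal.mk_le_of_injective hinj2).trans ?_).trans hμmax
    refine (mk_biUnion_Iio_le θ.ord _ μ hstep).trans ?_
    rw [Cardinal.card_ord]
    calc θ * μ ≤ μ * μ := mul_le_mul' hθle le_rfl
      _ = μ := Cardinal.mul_eq_self hYinf
  · -- countable cofinality
    push_neg at hθc
    have hsub : Big 𝓐 Y ⊆ ⋃ ξ ∈ Iio θ.ord, Big 𝓐 (Z ξ) := by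
      intro A hA
      by_contra hnew
      simp only [mem_iUnion, mem_Iio, not_exists] at hnew
      have hctbl : ∀ ξ < θ.ord, ((A : Set α) ∩ Z ξ).Countable := by
        intro ξ hξ
        by_contra hc
        exact hnew ξ hξ ⟨hA.1, hc⟩
      have hcover : A ∩ Y ⊆ ⋃ ξ ∈ Iio θ.ord, (A ∩ Z ξ) := by
        intro x hx
        obtain ⟨ξ, h1, h2⟩ := hZcov x hx.2
        exact mem_biUnion h1 ⟨hx.1, h2⟩
      have hIioCtbl : (Iio θ.ord).Countable := by
        rw [← Cardinal.le_aleph0_iff_set_countable, Ordinal.mk_Iio_ordinal,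
          Cardinal.card_ord]
        calc Cardinal.lift.{u+1} θ ≤ Cardinal.lift.{u+1} ℵ₀ := Cardinal.lift_le.2 hθc
          _ = ℵ₀ := by simp
      have : (A ∩ Y : Set α).Countable :=
        Set.Countable.mono hcover (Set.Countable.biUnion hIioCtbl fun ξ hξ => hctbl ξ hξ)
      exact hA.2 this
    refine ((Cardinal.mk_le_mk_of_subset hsub).trans ?_).trans hμmax
    refine (mk_biUnion_Iio_le θ.ord _ μ hstepBig).trans ?_
    rw [Cardinal.card_ord]
    calc θ * μ ≤ μ * μ := mul_le_mul' hθle le_rfl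
      _ = μ := Cardinal.mul_eq_self hYinf

/-- closedness under swallowing edges with uncountable trace -/
def Closed' (𝓐 : Set (Set α)) (S : Set α) : Prop :=
  ∀ A ∈ 𝓐, ¬ (A ∩ S).Countable → A ⊆ S

/-- the closure of a set -/
def clo (𝓐 : Set (Set α)) (Y : Set α) : Set α :=
  ⋂₀ {S | Closed' 𝓐 S ∧ Y ⊆ S ∧ S ⊆ Y ∪ ⋃₀ 𝓐}

theorem sUnion_closed (𝓐 : Set (Set α)) : Closed' 𝓐 (⋃₀ 𝓐) :=
  fun A hA _ => subset_sUnion_of_mem hA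

theorem subset_clo {𝓐 : Set (Set α)} (Y : Set α) : Y ⊆ clo 𝓐 Y :=
  fun _ hy => mem_sInter.2 fun _ hS => hS.2.1 hy

theorem clo_min {𝓐 : Set (Set α)} {Y S : Set α} (h1 : Closed' 𝓐 S) (h2 : Y ⊆ S)
    (h3 : S ⊆ Y ∪ ⋃₀ 𝓐) : clo 𝓐 Y ⊆ S :=
  sInter_subset_of_mem ⟨h1, h2, h3⟩

theorem clo_subset_sUnion {𝓐 : Set (Set α)} {Y : Set α} (hY : Y ⊆ ⋃₀ 𝓐) :
    clo 𝓐 Y ⊆ ⋃₀ 𝓐 :=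
  clo_min (sUnion_closed 𝓐) hY subset_union_right

theorem clo_closed {𝓐 : Set (Set α)} (Y : Set α) : Closed' 𝓐 (clo 𝓐 Y) := by
  intro A hA hbig
  intro x hx
  apply mem_sInter.2
  intro S hS
  have h1 : ¬ (A ∩ S).Countable := by
    intro hc
    apply hbig
    refine Set.Countable.mono ?_ hc
    exact inter_subset_inter_right _ (sInter_subset_of_mem hS)
  exact hS.1 A hA h1 hx

/-- iterative construction witnessing smallness of closures -/
noncomputable def Kit (𝓐 : Set (Set α)) (Y : Set α) (ξ : Ordinal.{u}) : Set α :=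
  Y ∪ ⋃ η : ↥(Iio ξ), ⋃₀ (Big 𝓐 (Kit 𝓐 Y η))
termination_by ξ
decreasing_by exact η.2

theorem Kit_def (𝓐 : Set (Set α)) (Y : Set α) (ξ : Ordinal.{u}) :
    Kit 𝓐 Y ξ = Y ∪ ⋃ η : ↥(Iio ξ), ⋃₀ (Big 𝓐 (Kit 𝓐 Y (η : Ordinal.{u}))) := by
  rw [Kit]

theorem subset_Kit (𝓐 : Set (Set α)) (Y : Set α) (ξ : Ordinal.{u}) : Y ⊆ Kit 𝓐 Y ξ := by
  rw [Kit_def]; exact subset_union_left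

theorem Kit_mono (𝓐 : Set (Set α)) (Y : Set α) {ξ ζ : Ordinal.{u}} (h : ξ ≤ ζ) :
    Kit 𝓐 Y ξ ⊆ Kit 𝓐 Y ζ := by
  rw [Kit_def 𝓐 Y ξ, Kit_def 𝓐 Y ζ]
  apply union_subset_union_right
  intro x hx
  obtain ⟨η, hη⟩ := mem_iUnion.1 hx
  exact mem_iUnion.2 ⟨⟨(η : Ordinal.{u}), lt_of_lt_of_le η.2 h⟩, hη⟩

theorem Kit_subset (𝓐 : Set (Set α)) (Y : Set α) (ξ : Ordinal.{u}) :
    Kit 𝓐 Y ξ ⊆ Y ∪ ⋃₀ 𝓐 := by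
  rw [Kit_def]
  apply union_subset_union_right
  intro x hx
  obtain ⟨η, hη⟩ := mem_iUnion.1 hx
  obtain ⟨A, hA, hxA⟩ := hη
  exact ⟨A, hA.1, hxA⟩

theorem mem_Kit_stage {𝓐 : Set (Set α)} {Y : Set α} {ξ : Ordinal.{u}} {x : α}
    (h : x ∈ Kit 𝓐 Y ξ) : x ∈ Y ∨ ∃ η < ξ, x ∈ Kit 𝓐 Y (η + 1) := by
  rw [Kit_def] at h
  rcases h with h | h
  · exact Or.inl h
  · obtain ⟨η, hη⟩ := mem_iUnion.1 h
    refine Or.inr ⟨η, η.2, ?_⟩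
    rw [Kit_def]
    have hp : (η : Ordinal.{u}) < (η : Ordinal.{u}) + 1 := by
      rw [Ordinal.add_one_eq_succ]; exact Order.lt_succ_iff.2 le_rfl
    exact Or.inr (mem_iUnion.2 ⟨⟨(η : Ordinal.{u}), hp⟩, hη⟩)

theorem Kit_swallow {𝓐 : Set (Set α)} {Y : Set α} {ξ ζ : Ordinal.{u}} (hlt : ξ < ζ)
    {A : Set α} (hA : A ∈ 𝓐) (hbig : ¬ (A ∩ Kit 𝓐 Y ξ).Countable) :
    A ⊆ Kit 𝓐 Y ζ := by
  rw [Kit_def 𝓐 Y ζ]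
  intro x hx
  exact Or.inr (mem_iUnion.2 ⟨⟨ξ, hlt⟩, ⟨A, ⟨hA, hbig⟩, hx⟩⟩)

theorem Kit_def' (𝓐 : Set (Set α)) (Y : Set α) (ξ : Ordinal.{u}) :
    Kit 𝓐 Y ξ = Y ∪ ⋃ η ∈ Iio ξ, ⋃₀ (Big 𝓐 (Kit 𝓐 Y η)) := by
  rw [Kit_def, biUnion_eq_iUnion]

theorem mk_sUnion_big_le {𝓐 : Set (Set α)} {κ : Cardinal.{u}}
    (hspec : ∀ A ∈ 𝓐, #A = κ) (S : Set α) :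
    #(⋃₀ (Big 𝓐 S)) ≤ #(Big 𝓐 S) * κ := by
  rcases isEmpty_or_nonempty ↥(Big 𝓐 S) with hE | hN
  · have : Big 𝓐 S = ∅ := by
      ext A; simp only [mem_empty_iff_false, iff_false]
      exact fun h => hE.false ⟨A, h⟩
    rw [this]; simp
  · refine (Cardinal.mk_sUnion_le _).trans ?_
    exact mul_le_mul' le_rfl (ciSup_le' fun s => le_of_eq (hspec s.1 s.2.1))

theorem aleph_two_ord_cof : ((Cardinal.aleph 2).ord).cof = Cardinal.aleph 2 := by
  have h2 : (Cardinal.aleph 2) = Order.succ (Cardinal.aleph 1) := by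
    rw [← Cardinal.aleph_succ]
    congr 1
    rw [← Ordinal.add_one_eq_succ, one_add_one_eq_two]
  rw [h2]
  exact (Cardinal.isRegular_succ (Cardinal.aleph0_le_aleph 1)).cof_eq

theorem Kit_closed (𝓐 : Set (Set α)) (Y : Set α) :
    Closed' 𝓐 (Kit 𝓐 Y ((Cardinal.aleph 2).ord)) := by
  intro A hA hbig
  set o2 := (Cardinal.aleph 2).ord with ho2
  have ho2lim : Order.IsSuccLimit o2 := Cardinal.isSuccLimit_ord (Cardinal.aleph0_le_aleph 2)
  have hT : Cardinal.aleph 1 ≤ #(A ∩ Kit 𝓐 Y o2 : Set α) := by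
    by_contra h
    exact hbig ((Cardinal.countable_iff_lt_aleph_one _).2 (not_le.1 h))
  obtain ⟨T, hTsub, hTcard⟩ := Cardinal.le_mk_iff_exists_subset.1 hT
  have hst : ∀ x : ↥T, ∃ γ, γ < o2 ∧ (x : α) ∈ Kit 𝓐 Y γ := by
    intro x
    have hx := hTsub x.2
    rcases mem_Kit_stage hx.2 with hY | ⟨η, hη, hmem⟩
    · exact ⟨0, ho2lim.pos, subset_Kit 𝓐 Y 0 hY⟩
    · refine ⟨η + 1, ?_, hmem⟩
      rw [Ordinal.add_one_eq_succ]
      exact ho2lim.succ_lt hη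
  choose st hst1 hst2 using hst
  have hcard : #(↥T) < o2.cof := by
    rw [hTcard, ho2, aleph_two_ord_cof]
    exact Cardinal.aleph_lt_aleph.2 one_lt_two
  obtain ⟨γ, hγ, hbound⟩ := exists_bound_of_small st hcard hst1
  have hbig2 : ¬ ((A ∩ Kit 𝓐 Y γ : Set α)).Countable := by
    intro hc
    have hTsub2 : T ⊆ A ∩ Kit 𝓐 Y γ := by
      intro x hx
      exact ⟨(hTsub hx).1, Kit_mono 𝓐 Y (hbound ⟨x, hx⟩) (hst2 ⟨x, hx⟩)⟩
    have := Cardinal.mk_le_mk_of_subset hTsub2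
    rw [hTcard] at this
    have h2 := (Cardinal.countable_iff_lt_aleph_one _).1 hc
    exact absurd (this.trans_lt h2) (lt_irrefl _)
  exact Kit_swallow hγ hA hbig2

theorem mk_Kit_le (hGCH : ∀ μ : Cardinal.{u}, ℵ₀ ≤ μ → 2 ^ μ = Order.succ μ)
    {𝓐 : Set (Set α)} {κ : Cardinal.{u}}
    (hfin : ∀ A ∈ 𝓐, ∀ B ∈ 𝓐, A ≠ B → (A ∩ B).Finite)
    (hspec : ∀ A ∈ 𝓐, #A = κ) (hκ2 : Cardinal.aleph 2 ≤ κ)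
    (Y : Set α) : ∀ ξ ≤ (Cardinal.aleph 2).ord, #(Kit 𝓐 Y ξ) ≤ max #Y κ := by
  have hκ0 : ℵ₀ ≤ κ := (Cardinal.aleph0_le_aleph 2).trans hκ2
  set ν := max #Y κ with hν
  have hν0 : ℵ₀ ≤ ν := hκ0.trans (le_max_right _ _)
  have hκν : κ ≤ ν := le_max_right _ _
  have hYν : #Y ≤ ν := le_max_left _ _
  intro ξ
  induction ξ using Ordinal.induction with
  | _ ξ IH =>
    intro hξ
    rw [Kit_def']
    refine (Cardinal.mk_union_le _ _).trans ?_
    have hinner : #(⋃ η ∈ Iio ξ, ⋃₀ (Big 𝓐 (Kit 𝓐 Y η)) : Set α) ≤ ξ.card * ν := by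
      refine mk_biUnion_Iio_le ξ _ ν ?_
      intro η hη
      refine (mk_sUnion_big_le hspec _).trans ?_
      have h1 : #(Big 𝓐 (Kit 𝓐 Y η)) ≤ ν := by
        refine (mk_big_le hGCH hfin _).trans ?_
        have h2 := IH η hη (le_of_lt (lt_of_lt_of_le hη hξ))
        exact max_le h2 hν0
      calc #(Big 𝓐 (Kit 𝓐 Y η)) * κ ≤ ν * ν := mul_le_mul' h1 hκν
        _ = ν := Cardinal.mul_eq_self hν0
    have hcard : ξ.card ≤ ν := by
      have := Ordinal.card_le_card hξ
      rw [Cardinal.card_ord] at this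
      exact (this.trans hκ2).trans hκν
    calc #Y + #(⋃ η ∈ Iio ξ, ⋃₀ (Big 𝓐 (Kit 𝓐 Y η)) : Set α)
        ≤ ν + ξ.card * ν := add_le_add hYν hinner
      _ ≤ ν + ν * ν := add_le_add_right (mul_le_mul' hcard le_rfl) ν
      _ = ν := by rw [Cardinal.mul_eq_self hν0, Cardinal.add_eq_self hν0]

theorem mk_clo_le (hGCH : ∀ μ : Cardinal.{u}, ℵ₀ ≤ μ → 2 ^ μ = Order.succ μ)
    {𝓐 : Set (Set α)} {κ : Cardinal.{u}}
    (hfin : ∀ A ∈ 𝓐, ∀ B ∈ 𝓐, A ≠ B → (A ∩ B).Finite)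
    (hspec : ∀ A ∈ 𝓐, #A = κ) (hκ2 : Cardinal.aleph 2 ≤ κ)
    {Y : Set α} (hY : Y ⊆ ⋃₀ 𝓐) : #(clo 𝓐 Y) ≤ max #Y κ := by
  have hsub : clo 𝓐 Y ⊆ Kit 𝓐 Y ((Cardinal.aleph 2).ord) := by
    refine clo_min (Kit_closed 𝓐 Y) (subset_Kit 𝓐 Y _) ?_
    exact Kit_subset 𝓐 Y _
  exact (Cardinal.mk_le_mk_of_subset hsub).trans
    (mk_Kit_le hGCH hfin hspec hκ2 Y _ le_rfl)

theorem pairwise_finite_of_propC {α : Type u} {𝓐 : Set (Set α)}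
    (hC : HasPropC 𝓐 2 ℵ₀) :
    ∀ A ∈ 𝓐, ∀ B ∈ 𝓐, A ≠ B → (A ∩ B).Finite := by
  classical
  intro A hA B hB hne
  have hcard : ({A, B} : Finset (Set α)).card = 2 := by
    rw [Finset.card_insert_of_notMem (by simp [hne]), Finset.card_singleton]
  have hsub : ↑({A, B} : Finset (Set α)) ⊆ 𝓐 := by
    intro C hCmem
    simp only [Finset.coe_insert, Finset.coe_singleton, mem_insert_iff,
      mem_singleton_iff] at hCmem
    rcases hCmem with rfl | rfl <;> assumption
  have h := hC _ hsub hcard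
  rw [Finset.coe_insert, Finset.coe_singleton, sInter_insert, sInter_singleton] at h
  exact Cardinal.lt_aleph0_iff_set_finite.1 h


theorem goodCut_main {α : Type u}
    (hGCH : ∀ μ : Cardinal.{u}, ℵ₀ ≤ μ → 2 ^ μ = Order.succ μ)
    (κ : Cardinal.{u}) (𝓐 : Set (Set α))
    (hκ : Cardinal.aleph 2 ≤ κ) (hkl : κ < #(⋃₀ 𝓐 : Set α))
    (hspec : ∀ A ∈ 𝓐, #A = κ)
    (hfin : ∀ A ∈ 𝓐, ∀ B ∈ 𝓐, A ≠ B → (A ∩ B).Finite) :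
    ∃ G, IsGoodCut 𝓐 G := by
  classical
  set M : Set α := ⋃₀ 𝓐 with hM
  have hκ0 : ℵ₀ ≤ κ := (Cardinal.aleph0_le_aleph 2).trans hκ
  have hκ1 : Cardinal.aleph 1 < κ :=
    lt_of_lt_of_le (Cardinal.aleph_lt_aleph.2 one_lt_two) hκ
  have hκaleph0lt : ℵ₀ < κ := Cardinal.aleph0_lt_aleph_one.trans hκ1
  have hlaminf : ℵ₀ ≤ #M := hκ0.trans hkl.le
  set θord : Ordinal.{u} := (#M).ord.cof.ord with hθord
  have hθ0 : ℵ₀ ≤ (#M).ord.cof :=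
    Ordinal.aleph0_le_cof.2 (Cardinal.isSuccLimit_ord hlaminf)
  have hθlim : Order.IsSuccLimit θord := Cardinal.isSuccLimit_ord hθ0
  obtain ⟨X, hXsub, hXmono, hXsize, hXcov⟩ := exists_filtration M hlaminf
  -- the good cut
  set G : Ordinal.{u} → Set α := fun β =>
    Ordinal.limitRecOn (motive := fun _ => Set α) β ∅
      (fun γ IH => clo 𝓐 (IH ∪ X γ))
      (fun β _ IH => ⋃ γ : ↥(Iio β), IH γ γ.2) with hG
  have hG0 : G 0 = ∅ := Ordinal.limitRecOn_zero _ _ _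
  have hGsucc : ∀ γ, G (γ + 1) = clo 𝓐 (G γ ∪ X γ) := by
    intro γ
    simp only [hG]
    rw [Ordinal.add_one_eq_succ, Ordinal.limitRecOn_succ]
  have hGlim : ∀ β, Order.IsSuccLimit β → G β = ⋃ γ ∈ Iio β, G γ := by
    intro β hβ
    simp only [hG]
    rw [Ordinal.limitRecOn_limit _ _ _ _ hβ, biUnion_eq_iUnion]
  have hGmono : ∀ γ β, β ≤ γ → G β ⊆ G γ := by
    intro γ
    induction γ using Ordinal.induction with
    | _ γ IH =>
      intro β hβ
      rcases eq_or_lt_of_le hβ with rfl | hlt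
      · exact subset_rfl
      rcases Ordinal.zero_or_succ_or_isSuccLimit γ with h0 | ⟨a, ha⟩ | hl
      · exact absurd hlt (by rw [h0]; exact not_lt_of_ge (zero_le (a := β)))
      · subst ha
        have h1 : G β ⊆ G a := IH a (Order.lt_succ a) β (Order.lt_succ_iff.1 hlt)
        have h2 : G (a + 1) = clo 𝓐 (G a ∪ X a) := hGsucc a
        rw [← Ordinal.add_one_eq_succ, h2]
        exact h1.trans (subset_union_left.trans (subset_clo _))
      · rw [hGlim γ hl]
        exact fun x hx => mem_biUnion hlt hx
  have hGU : ∀ β, G β ⊆ M := by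
    intro β
    induction β using Ordinal.induction with
    | _ β IH =>
      rcases Ordinal.zero_or_succ_or_isSuccLimit β with h0 | ⟨a, ha⟩ | hl
      · rw [h0, hG0]; exact empty_subset _
      · subst ha
        rw [← Ordinal.add_one_eq_succ, hGsucc]
        exact clo_subset_sUnion (union_subset (IH a (Order.lt_succ a)) (hXsub a))
      · rw [hGlim β hl]
        exact iUnion₂_subset fun γ hγ => IH γ hγ
  have hGsize : ∀ β < θord, #(G β) < #M := by
    intro β
    induction β using Ordinal.induction with
    | _ β IH =>
      intro hβ
      rcases Ordinal.zero_or_succ_or_isSuccLimit β with h0 | ⟨a, ha⟩ | hl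
      · rw [h0, hG0]
        rw [Cardinal.mk_emptyCollection]
        exact aleph0_pos.trans_le hlaminf
      · subst ha
        have halt : a < θord := (Order.lt_succ a).trans hβ
        rw [← Ordinal.add_one_eq_succ, hGsucc]
        refine (mk_clo_le hGCH hfin hspec hκ
          (union_subset (hGU a) (hXsub a))).trans_lt ?_
        refine max_lt ?_ hkl
        refine (Cardinal.mk_union_le _ _).trans_lt ?_
        exact Cardinal.add_lt_of_lt hlaminf (IH a (Order.lt_succ a) halt)
          (hXsize a halt)
      · rw [hGlim β hl]
        refine mk_biUnion_lt hlaminf (Cardinal.lt_ord.1 hβ) ?_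
        exact fun γ hγ => IH γ hγ (hγ.trans hβ)
  have hGcover : (⋃ β ∈ Iio θord, G β) = M := by
    apply subset_antisymm
    · exact iUnion₂_subset fun β _ => hGU β
    · intro x hx
      obtain ⟨ξ, hξ, hmem⟩ := hXcov x hx
      have hx2 : x ∈ G (ξ + 1) := by
        rw [hGsucc]
        exact subset_clo _ (Or.inr hmem)
      have hlt : ξ + 1 < θord := by
        rw [Ordinal.add_one_eq_succ]; exact hθlim.succ_lt hξ
      exact mem_biUnion hlt hx2
  have hswallow : ∀ A ∈ 𝓐, ∀ γ, ¬ ((A ∩ G γ : Set α)).Countable → A ⊆ G (γ + 1) := by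
    intro A hA γ hbig
    rw [hGsucc]
    refine clo_closed (G γ ∪ X γ) A hA ?_
    intro hc
    apply hbig
    refine hc.mono (inter_subset_inter_right _ ?_)
    exact subset_union_left.trans (subset_clo _)
  -- the key trace bound at limits
  have trace' : ∀ δ : Ordinal.{u}, Order.IsSuccLimit δ → ∀ A : Set α,
      (∀ γ < δ, ((A ∩ G γ : Set α)).Countable) →
      #(A ∩ ⋃ γ ∈ Iio δ, G γ : Set α) ≤ Cardinal.aleph 1 := by
    intro δ hδ A hsmall
    by_cases hcof : δ.cof ≤ Cardinal.aleph 1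
    · obtain ⟨f₀, hf₀⟩ := Ordinal.exists_blsub_cof δ
      set f' : Ordinal.{u} → Ordinal.{u} :=
        fun η => if h : η < δ.cof.ord then f₀ η h else 0 with hf'
      have hf'lt : ∀ η, f' η < δ := by
        intro η
        by_cases h : η < δ.cof.ord
        · simp only [hf', dif_pos h]
          rw [← hf₀]; exact Ordinal.lt_blsub _ _ _
        · simp only [hf', dif_neg h]; exact hδ.pos
      have hsub : (A ∩ ⋃ γ ∈ Iio δ, G γ : Set α) ⊆
          ⋃ η ∈ Iio δ.cof.ord, (A ∩ G (f' η) : Set α) := by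
        intro x hx
        obtain ⟨hxA, hxU⟩ := hx
        obtain ⟨γ, hγ, hxG⟩ := mem_iUnion₂.1 hxU
        rw [mem_Iio, ← hf₀, Ordinal.lt_blsub_iff] at hγ
        obtain ⟨η, hη, hle⟩ := hγ
        have heq : f₀ η hη = f' η := by simp only [hf', dif_pos hη]
        refine mem_biUnion hη ⟨hxA, ?_⟩
        exact hGmono (f' η) γ (hle.trans_eq heq) hxG
      refine (Cardinal.mk_le_mk_of_subset hsub).trans ?_
      refine (mk_biUnion_Iio_le _ _ ℵ₀ ?_).trans ?_
      · intro η hη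
        exact Cardinal.le_aleph0_iff_set_countable.2 (hsmall (f' η) (hf'lt η))
      · rw [Cardinal.card_ord]
        calc δ.cof * ℵ₀ ≤ Cardinal.aleph 1 * ℵ₀ := mul_le_mul' hcof le_rfl
          _ = Cardinal.aleph 1 := by
              rw [Cardinal.mul_eq_max (Cardinal.aleph0_le_aleph 1) le_rfl]
              exact max_eq_left (Cardinal.aleph0_le_aleph 1)
    · push_neg at hcof
      by_contra h
      obtain ⟨T, hTsub, hTcard⟩ :=
        Cardinal.le_mk_iff_exists_subset.1 (le_of_lt (not_le.1 h))
      have hst : ∀ x : ↥T, ∃ γ, γ < δ ∧ (x : α) ∈ G γ := by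
        intro x
        obtain ⟨-, hxU⟩ := hTsub x.2
        obtain ⟨γ, hγ, hxG⟩ := mem_iUnion₂.1 hxU
        exact ⟨γ, hγ, hxG⟩
      choose st hst1 hst2 using hst
      have hcard : #(↥T) < δ.cof := by rw [hTcard]; exact hcof
      obtain ⟨γ, hγ, hbound⟩ := exists_bound_of_small st hcard hst1
      have hTsub2 : T ⊆ (A ∩ G γ : Set α) := by
        intro x hx
        exact ⟨(hTsub hx).1, hGmono γ (st ⟨x, hx⟩) (hbound ⟨x, hx⟩) (hst2 ⟨x, hx⟩)⟩
      have hctbl := (hsmall γ hγ).mono hTsub2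
      have h1 := Cardinal.le_aleph0_iff_set_countable.2 hctbl
      rw [hTcard] at h1
      exact absurd h1 (not_le.2 Cardinal.aleph0_lt_aleph_one)
  refine ⟨G, fun β γ hle _ => hGmono γ β hle, hG0,
    fun β _ hβlim => hGlim β hβlim,
    fun β hβ => ⟨hGsize β hβ, hGU β⟩, hGcover, ?_⟩
  -- the main property
  intro A hA
  have hAκ : #A = κ := hspec A hA
  have hexists : ∃ γ < θord, ¬ ((A ∩ G γ : Set α)).Countable := by
    by_contra h
    push_neg at h
    have h1 := trace' θord hθlim A h
    have h2 : (A ∩ ⋃ γ ∈ Iio θord, G γ : Set α) = A := by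
      rw [hGcover]
      exact inter_eq_self_of_subset_left (subset_sUnion_of_mem hA)
    rw [h2, hAκ] at h1
    exact absurd h1 (not_le.2 hκ1)
  set Sfin : Set Ordinal.{u} := {β | β < θord ∧ A ⊆ G β} with hSfin
  have hSne : Sfin.Nonempty := by
    obtain ⟨γ, hγ, hbig⟩ := hexists
    refine ⟨γ + 1, ?_, hswallow A hA γ hbig⟩
    rw [Ordinal.add_one_eq_succ]; exact hθlim.succ_lt hγ
  set β₀ : Ordinal.{u} := sInf Sfin with hβ₀
  have hmem : β₀ ∈ Sfin := csInf_mem hSne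
  have hmin : ∀ β' ∈ Sfin, β₀ ≤ β' := fun β' h => csInf_le (OrderBot.bddBelow _) h
  have hsmalltrace : ∀ γ, γ + 1 < β₀ → ((A ∩ G γ : Set α)).Countable := by
    intro γ hγ
    by_contra hc
    have hmem2 : γ + 1 ∈ Sfin := ⟨hγ.trans hmem.1, hswallow A hA γ hc⟩
    exact absurd (hmin _ hmem2) (not_le.2 hγ)
  have hAne : A.Nonempty := by
    rw [← Set.nonempty_coe_sort]
    refine Cardinal.mk_ne_zero_iff.1 ?_
    rw [hAκ]
    exact (aleph0_pos.trans_le hκ0).ne'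
  rcases Ordinal.zero_or_succ_or_isSuccLimit β₀ with h0 | ⟨a, ha⟩ | hl
  · exfalso
    have h1 := hmem.2
    rw [h0, hG0] at h1
    exact hAne.not_subset_empty h1
  · -- successor case: the answer is `a`
    have haθ : a < θord := (Order.lt_succ a).trans_le (le_of_eq ha) |>.trans_le hmem.1.le
    refine ⟨a, haθ, ?_, ?_⟩
    · rw [Ordinal.add_one_eq_succ, ha]; exact hmem.2
    · rw [hAκ, inter_comm]
      have hAnotsub : ¬ A ⊆ G a := by
        intro hsub
        have : β₀ ≤ a := hmin a ⟨haθ, hsub⟩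
        rw [← ha] at this
        exact absurd this (not_le.2 (Order.lt_succ a))
      by_cases hctbl : ((A ∩ G a : Set α)).Countable
      · exact (Cardinal.le_aleph0_iff_set_countable.2 hctbl).trans_lt hκaleph0lt
      · rcases Ordinal.zero_or_succ_or_isSuccLimit a with ha0 | ⟨b, hb⟩ | hal
        · exact absurd (by rw [ha0, hG0]; simp : ((A ∩ G a : Set α)).Countable) hctbl
        · exfalso
          have hclosed : Closed' 𝓐 (G a) := by
            rw [← hb, ← Ordinal.add_one_eq_succ, hGsucc]
            exact clo_closed _
          exact hAnotsub (hclosed A hA hctbl)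
        · -- a limit: trace is at most ℵ₁ < κ
          have hsmall2 : ∀ γ < a, ((A ∩ G γ : Set α)).Countable := by
            intro γ hγ
            refine hsmalltrace γ ?_
            have h1 : γ + 1 < a := by
              rw [Ordinal.add_one_eq_succ]; exact hal.succ_lt hγ
            refine h1.trans ?_
            rw [← ha]; exact Order.lt_succ a
          have h1 := trace' a hal A hsmall2
          rw [← hGlim a hal] at h1
          exact h1.trans_lt hκ1
  · exfalso
    have hsmall2 : ∀ γ < β₀, ((A ∩ G γ : Set α)).Countable := by
      intro γ hγ
      refine hsmalltrace γ ?_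
      rw [Ordinal.add_one_eq_succ]; exact hl.succ_lt hγ
    have h1 := trace' β₀ hl A hsmall2
    rw [← hGlim β₀ hl] at h1
    have h2 : (A ∩ G β₀ : Set α) = A := inter_eq_self_of_subset_left hmem.2
    rw [h2, hAκ] at h1
    exact absurd h1 (not_le.2 hκ1)

end GoodCutAux

/-- Assuming GCH, if `ω₂ ≤ κ < lam` and `𝓐 ⊆ [lam]^κ` possesses property C(2,ω)
with `|⋃₀ 𝓐| = lam`, then `𝓐` has a good cut. -/
theorem goodCut_of_GCH {α : Type u}
    (hGCH : ∀ μ : Cardinal.{u}, ℵ₀ ≤ μ → 2 ^ μ = Order.succ μ)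
    (κ lam : Cardinal.{u}) (hκ : Cardinal.aleph 2 ≤ κ) (hkl : κ < lam)
    (hα : #α = lam)
    (𝓐 : Set (Set α)) (hspec : ∀ A ∈ 𝓐, #A = κ)
    (hC : HasPropC 𝓐 2 ℵ₀)
    (hU : #(⋃₀ 𝓐 : Set α) = lam) :
    ∃ G, IsGoodCut 𝓐 G := by
  have hfin := GoodCutAux.pairwise_finite_of_propC hC
  have hkl' : κ < #(⋃₀ 𝓐 : Set α) := by rw [hU]; exact hkl
  exact GoodCutAux.goodCut_main hGCH κ 𝓐 hκ hkl' hspec hfin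
end
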